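/- arXiv:2308.04752 — 6 statements merged into one kernel-verified Lean document; each statement's English description precedes it below -/
import Mathlib

section
/- For every odd prime m and every nonnegative integer j such that m divides 8j+1 exactly once (m || 8j+1), the congruence b_4(m^2 n + j) ≡ 0 (mod 2) holds for every nonnegative integer n. -/
/-- `bReg k n` is the number of `k`-regular partitions of `n`,
i.e. partitions of `n` in which no part is divisible by `k`. -/
noncomputable def bReg (k n : ℕ) : ℕ :=
  (Finset.univ.filter fun p : n.Partition => ∀ i ∈ p.parts, ¬ k ∣ i).card



open PowerSeries Finset

noncomputable section AuxGB

variable (A : Type*) [CommSemiring A]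

/-- Gaussian binomial coefficient as a power series (actually a polynomial). -/
def gbin : ℕ → ℤ → PowerSeries A
  | 0, k => if k = 0 then 1 else 0
  | n+1, k => gbin n k + X ^ ((n+1-k).toNat) * gbin n (k-1)

variable {A}

lemma gbin_zero (k : ℤ) : gbin A 0 k = if k = 0 then 1 else 0 := rfl

lemma gbin_succ (n : ℕ) (k : ℤ) :
    gbin A (n+1) k = gbin A n k + X ^ (((n:ℤ)+1-k).toNat) * gbin A n (k-1) := by
  rw [gbin]

lemma gbin_neg (n : ℕ) (k : ℤ) (hk : k < 0) : gbin A n k = 0 := by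
  induction n generalizing k with
  | zero => rw [gbin_zero, if_neg hk.ne]
  | succ n ih => rw [gbin_succ, ih k hk, ih (k-1) (by omega), mul_zero, add_zero]

lemma gbin_gt (n : ℕ) (k : ℤ) (hk : (n:ℤ) < k) : gbin A n k = 0 := by
  induction n generalizing k with
  | zero => rw [gbin_zero, if_neg (by omega)]
  | succ n ih => rw [gbin_succ, ih k (by omega), ih (k-1) (by omega), mul_zero, add_zero]

lemma gbin_zero_right (n : ℕ) : gbin A n 0 = 1 := by
  induction n with
  | zero => rw [gbin_zero, if_pos rfl]
  | succ n ih => rw [gbin_succ, ih, gbin_neg n (0-1) (by omega)]; simp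

/-- second Pascal rule -/
lemma gbin_rule2 (n : ℕ) (k : ℤ) :
    gbin A (n+1) k = X ^ k.toNat * gbin A n k + gbin A n (k-1) := by
  induction n generalizing k with
  | zero =>
    rcases lt_trichotomy k 0 with h | h | h
    · rw [gbin_neg 1 k h, gbin_neg 0 k h, gbin_neg 0 (k-1) (by omega), mul_zero, add_zero]
    · subst h
      rw [gbin_zero_right, gbin_zero_right, gbin_neg 0 (0-1) (by omega)]; simp
    · rcases eq_or_lt_of_le (by omega : (0:ℤ)+1 ≤ k) with h1 | h1
      · rw [← h1]
        simp [gbin_succ, gbin_zero]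
      · rw [gbin_gt 1 k (by omega), gbin_gt 0 k (by omega), gbin_gt 0 (k-1) (by omega),
          mul_zero, add_zero]
  | succ n ih =>
    have ecast : (((n:ℕ)+1:ℕ):ℤ)+1-k = ((n:ℤ)+1-(k-1)) := by push_cast; ring
    conv_lhs => rw [gbin_succ (n+1) k, ih k, ih (k-1)]
    conv_rhs => rw [gbin_succ n k, gbin_succ n (k-1)]
    by_cases h1 : 1 ≤ k ∧ k ≤ (n:ℤ)+1
    · have e1 : k.toNat + ((n:ℤ)+1-k).toNat = n+1 := by omega
      have e2 : ((((n:ℕ)+1:ℕ):ℤ)+1-k).toNat + (k-1).toNat = n+1 := by omega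
      rw [mul_add, mul_add, ← mul_assoc, ← mul_assoc, ← pow_add, ← pow_add, e1, e2, ecast]
      ring
    · have hz : gbin A n (k-1) = 0 := by
        rcases (not_and_or.mp h1) with h | h
        · exact gbin_neg n (k-1) (by omega)
        · exact gbin_gt n (k-1) (by omega)
      rw [hz, ecast]
      ring

/-- additive form of the multiplicative recurrence -/
lemma gbin_mradd (m : ℕ) (k : ℤ) (h1 : 1 ≤ k) (h2 : k ≤ (m:ℤ)+1) :
    gbin A (m+1) k + X ^ (m+1) * gbin A m (k-1)
      = X ^ k.toNat * gbin A (m+1) k + gbin A m (k-1) := by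
  conv_lhs => rw [gbin_rule2 m k]
  conv_rhs => rw [gbin_succ m k]
  rw [mul_add, ← mul_assoc, ← pow_add,
    show k.toNat + ((m:ℤ)+1-k).toNat = m+1 by omega]
  ring

variable {B : Type*} [CommRing B]

lemma gbin_mrsub (m : ℕ) (k : ℤ) (h1 : 1 ≤ k) (h2 : k ≤ (m:ℤ)+1) :
    (1 - X ^ k.toNat) * gbin B (m+1) k = (1 - X ^ (m+1)) * gbin B m (k-1) := by
  linear_combination (gbin_mradd (A := B) m k h1 h2)

/-- exact identity: gbin times a partial distinct product equals a tail product -/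
lemma gbin_ei (k : ℕ) : ∀ n : ℕ, k ≤ n →
    gbin B n (k:ℤ) * ∏ j ∈ range k, (1 - X ^ (j+1))
      = ∏ j ∈ range k, (1 - (X:PowerSeries B) ^ (n-j)) := by
  induction k with
  | zero => intro n _; simp [gbin_zero_right]
  | succ k ih =>
    intro n hk
    obtain ⟨m, rfl⟩ : ∃ m, n = m + 1 := ⟨n - 1, by omega⟩
    rw [Finset.prod_range_succ, Finset.prod_range_succ']
    have e0 : m + 1 - 0 = m + 1 := by omega
    rw [e0]
    have estep : ∀ j ∈ range k, (1 - (X:PowerSeries B) ^ (m+1-(j+1)))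
        = (1 - (X:PowerSeries B) ^ (m-j)) := by
      intro j _; rw [show m+1-(j+1) = m - j by omega]
    rw [Finset.prod_congr rfl estep]
    have hmr := gbin_mrsub (B := B) m ((k:ℤ)+1) (by omega) (by omega)
    have hcast1 : ((k:ℤ)+1).toNat = k+1 := by omega
    have hcast2 : ((k:ℤ)+1-1) = (k:ℤ) := by ring
    rw [hcast1, hcast2] at hmr
    push_cast
    calc gbin B (m+1) ((k:ℤ)+1) * ((∏ j ∈ range k, (1 - X ^ (j+1))) * (1 - X ^ (k+1)))
        = (1 - X ^ (k+1)) * gbin B (m+1) ((k:ℤ)+1) * ∏ j ∈ range k, (1 - X ^ (j+1)) := by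
          ring
      _ = (1 - X ^ (m+1)) * gbin B m (k:ℤ) * ∏ j ∈ range k, (1 - X ^ (j+1)) := by rw [hmr]
      _ = (1 - X ^ (m+1)) * ∏ j ∈ range k, (1 - X ^ (m-j)) := by
          rw [mul_assoc, ih m (by omega)]
      _ = (∏ j ∈ range k, (1 - X ^ (m-j))) * (1 - X ^ (m+1)) := by ring

/-- triangular numbers, indexed by integers -/
def tri (k : ℤ) : ℕ := (k*(k+1)/2).toNat

lemma tri_two (k : ℤ) : 2*(tri k : ℤ) = k*(k+1) := by
  obtain ⟨m, hm⟩ := Int.even_mul_succ_self k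
  have h0 : 0 ≤ k*(k+1) := by nlinarith [sq_nonneg (2*k+1)]
  unfold tri; omega

lemma tri_step (k : ℤ) : (tri (k+1) : ℤ) = tri k + (k+1) := by
  have h1 := tri_two k
  have h2 := tri_two (k+1)
  have h3 : (k+1)*(k+1+1) = k*(k+1) + 2*(k+1) := by ring
  omega

lemma tri_symm (k : ℤ) : tri (-k-1) = tri k := by
  have h1 := tri_two k
  have h2 := tri_two (-k-1)
  have h3 : (-k-1)*(-k-1+1) = k*(k+1) := by ring
  omega

/-- the (★) expansion -/
lemma gbin_star (n m : ℕ) (hm : m ≤ n+2) :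
    gbin A (n+2) (m:ℤ) = X^m * gbin A n (m:ℤ) + (1+X^(n+1)) * gbin A n ((m:ℤ)-1)
      + X^(n+2-m) * gbin A n ((m:ℤ)-2) := by
  rw [show ((n:ℕ)+2) = (n+1)+1 by rfl, gbin_rule2 (n+1) (m:ℤ)]
  rw [gbin_succ n (m:ℤ), gbin_succ n ((m:ℤ)-1)]
  have e2 : (((n:ℤ))+1-((m:ℤ)-1)).toNat = n+2-m := by omega
  rw [e2]
  simp only [Int.toNat_natCast]
  rcases Nat.lt_or_ge m (n+2) with h | h
  · have e1 : m + ((n:ℤ)+1-(m:ℤ)).toNat = n+1 := by omega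
    rw [mul_add, ← mul_assoc, ← pow_add, e1]
    ring
  · have hm2 : m = n+2 := by omega
    subst hm2
    have z1 : gbin A n (((n+2:ℕ):ℤ)) = 0 := gbin_gt _ _ (by push_cast; omega)
    have z2 : gbin A n (((n+2:ℕ):ℤ)-1) = 0 := gbin_gt _ _ (by push_cast; omega)
    rw [z1, z2, show ((n+2:ℕ):ℤ)-1-1 = ((n+2:ℕ):ℤ)-2 by ring]
    norm_num

variable (A) in
/-- partial product of (1+X^j) -/
def DD (r : ℕ) : PowerSeries A := ∏ j ∈ range r, (1 + X^(j+1))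

lemma DD_succ (r : ℕ) : DD A (r+1) = DD A r * (1 + X^(r+1)) := Finset.prod_range_succ _ _

variable (A) in
/-- the partial theta-side sum -/
def LTT (N : ℕ) : PowerSeries A :=
  ∑ m ∈ range (2*N+3), X^(tri ((m:ℤ)-((N:ℤ)+1))) * gbin A (2*N+2) (m:ℤ)

lemma gbin_one (k : ℤ) : gbin A 1 k = if k = 0 ∨ k = 1 then 1 else 0 := by
  show gbin A (0+1) k = _
  rw [gbin_succ 0 k, gbin_zero, gbin_zero]
  by_cases h0 : k = 0
  · subst h0; norm_num
  · by_cases h1 : k = 1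
    · subst h1; norm_num
    · rw [if_neg h0, if_neg (by omega : ¬ (k-1 = 0)), if_neg (by tauto)]
      simp

lemma gbin_two (k : ℤ) : gbin A 2 k = if k = 0 ∨ k = 2 then 1 else if k = 1 then 1 + X else 0 := by
  show gbin A (1+1) k = _
  rw [gbin_succ 1 k, gbin_one, gbin_one]
  by_cases h0 : k = 0
  · subst h0; norm_num
  · by_cases h1 : k = 1
    · subst h1; norm_num
    · by_cases h2 : k = 2
      · subst h2; norm_num
      · rw [if_neg (by tauto), if_neg (by omega : ¬ (k-1 = 0 ∨ k-1 = 1)), if_neg (by tauto),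
          if_neg h1]
        simp

/-- the key telescoping identity -/
lemma TG : ∀ N : ℕ, LTT A N = 2 * DD A (N+1) * DD A N := by
  intro N
  induction N with
  | zero =>
    have t0 : tri (-1) = 0 := by have := tri_two (-1); omega
    have t1 : tri 0 = 0 := by have := tri_two 0; omega
    have t2 : tri 1 = 1 := by have := tri_two 1; omega
    rw [LTT]
    rw [Finset.sum_range_succ, Finset.sum_range_succ, Finset.sum_range_succ,
      Finset.sum_range_zero]
    norm_num [gbin_two]
    rw [t0, t1, t2, DD, DD]
    norm_num [Finset.prod_range_succ]
    ring
  | succ N ih =>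
    have expand : ∀ m ∈ range (2*N+5),
        X^(tri ((m:ℤ)-((N:ℤ)+2))) * gbin A (2*N+4) (m:ℤ)
          = X^(N+1) * (X^(tri ((m:ℤ)-((N:ℤ)+1))) * gbin A (2*N+2) (m:ℤ))
            + (1+X^(2*N+3)) * (X^(tri (((m:ℤ)-1)-((N:ℤ)+1))) * gbin A (2*N+2) ((m:ℤ)-1))
            + X^(N+2) * (X^(tri (((m:ℤ)-2)-((N:ℤ)+1))) * gbin A (2*N+2) ((m:ℤ)-2)) := by
      intro m hm
      rw [mem_range] at hm
      have hstar := gbin_star (A := A) (2*N+2) m (by omega)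
      rw [show 2*N+2+2 = 2*N+4 by ring] at hstar
      rw [hstar]
      have hi : tri ((m:ℤ)-((N:ℤ)+2)) + m = (N+1) + tri ((m:ℤ)-((N:ℤ)+1)) := by
        have := tri_step ((m:ℤ)-((N:ℤ)+2))
        rw [show (m:ℤ)-((N:ℤ)+2)+1 = (m:ℤ)-((N:ℤ)+1) by ring] at this
        omega
      have hii : tri ((m:ℤ)-((N:ℤ)+2)) + (2*N+2+2-m) = (N+2) + tri (((m:ℤ)-2)-((N:ℤ)+1)) := by
        have := tri_step (((m:ℤ)-2)-((N:ℤ)+1))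
        rw [show ((m:ℤ)-2)-((N:ℤ)+1)+1 = (m:ℤ)-((N:ℤ)+2) by ring] at this
        omega
      have hmid : ((m:ℤ)-1)-((N:ℤ)+1) = (m:ℤ)-((N:ℤ)+2) := by ring
      rw [hmid, mul_add, mul_add, ← mul_assoc, ← mul_assoc, ← pow_add, hi]
      rw [show (X:PowerSeries A)^(tri ((m:ℤ)-((N:ℤ)+2))) * (X^(2*N+2+2-m) * gbin A (2*N+2) ((m:ℤ)-2))
            = X^(tri ((m:ℤ)-((N:ℤ)+2)) + (2*N+2+2-m)) * gbin A (2*N+2) ((m:ℤ)-2) by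
          rw [← mul_assoc, ← pow_add]]
      rw [hii, pow_add, pow_add]
      ring
    rw [LTT, show 2*(N+1)+3 = 2*N+5 by ring, show 2*(N+1)+2 = 2*N+4 by ring]
    rw [show (((N+1:ℕ):ℤ))+1 = (N:ℤ)+2 by push_cast; ring]
    rw [Finset.sum_congr rfl expand, Finset.sum_add_distrib, Finset.sum_add_distrib,
      ← Finset.mul_sum, ← Finset.mul_sum, ← Finset.mul_sum]
    have hSA : ∑ m ∈ range (2*N+5), X^(tri ((m:ℤ)-((N:ℤ)+1))) * gbin A (2*N+2) (m:ℤ)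
        = LTT A N := by
      rw [show 2*N+5 = (2*N+4)+1 by ring, Finset.sum_range_succ,
        show 2*N+4 = (2*N+3)+1 by ring, Finset.sum_range_succ]
      rw [gbin_gt (2*N+2) (((2*N+3+1:ℕ)):ℤ) (by omega),
        gbin_gt (2*N+2) (((2*N+3:ℕ)):ℤ) (by omega), mul_zero, mul_zero, add_zero, add_zero]
      rw [LTT]
    have hSB : ∑ m ∈ range (2*N+5), X^(tri (((m:ℤ)-1)-((N:ℤ)+1))) * gbin A (2*N+2) ((m:ℤ)-1)
        = LTT A N := by
      rw [show 2*N+5 = (2*N+4)+1 by ring, Finset.sum_range_succ']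
      have hz : (X:PowerSeries A)^(tri (((0:ℕ):ℤ)-1-((N:ℤ)+1))) * gbin A (2*N+2) (((0:ℕ):ℤ)-1) = 0 := by
        rw [gbin_neg (2*N+2) _ (by omega), mul_zero]
      rw [hz, add_zero]
      have hcong : ∀ i ∈ range (2*N+4),
          X^(tri (((((i+1:ℕ)):ℤ))-1-((N:ℤ)+1))) * gbin A (2*N+2) ((((i+1:ℕ)):ℤ)-1)
            = X^(tri ((i:ℤ)-((N:ℤ)+1))) * gbin A (2*N+2) (i:ℤ) := by
        intro i _
        rw [show (((i+1:ℕ)):ℤ)-1 = (i:ℤ) by push_cast; ring]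
      rw [Finset.sum_congr rfl hcong]
      rw [show 2*N+4 = (2*N+3)+1 by ring, Finset.sum_range_succ,
        gbin_gt (2*N+2) (((2*N+3:ℕ)):ℤ) (by omega), mul_zero, add_zero]
      rw [LTT]
    have hSC : ∑ m ∈ range (2*N+5), X^(tri (((m:ℤ)-2)-((N:ℤ)+1))) * gbin A (2*N+2) ((m:ℤ)-2)
        = LTT A N := by
      rw [show 2*N+5 = (2*N+4)+1 by ring, Finset.sum_range_succ']
      have hz : (X:PowerSeries A)^(tri (((0:ℕ):ℤ)-2-((N:ℤ)+1))) * gbin A (2*N+2) (((0:ℕ):ℤ)-2) = 0 := by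
        rw [gbin_neg (2*N+2) _ (by omega), mul_zero]
      rw [hz, add_zero, show 2*N+4 = (2*N+3)+1 by ring, Finset.sum_range_succ']
      have hz2 : (X:PowerSeries A)^(tri ((((0+1:ℕ)):ℤ)-2-((N:ℤ)+1))) * gbin A (2*N+2) ((((0+1:ℕ)):ℤ)-2) = 0 := by
        rw [gbin_neg (2*N+2) _ (by omega), mul_zero]
      rw [hz2, add_zero]
      have hcong : ∀ i ∈ range (2*N+3),
          X^(tri (((((i+1+1:ℕ)):ℤ))-2-((N:ℤ)+1))) * gbin A (2*N+2) ((((i+1+1:ℕ)):ℤ)-2)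
            = X^(tri ((i:ℤ)-((N:ℤ)+1))) * gbin A (2*N+2) (i:ℤ) := by
        intro i _
        rw [show (((i+1+1:ℕ)):ℤ)-2 = (i:ℤ) by push_cast; ring]
      rw [Finset.sum_congr rfl hcong]
      rw [LTT]
    rw [hSA, hSB, hSC, ih, DD_succ (N+1), DD_succ N]
    ring

/-- stability of low coefficients in k -/
lemma gbin_stab (m : ℕ) (k : ℤ) (i : ℕ) (hik : (i:ℤ) < k) (hsum : (i:ℤ) + k ≤ m) :
    coeff i (gbin A m k) = coeff i (gbin A m (k-1)) := by
  have h1 : coeff i (gbin A (m+1) k) = coeff i (gbin A m (k-1)) := by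
    rw [gbin_rule2 m k, map_add, PowerSeries.coeff_X_pow_mul',
      if_neg (by omega : ¬ k.toNat ≤ i), zero_add]
  have h2 : coeff i (gbin A (m+1) k) = coeff i (gbin A m k) := by
    rw [gbin_succ m k, map_add, PowerSeries.coeff_X_pow_mul',
      if_neg (by omega : ¬ ((m:ℤ)+1-k).toNat ≤ i), add_zero]
  rw [← h2, h1]

lemma gbin_stab_chain (m : ℕ) (c : ℤ) (i : ℕ) :
    ∀ d : ℕ, (i:ℤ) < c → (i:ℤ) + c + d ≤ m →
      coeff i (gbin A m (c+d)) = coeff i (gbin A m (c-1)) := by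
  intro d
  induction d with
  | zero =>
    intro h1 h2
    have := gbin_stab (A := A) m c i h1 (by omega)
    simpa using this
  | succ d ih =>
    intro h1 h2
    have hstep := gbin_stab (A := A) m (c+d+1) i (by omega) (by push_cast at h2 ⊢; omega)
    have : ((c:ℤ)+(d+1:ℕ)) = (c+d+1) := by push_cast; ring
    rw [this, hstep, show (c:ℤ)+d+1-1 = c+(d:ℕ) by push_cast; ring]
    exact ih h1 (by omega)

lemma tri_le (k : ℕ) : k ≤ tri (k:ℤ) := by
  have := tri_two (k:ℤ)
  nlinarith [sq_nonneg ((k:ℤ)-1)]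

/-- rearrangement of the coefficient of LTT via the symmetry pairing -/
lemma rearr (M j : ℕ) (h0 : 0 < M) (hj : j < M) :
    coeff j (LTT A (M-1))
      = 2 * ∑ k ∈ range M, coeff j (X^(tri (k:ℤ)) * gbin A (2*M) ((M:ℤ)+(k:ℤ))) := by
  rw [LTT, show 2*(M-1)+3 = M+(M+1) by omega, show ((M-1:ℕ):ℤ)+1 = (M:ℤ) by omega,
    show 2*(M-1)+2 = 2*M by omega]
  rw [map_sum, Finset.sum_range_add]
  have hupper : ∀ k ∈ range (M+1),
      coeff j (X^(tri ((((M+k:ℕ)):ℤ)-(M:ℤ))) * gbin A (2*M) ((M+k:ℕ):ℤ))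
        = coeff j (X^(tri (k:ℤ)) * gbin A (2*M) ((M:ℤ)+(k:ℤ))) := by
    intro k _
    rw [show (((M+k:ℕ)):ℤ)-(M:ℤ) = (k:ℤ) by push_cast; ring,
      show (((M+k:ℕ)):ℤ) = (M:ℤ)+(k:ℤ) by push_cast; ring]
  rw [Finset.sum_congr rfl hupper]
  rw [Finset.sum_range_succ]
  have hlast : coeff j (X^(tri ((M:ℕ):ℤ)) * gbin A (2*M) ((M:ℤ)+(M:ℤ))) = 0 := by
    rw [PowerSeries.coeff_X_pow_mul', if_neg]
    have := tri_le M
    omega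
  rw [hlast, add_zero]
  have hlow : ∑ m ∈ range M, coeff j (X^(tri ((m:ℤ)-(M:ℤ))) * gbin A (2*M) (m:ℤ))
      = ∑ k ∈ range M, coeff j (X^(tri (k:ℤ)) * gbin A (2*M) ((M:ℤ)+(k:ℤ))) := by
    rw [← Finset.sum_range_reflect]
    refine Finset.sum_congr rfl ?_
    intro k hk
    rw [mem_range] at hk
    have hc1 : ((M-1-k:ℕ):ℤ) = (M:ℤ)-1-(k:ℤ) := by omega
    have hc2 : ((M-1-k:ℕ):ℤ)-(M:ℤ) = -(k:ℤ)-1 := by omega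
    rw [hc2, tri_symm, hc1]
    by_cases ht : tri (k:ℤ) ≤ j
    · rw [PowerSeries.coeff_X_pow_mul', PowerSeries.coeff_X_pow_mul', if_pos ht, if_pos ht]
      have hchain := gbin_stab_chain (A := A) (2*M) ((M:ℤ)-(k:ℤ)) (j - tri (k:ℤ)) (2*k)
        (by have := tri_le k; omega) (by have := tri_le k; push_cast; omega)
      rw [show ((M:ℤ)-(k:ℤ))+((2*k:ℕ):ℤ) = (M:ℤ)+(k:ℤ) by push_cast; ring,
        show ((M:ℤ)-(k:ℤ))-1 = (M:ℤ)-1-(k:ℤ) by ring] at hchain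
      rw [← hchain]
    · rw [PowerSeries.coeff_X_pow_mul', PowerSeries.coeff_X_pow_mul', if_neg ht, if_neg ht]
  rw [hlow]
  ring

/-- the extracted identity over ℤ -/
lemma diamond (M j : ℕ) (h0 : 0 < M) (hj : j < M) :
    ∑ k ∈ range M, coeff j (X^(tri (k:ℤ)) * gbin ℤ (2*M) ((M:ℤ)+(k:ℤ)))
      = coeff j (DD ℤ M * DD ℤ (M-1)) := by
  have h := congrArg (coeff j) (TG (A := ℤ) (M-1))
  rw [rearr M j h0 hj, show (M-1)+1 = M by omega] at h
  rw [show (2:PowerSeries ℤ) * DD ℤ M * DD ℤ (M-1)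
      = DD ℤ M * DD ℤ (M-1) + DD ℤ M * DD ℤ (M-1) by ring, map_add] at h
  omega

section MapDown

variable {A' : Type*} [CommSemiring A']

lemma gbin_map (f : A →+* A') (n : ℕ) : ∀ k : ℤ,
    PowerSeries.map f (gbin A n k) = gbin A' n k := by
  induction n with
  | zero =>
    intro k
    rw [gbin_zero, gbin_zero]
    split_ifs <;> simp
  | succ n ih =>
    intro k
    rw [gbin_succ, gbin_succ, map_add, map_mul, map_pow, PowerSeries.map_X, ih, ih]

lemma DD_map (f : A →+* A') (r : ℕ) : PowerSeries.map f (DD A r) = DD A' r := by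
  rw [DD, DD, map_prod]
  refine Finset.prod_congr rfl ?_
  intro j _
  rw [map_add, map_pow, PowerSeries.map_X, map_one]

end MapDown

-- From here on, the prime field with two elements
abbrev K2 := ZMod 2
abbrev PS2 := PowerSeries K2

lemma psneg (f : PS2) : -f = f := by
  have h : ∀ x : K2, -x = x := by decide
  ext n
  rw [map_neg]
  exact h _

lemma ps_one_add_one : (1 : PS2) + 1 = 0 := by
  have h1 : (1 : PS2) = PowerSeries.C (1:K2) := by rw [map_one]
  rw [h1, ← map_add, show (1:K2)+1 = 0 by decide, map_zero]

/-- the extracted identity over ZMod 2 -/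
lemma diamond2 (M j : ℕ) (h0 : 0 < M) (hj : j < M) :
    ∑ k ∈ range M, coeff j (X^(tri (k:ℤ)) * gbin K2 (2*M) ((M:ℤ)+(k:ℤ)))
      = coeff j (DD K2 M * DD K2 (M-1)) := by
  have h := congrArg (Int.castRingHom K2) (diamond M j h0 hj)
  rw [map_sum] at h
  have e1 : ∀ k:ℕ, Int.castRingHom K2 (coeff j (X^(tri (k:ℤ)) * gbin ℤ (2*M) ((M:ℤ)+(k:ℤ))))
      = coeff j (X^(tri (k:ℤ)) * gbin K2 (2*M) ((M:ℤ)+(k:ℤ))) := by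
    intro k
    rw [← PowerSeries.coeff_map, map_mul, map_pow, PowerSeries.map_X,
      gbin_map (Int.castRingHom K2)]
  have e2 : Int.castRingHom K2 (coeff j (DD ℤ M * DD ℤ (M-1)))
      = coeff j (DD K2 M * DD K2 (M-1)) := by
    rw [← PowerSeries.coeff_map, map_mul, DD_map (Int.castRingHom K2),
      DD_map (Int.castRingHom K2)]
  calc ∑ k ∈ range M, coeff j (X^(tri (k:ℤ)) * gbin K2 (2*M) ((M:ℤ)+(k:ℤ)))
      = ∑ k ∈ range M, Int.castRingHom K2
          (coeff j (X^(tri (k:ℤ)) * gbin ℤ (2*M) ((M:ℤ)+(k:ℤ)))) :=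
        Finset.sum_congr rfl fun k _ => (e1 k).symm
    _ = Int.castRingHom K2 (coeff j (DD ℤ M * DD ℤ (M-1))) := h
    _ = coeff j (DD K2 M * DD K2 (M-1)) := e2

/-- the distinct-even partial product -/
noncomputable def DE (r : ℕ) : PS2 := ∏ j ∈ range r, (1 + X^((j+1)*2))

lemma DD_sq (r : ℕ) : DD K2 r * DD K2 r = DE r := by
  rw [DD, DE, ← Finset.prod_mul_distrib]
  refine Finset.prod_congr rfl fun j _ => ?_
  have h : ((1:PS2) + X^(j+1)) * (1 + X^(j+1)) = 1 + (1+1) * X^(j+1) + (X^(j+1))^2 := by ring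
  rw [h, ps_one_add_one, zero_mul, add_zero, ← pow_mul]

lemma sub_to_add (y : PS2) : 1 - y = 1 + y := by
  rw [sub_eq_add_neg, psneg]

lemma DDm_eq (r : ℕ) : ∏ j ∈ range r, (1 - (X:PS2)^(j+1)) = DD K2 r := by
  rw [DD]
  exact Finset.prod_congr rfl fun j _ => sub_to_add _

/-- the key local computation: gbin times the distinct product has trivial low coefficients -/
lemma gbd (n k : ℕ) (hk : k ≤ n) (i : ℕ) (hi : i ≤ n) :
    coeff i (gbin K2 (2*(2*n+2)) (((2*n+2)+k : ℕ):ℤ) * DD K2 (2*n+1))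
      = if i = 0 then 1 else 0 := by
  set M := 2*n+2 with hM
  have hei := gbin_ei (B := K2) (M+k) (2*M) (by omega)
  have hsplit : ∏ j ∈ range (M+k), (1 - (X:PS2)^(j+1))
      = (∏ j ∈ range (2*n+1), (1 - (X:PS2)^(j+1)))
        * ∏ j ∈ range (k+1), (1 - (X:PS2)^((2*n+1)+j+1)) := by
    have h := Finset.prod_range_add (fun j => (1 - (X:PS2)^(j+1))) (2*n+1) (k+1)
    rw [show (2*n+1)+(k+1) = M+k by omega] at h
    exact h
  rw [hsplit, DDm_eq] at hei
  rw [← mul_assoc] at hei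
  have hL : coeff i (gbin K2 (2*M) (((M+k:ℕ)):ℤ) * DD K2 (2*n+1)
      * ∏ j ∈ range (k+1), (1 - (X:PS2)^((2*n+1)+j+1)))
      = coeff i (gbin K2 (2*M) (((M+k:ℕ)):ℤ) * DD K2 (2*n+1)) := by
    apply coeff_mul_prod_one_sub_of_lt_order
    intro j _
    rw [PowerSeries.order_X_pow]
    exact_mod_cast (by omega : i < 2*n+1+j+1)
  have hR : coeff i (∏ j ∈ range (M+k), (1 - (X:PS2)^(2*M-j)))
      = if i = 0 then 1 else 0 := by
    have h1 : coeff i ((1:PS2) * ∏ j ∈ range (M+k), (1 - (X:PS2)^(2*M-j)))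
        = coeff i (1:PS2) := by
      apply coeff_mul_prod_one_sub_of_lt_order
      intro j hj
      rw [mem_range] at hj
      rw [PowerSeries.order_X_pow]
      exact_mod_cast (by omega : i < 2*M-j)
    rw [one_mul] at h1
    rw [h1, PowerSeries.coeff_one]
  rw [← hL, hei, hR]

/-- main assembly: the coefficient of the product counts triangular representations -/
lemma key_count (n : ℕ) :
    coeff n (DE (2*n+1) * DD K2 (2*n+1))
      = ∑ k ∈ range (2*n+2), (if tri (k:ℤ) = n then (1:K2) else 0) := by
  set M := 2*n+2 with hM
  have haveA : ∀ a : ℕ, a ≤ n → coeff a (DE (2*n+1))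
      = ∑ k ∈ range M, coeff a (X^(tri (k:ℤ)) * gbin K2 (2*M) ((M:ℤ)+(k:ℤ))) := by
    intro a ha
    have hd := diamond2 M a (by omega) (by omega)
    have hprod : DD K2 M * DD K2 (M-1) = DE (2*n+1) * (1 + X^M) := by
      rw [show M = (2*n+1)+1 by omega, DD_succ, show (2*n+1)+1-1 = 2*n+1 by omega, ← DD_sq]
      ring
    have hsplit2 : coeff a (DE (2*n+1) * (1 + X^M)) = coeff a (DE (2*n+1)) := by
      rw [mul_add, mul_one, map_add, PowerSeries.coeff_mul_X_pow',
        if_neg (by omega : ¬ M ≤ a), add_zero]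
    rw [hprod, hsplit2] at hd
    exact hd.symm
  rw [PowerSeries.coeff_mul]
  have step1 : ∑ p ∈ Finset.HasAntidiagonal.antidiagonal n, coeff p.1 (DE (2*n+1)) * coeff p.2 (DD K2 (2*n+1))
      = ∑ p ∈ Finset.HasAntidiagonal.antidiagonal n, ∑ k ∈ range M,
          coeff p.1 (X^(tri (k:ℤ)) * gbin K2 (2*M) ((M:ℤ)+(k:ℤ))) * coeff p.2 (DD K2 (2*n+1)) := by
    refine Finset.sum_congr rfl fun p hp => ?_
    rw [Finset.HasAntidiagonal.mem_antidiagonal] at hp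
    rw [haveA p.1 (by omega), Finset.sum_mul]
  rw [step1, Finset.sum_comm]
  refine Finset.sum_congr rfl fun k hk => ?_
  rw [mem_range] at hk
  rw [← PowerSeries.coeff_mul, mul_assoc, PowerSeries.coeff_X_pow_mul']
  by_cases ht : tri (k:ℤ) ≤ n
  · rw [if_pos ht]
    have hkn : k ≤ n := le_trans (tri_le k) ht
    have hg := gbd n k hkn (n - tri (k:ℤ)) (by omega)
    rw [show (((2*n+2)+k : ℕ):ℤ) = ((M:ℤ)+(k:ℤ)) by push_cast; omega] at hg
    rw [hg]
    by_cases he : tri (k:ℤ) = n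
    · rw [if_pos he, if_pos (by omega)]
    · rw [if_neg he, if_neg (by omega)]
  · rw [if_neg ht, if_neg (by omega)]

section ArchiveCopy
open scoped Classical

variable {α : Type*}

/-- A convenience constructor for the power series whose coefficients indicate a subset. -/
def indicatorSeries (α : Type*) [Semiring α] (s : Set ℕ) : PowerSeries α :=
  PowerSeries.mk fun n => if n ∈ s then 1 else 0

theorem coeff_indicator (s : Set ℕ) [Semiring α] (n : ℕ) :
    coeff (R := α) n (indicatorSeries _ s) = if n ∈ s then 1 else 0 :=
  coeff_mk _ _

theorem coeff_indicator_pos (s : Set ℕ) [Semiring α] (n : ℕ) (h : n ∈ s) :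
    coeff (R := α) n (indicatorSeries _ s) = 1 := by rw [coeff_indicator, if_pos h]

theorem coeff_indicator_neg (s : Set ℕ) [Semiring α] (n : ℕ) (h : n ∉ s) :
    coeff (R := α) n (indicatorSeries _ s) = 0 := by rw [coeff_indicator, if_neg h]

theorem constantCoeff_indicator (s : Set ℕ) [Semiring α] :
    constantCoeff (R := α) (indicatorSeries _ s) = if 0 ∈ s then 1 else 0 :=
  rfl

theorem num_series' [Field α] (i : ℕ) :
    (1 - (X : PowerSeries α) ^ (i + 1))⁻¹ = indicatorSeries α {k | i + 1 ∣ k} := by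
  rw [PowerSeries.inv_eq_iff_mul_eq_one]
  · ext n
    cases n with
    | zero => simp [mul_sub, zero_pow, constantCoeff_indicator]
    | succ n =>
      simp only [coeff_one, if_false, mul_sub, mul_one, coeff_indicator,
        LinearMap.map_sub, reduceCtorEq]
      simp_rw [coeff_mul, coeff_X_pow, coeff_indicator, @boole_mul _ _ _ _]
      simp only [Set.mem_setOf_eq]; rw [sum_ite, sum_ite]
      simp_rw [@filter_filter _ _ _ _ _, sum_const_zero, add_zero, sum_const, nsmul_eq_mul, mul_one,
        sub_eq_iff_eq_add, zero_add]
      symm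
      split_ifs with h
      · suffices #{a ∈ antidiagonal (n + 1) | i + 1 ∣ a.fst ∧ a.snd = i + 1} = 1 by
          convert congr_arg ((↑) : ℕ → α) this; norm_cast
        rw [card_eq_one]
        cases' h with p hp
        refine ⟨((i + 1) * (p - 1), i + 1), ?_⟩
        ext ⟨a₁, a₂⟩
        simp only [mem_filter, Prod.mk.injEq, HasAntidiagonal.mem_antidiagonal, mem_singleton]
        constructor
        · rintro ⟨a_left, ⟨a, rfl⟩, rfl⟩
          refine ⟨?_, rfl⟩
          rw [Nat.mul_sub_left_distrib, ← hp, ← a_left, mul_one, Nat.add_sub_cancel]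
        · rintro ⟨rfl, rfl⟩
          match p with
          | 0 => rw [mul_zero] at hp; cases hp
          | p + 1 => rw [hp]; simp [mul_add]
      · suffices #{a ∈ antidiagonal (n + 1) | i + 1 ∣ a.fst ∧ a.snd = i + 1} = 0 by
          convert congr_arg ((↑) : ℕ → α) this; norm_cast
        rw [card_eq_zero]
        apply eq_empty_of_forall_notMem
        simp only [Prod.forall, mem_filter, not_and, HasAntidiagonal.mem_antidiagonal]
        rintro _ h₁ h₂ ⟨a, rfl⟩ rfl
        apply h
        simp [← h₂]
  · simp [zero_pow]

open Finset.HasAntidiagonal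

-- The main workhorse of the partition theorem proof.
theorem partialGF_prop (α : Type*) [CommSemiring α] (n : ℕ) (s : Finset ℕ) (hs : ∀ i ∈ s, 0 < i)
    (c : ℕ → Set ℕ) (hc : ∀ i, i ∉ s → 0 ∈ c i) :
    #{p : n.Partition | (∀ j, p.parts.count j ∈ c j) ∧ ∀ j ∈ p.parts, j ∈ s} =
      coeff n (∏ i ∈ s, indicatorSeries α ((· * i) '' c i)) := by
  simp_rw [coeff_prod, coeff_indicator, prod_boole, sum_boole]
  apply congr_arg
  simp only [mem_univ, forall_true_left, not_and, not_forall, exists_prop,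
    Set.mem_image, not_exists]
  set φ : (a : Nat.Partition n) →
    a ∈ filter (fun p ↦ (∀ (j : ℕ), Multiset.count j p.parts ∈ c j) ∧ ∀ j ∈ p.parts, j ∈ s) univ →
    ℕ →₀ ℕ := fun p _ => {
      toFun := fun i => Multiset.count i p.parts • i
      support := Finset.filter (fun i => i ≠ 0) p.parts.toFinset
      mem_support_toFun := fun a => by
        simp only [smul_eq_mul, ne_eq, mul_eq_zero, Multiset.count_eq_zero]
        rw [not_or, not_not]
        simp only [Multiset.mem_toFinset, not_not, mem_filter] }
  refine Finset.card_bij φ ?_ ?_ ?_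
  · intro a ha
    simp only [φ, not_forall, not_exists, not_and, exists_prop, mem_filter]
    rw [mem_finsuppAntidiag]
    dsimp only [ne_eq, smul_eq_mul, id_eq, eq_mpr_eq_cast, le_eq_subset, Finsupp.coe_mk]
    simp only [mem_univ, forall_true_left, not_and, not_forall, exists_prop,
      mem_filter, true_and] at ha
    refine ⟨⟨?_, fun i ↦ ?_⟩, fun i _ ↦ ⟨a.parts.count i, ha.1 i, rfl⟩⟩
    · conv_rhs => simp [← a.parts_sum]
      rw [sum_multiset_count_of_subset _ s]
      · simp only [smul_eq_mul]
      · intro i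
        simp only [Multiset.mem_toFinset, not_not, mem_filter]
        apply ha.2
    · simp only [ne_eq, Multiset.mem_toFinset, not_not, mem_filter, and_imp]
      exact fun hi _ ↦ ha.2 i hi
  · intro p₁ hp₁ p₂ hp₂ h
    apply Nat.Partition.ext
    simp only [true_and, mem_univ, mem_filter] at hp₁ hp₂
    ext i
    simp only [φ, ne_eq, Multiset.mem_toFinset, not_not, smul_eq_mul, Finsupp.mk.injEq] at h
    by_cases hi : i = 0
    · rw [hi]
      rw [Multiset.count_eq_zero_of_notMem]
      · rw [Multiset.count_eq_zero_of_notMem]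
        intro a; exact Nat.lt_irrefl 0 (hs 0 (hp₂.2 0 a))
      intro a; exact Nat.lt_irrefl 0 (hs 0 (hp₁.2 0 a))
    · rw [← mul_left_inj' hi]
      rw [funext_iff] at h
      exact h.2 i
  · simp only [φ, mem_filter, mem_finsuppAntidiag, mem_univ, exists_prop, true_and, and_assoc]
    rintro f ⟨hf, hf₃, hf₄⟩
    have hf' : f ∈ finsuppAntidiag s n := mem_finsuppAntidiag.mpr ⟨hf, hf₃⟩
    simp only [mem_finsuppAntidiag] at hf'
    refine ⟨⟨∑ i ∈ s, Multiset.replicate (f i / i) i, ?_, ?_⟩, ?_, ?_, ?_⟩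
    · intro i hi
      simp only [exists_prop, Multiset.mem_sum, mem_map, Function.Embedding.coeFn_mk] at hi
      rcases hi with ⟨t, ht, z⟩
      apply hs
      rwa [Multiset.eq_of_mem_replicate z]
    · simp_rw [Multiset.sum_sum, Multiset.sum_replicate, Nat.nsmul_eq_mul]
      rw [← hf'.1]
      refine sum_congr rfl fun i hi => Nat.div_mul_cancel ?_
      rcases hf₄ i hi with ⟨w, _, hw₂⟩
      rw [← hw₂]
      exact dvd_mul_left _ _
    · intro i
      simp_rw [Multiset.count_sum', Multiset.count_replicate, sum_ite_eq']
      split_ifs with h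
      · rcases hf₄ i h with ⟨w, hw₁, hw₂⟩
        rwa [← hw₂, Nat.mul_div_cancel _ (hs i h)]
      · exact hc _ h
    · intro i hi
      rw [Multiset.mem_sum] at hi
      rcases hi with ⟨j, hj₁, hj₂⟩
      rwa [Multiset.eq_of_mem_replicate hj₂]
    · ext i
      simp_rw [Multiset.count_sum', Multiset.count_replicate, sum_ite_eq']
      simp only [ne_eq, Multiset.mem_toFinset, not_not, smul_eq_mul, ite_mul,
        zero_mul, Finsupp.coe_mk]
      split_ifs with h
      · apply Nat.div_mul_cancel
        rcases hf₄ i h with ⟨w, _, hw₂⟩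
        apply Dvd.intro_left _ hw₂
      · apply symm
        rw [← Finsupp.notMem_support_iff]
        exact notMem_mono hf'.2 h

end ArchiveCopy

section Interp
open scoped Classical

theorem psGF_prop {α : Type*} [Field α] (n : ℕ) (s : Finset ℕ) (hs : ∀ i ∈ s, 0 < i) :
    #{p : n.Partition | ∀ j ∈ p.parts, j ∈ s} = coeff (R := α) n (∏ i ∈ s, (1 - X^i)⁻¹) := by
  convert partialGF_prop α n s hs (fun _ => Set.univ) (fun _ _ => trivial) using 2
  · congr
    simp only [true_and, forall_const, Set.mem_univ]
  · refine Finset.prod_congr rfl fun i hi => ?_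
    obtain ⟨i', rfl⟩ : ∃ i', i = i'+1 := ⟨i-1, by have := hs i hi; omega⟩
    have himg : ((· * (i'+1)) '' Set.univ) = {k | i'+1 ∣ k} := by
      ext k
      simp only [Set.image_univ, Set.mem_range, Set.mem_setOf_eq]
      constructor
      · rintro ⟨p, rfl⟩
        exact dvd_mul_left _ _
      · rintro ⟨c, rfl⟩
        exact ⟨c, mul_comm _ _⟩
    rw [num_series', himg]

end Interp

/-- the allowed part sizes for 4-regular partitions, up to a bound -/
def S4 (r : ℕ) : Finset ℕ := (Finset.Ico 1 (4*r+1)).filter (fun i => ¬ 4 ∣ i)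

lemma bReg_coeff (n : ℕ) :
    ((bReg 4 n : ℕ) : K2) = coeff n (∏ i ∈ S4 (2*n+1), (1 - X^i)⁻¹) := by
  classical
  rw [← psGF_prop n (S4 (2*n+1)) (fun i hi => by
    simp only [S4, mem_filter, mem_Ico] at hi; omega)]
  rw [bReg]
  congr 2
  apply Finset.filter_congr
  intro p _
  constructor
  · intro h j hj
    have hj1 : 0 < j := p.parts_pos hj
    have hjn : j ≤ n := by
      simpa [p.parts_sum] using Multiset.single_le_sum (fun _ _ => Nat.zero_le _) _ hj
    simp only [S4, mem_filter, mem_Ico]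
    exact ⟨⟨hj1, by omega⟩, h j hj⟩
  · intro h j hj
    have := h j hj
    simp only [S4, mem_filter, mem_Ico] at this
    exact this.2

lemma constCoeff_one_sub_X_pow (i : ℕ) (hi : 0 < i) :
    constantCoeff (1 - (X:PS2)^i) = 1 := by
  rw [map_sub, map_one, map_pow, PowerSeries.constantCoeff_X, zero_pow (by omega), sub_zero]

/-- product identity A -/
lemma idA (r : ℕ) :
    (∏ i ∈ S4 r, (1 - (X:PS2)^i)) * (DD K2 r * DE r)
      = ∏ i ∈ Finset.Ico (r+1) (4*r+1), (1 - (X:PS2)^i) := by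
  classical
  have hDDmne : (∏ j ∈ range r, (1 - (X:PS2)^(j+1))) ≠ 0 := by
    intro h
    have hc : constantCoeff (∏ j ∈ range r, (1 - (X:PS2)^(j+1))) = 1 := by
      rw [map_prod]
      rw [Finset.prod_congr rfl fun j _ => constCoeff_one_sub_X_pow (j+1) (by omega)]
      simp
    rw [h, map_zero] at hc
    exact zero_ne_one hc
  apply mul_left_cancel₀ hDDmne
  -- RHS: DDm * Tail = full product over Ico 1 (4r+1)
  have hP5 : ∏ j ∈ range r, (1 - (X:PS2)^(j+1)) = ∏ i ∈ Finset.Ico 1 (r+1), (1 - (X:PS2)^i) := by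
    rw [Finset.prod_Ico_eq_prod_range]
    refine Finset.prod_congr (by rw [Nat.add_sub_cancel]) fun j _ => by rw [Nat.add_comm]
  have hRHS : (∏ j ∈ range r, (1 - (X:PS2)^(j+1)))
        * ∏ i ∈ Finset.Ico (r+1) (4*r+1), (1 - (X:PS2)^i)
      = ∏ i ∈ Finset.Ico 1 (4*r+1), (1 - (X:PS2)^i) := by
    rw [hP5, Finset.prod_Ico_consecutive]
    · omega
    · omega
  rw [hRHS]
  -- LHS
  have hP1 : ∏ i ∈ Finset.Ico 1 (4*r+1), (1 - (X:PS2)^i)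
      = (∏ i ∈ (Finset.Ico 1 (4*r+1)).filter (fun i => 4 ∣ i), (1 - (X:PS2)^i))
        * ∏ i ∈ S4 r, (1 - (X:PS2)^i) := by
    rw [S4]
    exact (Finset.prod_filter_mul_prod_filter_not _ _ _).symm
  have hset : (Finset.Ico 1 (4*r+1)).filter (fun i => 4 ∣ i)
      = (range r).image (fun j => (j+1)*4) := by
    ext i
    simp only [mem_filter, mem_Ico, mem_image, mem_range]
    constructor
    · rintro ⟨⟨h1, h2⟩, c, rfl⟩
      exact ⟨c-1, by omega, by omega⟩
    · rintro ⟨j, hj, rfl⟩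
      exact ⟨⟨by omega, by omega⟩, ⟨j+1, by ring⟩⟩
  have hP2 : ∏ i ∈ (Finset.Ico 1 (4*r+1)).filter (fun i => 4 ∣ i), (1 - (X:PS2)^i)
      = ∏ j ∈ range r, (1 - (X:PS2)^((j+1)*4)) := by
    rw [hset, Finset.prod_image]
    intro a _ b _ hab
    simp only at hab
    omega
  have hP3 : ∏ j ∈ range r, (1 - (X:PS2)^((j+1)*4))
      = ∏ j ∈ range r, ((1 - (X:PS2)^(j+1)) * ((1 + X^(j+1)) * (1 + X^((j+1)*2)))) := by
    refine Finset.prod_congr rfl fun j _ => ?_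
    rw [pow_mul, pow_mul]
    ring
  rw [hP1, hP2, hP3]
  rw [DD, DE, Finset.prod_mul_distrib, Finset.prod_mul_distrib]
  ring

/-- the coefficient identification for the 4-regular generating function -/
lemma coeff_DDDE (n : ℕ) :
    coeff n (DD K2 (2*n+1) * DE (2*n+1)) = ((bReg 4 n : ℕ) : K2) := by
  classical
  rw [bReg_coeff]
  have hinv : (∏ i ∈ S4 (2*n+1), (1 - (X:PS2)^i)⁻¹) * (∏ i ∈ S4 (2*n+1), (1 - (X:PS2)^i)) = 1 := by
    rw [← Finset.prod_mul_distrib]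
    rw [Finset.prod_congr rfl fun i hi => PowerSeries.inv_mul_cancel _ (by
      rw [constCoeff_one_sub_X_pow i (by
        simp only [S4, mem_filter, mem_Ico] at hi; omega)]
      exact one_ne_zero)]
    simp
  have h1 : DD K2 (2*n+1) * DE (2*n+1)
      = (∏ i ∈ S4 (2*n+1), (1 - (X:PS2)^i)⁻¹)
        * ∏ i ∈ Finset.Ico (2*n+1+1) (4*(2*n+1)+1), (1 - (X:PS2)^i) := by
    rw [← idA (2*n+1), ← mul_assoc, hinv, one_mul]
  rw [h1]
  apply coeff_mul_prod_one_sub_of_lt_order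
  intro i hi
  rw [Finset.mem_Ico] at hi
  rw [PowerSeries.order_X_pow]
  exact_mod_cast (by omega : n < i)

lemma bReg_tri (N : ℕ) :
    ((bReg 4 N : ℕ) : K2) = ∑ k ∈ range (2*N+2), (if tri (k:ℤ) = N then (1:K2) else 0) := by
  rw [← key_count, ← coeff_DDDE, mul_comm]

/-- For each odd prime `m` and each `j` with `m ‖ 8j+1`,
`b_4(m^2 n + j) ≡ 0 (mod 2)` for all `n`. -/
theorem b4_even_of_exact_div (m : ℕ) (hm : m.Prime) (hmodd : Odd m) (j : ℕ)
    (h1 : m ∣ 8 * j + 1) (h2 : ¬ m ^ 2 ∣ 8 * j + 1) (n : ℕ) :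
    bReg 4 (m ^ 2 * n + j) % 2 = 0 := by
  set N := m ^ 2 * n + j with hN
  have hz : ((bReg 4 N : ℕ) : K2) = 0 := by
    rw [bReg_tri]
    refine Finset.sum_eq_zero fun k hk => ?_
    rw [if_neg]
    intro htri
    -- 8N+1 = (2k+1)^2
    have hsq : 8 * N + 1 = (2*k+1)^2 := by
      have ht := tri_two (k:ℤ)
      have : (8 * N + 1 : ℤ) = ((2*k+1:ℕ):ℤ)^2 := by
        push_cast
        rw [← htri]
        push_cast [← htri]
        nlinarith [ht]
      exact_mod_cast this
    have hdvd1 : m ∣ 8 * N + 1 := by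
      rw [hN]
      have : 8 * (m^2*n + j) + 1 = m^2 * (8*n) + (8*j+1) := by ring
      rw [this]
      exact dvd_add ((dvd_pow_self m two_ne_zero).mul_right _) h1
    have hdvd2 : m ∣ 2*k+1 := by
      rw [hsq] at hdvd1
      exact hm.dvd_of_dvd_pow hdvd1
    have hdvd3 : m^2 ∣ 8 * N + 1 := by
      rw [hsq]
      exact pow_dvd_pow_of_dvd hdvd2 2
    have hdvd4 : m^2 ∣ 8*j+1 := by
      have he : 8 * N + 1 = m^2 * (8*n) + (8*j+1) := by rw [hN]; ring
      have h5 : m^2 ∣ m^2 * (8*n) := Dvd.intro _ rfl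
      have := Nat.dvd_sub hdvd3 h5
      rwa [he, Nat.add_sub_cancel_left] at this
    exact h2 hdvd4
  have : (2:ℕ) ∣ bReg 4 N := by
    rwa [← ZMod.natCast_eq_zero_iff]
  omega

end AuxGB
end

section
/- ∑_{n≥0} b_4(n) q^{8n+1} ≡ ∑_{n≥1} τ(n) q^n (mod 2), where τ is the Ramanujan tau function; equivalently, b_4(n) ≡ τ(8n+1) (mod 2) for all n ≥ 0. -/
/-- The Ramanujan tau function, defined via the coefficients of
`q ∏_{k≥1} (1 - q^k)^24`; the truncated product gives the exact coefficient. -/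
noncomputable def tau (n : ℕ) : ℤ :=
  PowerSeries.coeff (R := ℤ) n
    (PowerSeries.X * ∏ k ∈ Finset.range n, (1 - PowerSeries.X ^ (k + 1)) ^ 24)

namespace B4

open PowerSeries Finset
open scoped Classical

noncomputable section

variable {α : Type*}

/-! ### Generating function machinery (adapted from
`Archive/Wiedijk100Theorems/Partition.lean` in Mathlib, by Bhavik Mehta and Aaron Anderson) -/

/-- A convenience constructor for the power series whose coefficients indicate a subset. -/
def indicatorSeries (α : Type*) [Semiring α] (s : Set ℕ) : PowerSeries α :=
  PowerSeries.mk fun n => if n ∈ s then 1 else 0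

theorem coeff_indicator (s : Set ℕ) [Semiring α] (n : ℕ) :
    coeff (R := α) n (indicatorSeries _ s) = if n ∈ s then 1 else 0 :=
  coeff_mk _ _

theorem coeff_indicator_pos (s : Set ℕ) [Semiring α] (n : ℕ) (h : n ∈ s) :
    coeff (R := α) n (indicatorSeries _ s) = 1 := by rw [coeff_indicator, if_pos h]

theorem coeff_indicator_neg (s : Set ℕ) [Semiring α] (n : ℕ) (h : n ∉ s) :
    coeff (R := α) n (indicatorSeries _ s) = 0 := by rw [coeff_indicator, if_neg h]

theorem constantCoeff_indicator (s : Set ℕ) [Semiring α] :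
    constantCoeff (R := α) (indicatorSeries _ s) = if 0 ∈ s then 1 else 0 :=
  rfl
theorem num_series' [Field α] (i : ℕ) :
    (1 - (X : PowerSeries α) ^ (i + 1))⁻¹ = indicatorSeries α {k | i + 1 ∣ k} := by
  rw [PowerSeries.inv_eq_iff_mul_eq_one]
  · ext n
    cases n with
    | zero => simp [mul_sub, zero_pow, constantCoeff_indicator]
    | succ n =>
      simp only [coeff_one, if_false, mul_sub, mul_one, coeff_indicator,
        LinearMap.map_sub, reduceCtorEq]
      simp_rw [coeff_mul, coeff_X_pow, coeff_indicator, @boole_mul _ _ _ _]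
      simp only [Set.mem_setOf_eq]
      erw [sum_ite, sum_ite]
      simp_rw [@filter_filter _ _ _ _ _, sum_const_zero, add_zero, sum_const, nsmul_eq_mul, mul_one,
        sub_eq_iff_eq_add, zero_add]
      symm
      split_ifs with h
      · suffices #{a ∈ antidiagonal (n + 1) | i + 1 ∣ a.fst ∧ a.snd = i + 1} = 1 by
          convert congr_arg ((↑) : ℕ → α) this; norm_cast
        rw [card_eq_one]
        cases' h with p hp
        refine ⟨((i + 1) * (p - 1), i + 1), ?_⟩
        ext ⟨a₁, a₂⟩
        simp only [mem_filter, Prod.mk_inj, HasAntidiagonal.mem_antidiagonal, mem_singleton]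
        constructor
        · rintro ⟨a_left, ⟨a, rfl⟩, rfl⟩
          refine ⟨?_, rfl⟩
          rw [Nat.mul_sub_left_distrib, ← hp, ← a_left, mul_one, Nat.add_sub_cancel]
        · rintro ⟨rfl, rfl⟩
          match p with
          | 0 => rw [mul_zero] at hp; cases hp
          | p + 1 => rw [hp]; simp [mul_add]
      · suffices #{a ∈ antidiagonal (n + 1) | i + 1 ∣ a.fst ∧ a.snd = i + 1} = 0 by
          convert congr_arg ((↑) : ℕ → α) this; norm_cast
        rw [card_eq_zero]
        apply eq_empty_of_forall_notMem
        simp only [Prod.forall, mem_filter, not_and, HasAntidiagonal.mem_antidiagonal]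
        rintro _ h₁ h₂ ⟨a, rfl⟩ rfl
        apply h
        simp [← h₂]
  · simp [zero_pow]
-- The main workhorse of the partition theorem proof.
theorem partialGF_prop (α : Type*) [CommSemiring α] (n : ℕ) (s : Finset ℕ) (hs : ∀ i ∈ s, 0 < i)
    (c : ℕ → Set ℕ) (hc : ∀ i, i ∉ s → 0 ∈ c i) :
    #{p : n.Partition | (∀ j, p.parts.count j ∈ c j) ∧ ∀ j ∈ p.parts, j ∈ s} =
      coeff (R := α) n (∏ i ∈ s, indicatorSeries α ((· * i) '' c i)) := by
  simp_rw [coeff_prod, coeff_indicator, prod_boole, sum_boole]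
  apply congr_arg
  simp only [mem_univ, forall_true_left, not_and, not_forall, exists_prop,
    Set.mem_image, not_exists]
  set φ : (a : Nat.Partition n) →
    a ∈ filter (fun p ↦ (∀ (j : ℕ), Multiset.count j p.parts ∈ c j) ∧ ∀ j ∈ p.parts, j ∈ s) univ →
    ℕ →₀ ℕ := fun p _ => {
      toFun := fun i => Multiset.count i p.parts • i
      support := Finset.filter (fun i => i ≠ 0) p.parts.toFinset
      mem_support_toFun := fun a => by
        simp only [smul_eq_mul, ne_eq, mul_eq_zero, Multiset.count_eq_zero]
        rw [not_or, not_not]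
        simp only [Multiset.mem_toFinset, not_not, mem_filter] }
  refine Finset.card_bij φ ?_ ?_ ?_
  · intro a ha
    simp only [φ, not_forall, not_exists, not_and, exists_prop, mem_filter]
    rw [mem_finsuppAntidiag]
    dsimp only [ne_eq, smul_eq_mul, id_eq, eq_mpr_eq_cast, le_eq_subset, Finsupp.coe_mk]
    simp only [mem_univ, forall_true_left, not_and, not_forall, exists_prop,
      mem_filter, true_and] at ha
    refine ⟨⟨?_, fun i ↦ ?_⟩, fun i _ ↦ ⟨a.parts.count i, ha.1 i, rfl⟩⟩
    · conv_rhs => simp [← a.parts_sum]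
      rw [sum_multiset_count_of_subset _ s]
      · simp only [smul_eq_mul]
      · intro i
        simp only [Multiset.mem_toFinset, not_not, mem_filter]
        apply ha.2
    · simp only [ne_eq, Multiset.mem_toFinset, not_not, mem_filter, and_imp]
      exact fun hi _ ↦ ha.2 i hi
  · intro p₁ hp₁ p₂ hp₂ h
    apply Nat.Partition.ext
    simp only [true_and, mem_univ, mem_filter] at hp₁ hp₂
    ext i
    simp only [φ, ne_eq, Multiset.mem_toFinset, not_not, smul_eq_mul, Finsupp.mk.injEq] at h
    by_cases hi : i = 0
    · rw [hi]
      rw [Multiset.count_eq_zero_of_notMem]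
      · rw [Multiset.count_eq_zero_of_notMem]
        intro a; exact Nat.lt_irrefl 0 (hs 0 (hp₂.2 0 a))
      intro a; exact Nat.lt_irrefl 0 (hs 0 (hp₁.2 0 a))
    · rw [← mul_left_inj' hi]
      rw [funext_iff] at h
      exact h.2 i
  · simp only [φ, mem_filter, mem_finsuppAntidiag, mem_univ, exists_prop, true_and, and_assoc]
    rintro f ⟨hf, hf₃, hf₄⟩
    have hf' : f ∈ finsuppAntidiag s n := mem_finsuppAntidiag.mpr ⟨hf, hf₃⟩
    simp only [mem_finsuppAntidiag] at hf'
    refine ⟨⟨∑ i ∈ s, Multiset.replicate (f i / i) i, ?_, ?_⟩, ?_, ?_, ?_⟩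
    · intro i hi
      simp only [exists_prop, Multiset.mem_sum, mem_map, Function.Embedding.coeFn_mk] at hi
      rcases hi with ⟨t, ht, z⟩
      apply hs
      rwa [Multiset.eq_of_mem_replicate z]
    · simp_rw [Multiset.sum_sum, Multiset.sum_replicate, Nat.nsmul_eq_mul]
      rw [← hf'.1]
      refine sum_congr rfl fun i hi => Nat.div_mul_cancel ?_
      rcases hf₄ i hi with ⟨w, _, hw₂⟩
      rw [← hw₂]
      exact dvd_mul_left _ _
    · intro i
      simp_rw [Multiset.count_sum', Multiset.count_replicate, sum_ite_eq']
      split_ifs with h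
      · rcases hf₄ i h with ⟨w, hw₁, hw₂⟩
        rwa [← hw₂, Nat.mul_div_cancel _ (hs i h)]
      · exact hc _ h
    · intro i hi
      rw [Multiset.mem_sum] at hi
      rcases hi with ⟨j, hj₁, hj₂⟩
      rwa [Multiset.eq_of_mem_replicate hj₂]
    · ext i
      simp_rw [Multiset.count_sum', Multiset.count_replicate, sum_ite_eq']
      simp only [ne_eq, Multiset.mem_toFinset, not_not, smul_eq_mul, ite_mul,
        zero_mul, Finsupp.coe_mk]
      split_ifs with h
      · apply Nat.div_mul_cancel
        rcases hf₄ i h with ⟨w, _, hw₂⟩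
        apply Dvd.intro_left _ hw₂
      · apply symm
        rw [← Finsupp.notMem_support_iff]
        exact notMem_mono hf'.2 h


/-! ### Characteristic-two identities for power series over `ZMod 2` -/

lemma ps2_zero : (2 : PowerSeries (ZMod 2)) = 0 := by
  rw [← map_ofNat (PowerSeries.C (R := ZMod 2)) 2, show (2:ZMod 2) = 0 by decide, map_zero]

lemma ps_neg (a : PowerSeries (ZMod 2)) : -a = a := by
  rw [neg_eq_iff_add_eq_zero, ← two_mul, ps2_zero, zero_mul]

lemma sq_one_sub (Y : PowerSeries (ZMod 2)) : (1 - Y)^2 = 1 - Y^2 := by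
  rw [show (1 - Y)^2 = 1 - 2*Y + Y^2 by ring, ps2_zero, zero_mul, sub_zero,
    sub_eq_add_neg 1 (Y^2), ps_neg]

lemma pow4_one_sub (Y : PowerSeries (ZMod 2)) : (1 - Y)^4 = 1 - Y^4 := by
  rw [show (4:ℕ) = 2*2 by norm_num, pow_mul, sq_one_sub, sq_one_sub, ← pow_mul]

lemma pow8_one_sub (Y : PowerSeries (ZMod 2)) : (1 - Y)^8 = 1 - Y^8 := by
  rw [show (8:ℕ) = 2*4 by norm_num, pow_mul, sq_one_sub, pow4_one_sub, ← pow_mul]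

lemma pow24_one_sub (Y : PowerSeries (ZMod 2)) : (1 - Y)^24 = (1 - Y^8)^3 := by
  rw [show (24:ℕ) = 8*3 by norm_num, pow_mul, pow8_one_sub]

/-! ### Tail coefficients -/

lemma coeff_mul_prod_pow_eq {R : Type*} [CommRing R] [Nontrivial R] (k e : ℕ) (s : Finset ℕ)
    (φ : PowerSeries R) (h : ∀ i ∈ s, k < i + 1) :
    coeff (R := R) k (φ * ∏ i ∈ s, (1 - X^(i+1))^e) = coeff (R := R) k φ := by
  have : ∀ i ∈ s, ((1:PowerSeries R) - X^(i+1))^e = ∏ _j ∈ range e, (1 - X^(i+1)) := by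
    intro i _; rw [prod_const, card_range]
  rw [Finset.prod_congr rfl this, Finset.prod_sigma']
  apply coeff_mul_prod_one_sub_of_lt_order
  rintro ⟨i, j⟩ hij
  rw [order_X_pow]
  simp only [mem_sigma] at hij
  exact_mod_cast h i hij.1

/-! ### Counting 4-regular partitions via the generating function -/

lemma bReg4_prop (n m : ℕ) (h : n < m) :
    ((bReg 4 n : ZMod 2)) =
      coeff (R := ZMod 2) n (∏ i ∈ (range m).filter (fun i => ¬ 4 ∣ (i+1)), (1 - X^(i+1))⁻¹) := by
  set t := (range m).filter (fun i => ¬ 4 ∣ (i+1)) with ht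
  set s := t.map ⟨Nat.succ, Nat.succ_injective⟩ with hs
  have hmem : ∀ j, j ∈ s ↔ (j ≤ m ∧ 1 ≤ j ∧ ¬ 4 ∣ j) := by
    intro j
    simp only [hs, ht, mem_map, mem_filter, mem_range, Function.Embedding.coeFn_mk]
    constructor
    · rintro ⟨a, ⟨ha, hd⟩, rfl⟩
      exact ⟨by omega, by omega, hd⟩
    · rintro ⟨h1, h2, h3⟩
      exact ⟨j - 1, ⟨by omega, by rwa [show j - 1 + 1 = j by omega]⟩, by omega⟩
  have hpos : ∀ i ∈ s, 0 < i := fun i hi => ((hmem i).1 hi).2.1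
  have hcount := partialGF_prop (ZMod 2) n s hpos (fun _ => Set.univ) (fun _ _ => trivial)
  have hL : bReg 4 n =
      #{p : n.Partition | (∀ j, p.parts.count j ∈ (Set.univ : Set ℕ)) ∧
        ∀ j ∈ p.parts, j ∈ s} := by
    rw [bReg]
    refine congrArg Finset.card ?_
    ext p
    simp only [mem_filter, mem_univ, true_and, Set.mem_univ, forall_true_left, true_and]
    constructor
    · intro hp
      refine ⟨fun _ => trivial, fun j hj => (hmem j).2 ⟨?_, ?_, hp j hj⟩⟩
      · have : j ≤ n := by
          simpa [p.parts_sum] using Multiset.single_le_sum (fun _ _ => Nat.zero_le _) _ hj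
        omega
      · exact p.parts_pos hj
    · intro hp j hj
      exact ((hmem j).1 (hp.2 j hj)).2.2
  have hR : (∏ i ∈ s, indicatorSeries (ZMod 2) ((· * i) '' Set.univ)) =
      ∏ i ∈ t, (1 - X^(i+1))⁻¹ := by
    rw [hs, Finset.prod_map]
    refine Finset.prod_congr rfl fun i _ => ?_
    have hset : ((· * (i+1)) '' Set.univ : Set ℕ) = {k | (i+1) ∣ k} := by
      ext k
      simp only [Set.mem_image, Set.mem_univ, true_and, Set.mem_setOf_eq]
      constructor
      · rintro ⟨a, rfl⟩; exact Dvd.intro_left a rfl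
      · rintro ⟨a, rfl⟩; exact ⟨a, mul_comm _ _⟩
    rw [num_series', Function.Embedding.coeFn_mk, Nat.succ_eq_add_one, hset]
  rw [hL, hcount, hR]

/-! ### The key product identity over `ZMod 2` -/

lemma constCoeff_fact (i : ℕ) :
    constantCoeff (R := ZMod 2) (1 - X^(i+1)) ≠ 0 := by
  simp [zero_pow]

lemma key (M : ℕ) :
    (∏ i ∈ (range (4*M)).filter (fun i => ¬ 4 ∣ (i+1)),
        ((1:PowerSeries (ZMod 2)) - X^(i+1))⁻¹)
      * ∏ i ∈ Ico M (4*M), (1 - X^(i+1))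
    = ∏ j ∈ range M, (1 - X^(j+1))^3 := by
  classical
  set F := ∏ i ∈ (range (4*M)).filter (fun i => ¬ 4 ∣ (i+1)),
      ((1:PowerSeries (ZMod 2)) - X^(i+1))⁻¹ with hF
  set Q := ∏ j ∈ range M, ((1:PowerSeries (ZMod 2)) - X^(j+1)) with hQ
  set R := ∏ i ∈ Ico M (4*M), ((1:PowerSeries (ZMod 2)) - X^(i+1)) with hR
  set G3 := ∏ j ∈ range M, ((1:PowerSeries (ZMod 2)) - X^(j+1))^3 with hG3
  have hQne : Q ≠ 0 := by
    intro h0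
    have hc : constantCoeff (R := ZMod 2) Q = 1 := by
      rw [hQ, map_prod, Finset.prod_eq_one]
      intro i _
      simp [zero_pow]
    rw [h0, map_zero] at hc
    exact one_ne_zero hc.symm
  have hcancel : F * ∏ i ∈ (range (4*M)).filter (fun i => ¬ 4 ∣ (i+1)),
      ((1:PowerSeries (ZMod 2)) - X^(i+1)) = 1 := by
    rw [hF, ← Finset.prod_mul_distrib]
    exact Finset.prod_eq_one fun i _ => PowerSeries.inv_mul_cancel _ (constCoeff_fact i)
  have h1 : F * ∏ i ∈ range (4*M), ((1:PowerSeries (ZMod 2)) - X^(i+1))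
      = ∏ i ∈ (range (4*M)).filter (fun i => 4 ∣ (i+1)), (1 - X^(i+1)) := by
    rw [← Finset.prod_filter_mul_prod_filter_not (range (4*M)) (fun i => 4 ∣ (i+1))
      (fun i => (1:PowerSeries (ZMod 2)) - X^(i+1))]
    rw [mul_left_comm, hcancel, mul_one]
  have h2 : (range (4*M)).filter (fun i => 4 ∣ (i+1))
      = (range M).map ⟨fun j => 4*j+3, (show Function.Injective (fun j : ℕ => 4*j+3) by intro a b hab; dsimp only at hab; omega)⟩ := by
    ext i
    simp only [mem_filter, mem_range, mem_map, Function.Embedding.coeFn_mk]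
    constructor
    · rintro ⟨hi, hd⟩
      exact ⟨(i+1)/4 - 1, by omega, by omega⟩
    · rintro ⟨j, hj, rfl⟩
      exact ⟨by omega, by omega⟩
  have h3 : ∏ i ∈ (range (4*M)).filter (fun i => 4 ∣ (i+1)),
      ((1:PowerSeries (ZMod 2)) - X^(i+1)) = G3 * Q := by
    rw [h2, Finset.prod_map, hG3, hQ, ← Finset.prod_mul_distrib]
    refine Finset.prod_congr rfl fun j _ => ?_
    rw [Function.Embedding.coeFn_mk, ← pow_succ, pow4_one_sub, ← pow_mul,
      show (j+1)*4 = 4*j+3+1 by ring]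
  have h5 : ∏ i ∈ range (4*M), ((1:PowerSeries (ZMod 2)) - X^(i+1)) = Q * R := by
    rw [hQ, hR, Finset.prod_range_mul_prod_Ico _ (by omega : M ≤ 4*M)]
  have hfin : (F * R) * Q = G3 * Q := by
    rw [mul_right_comm, mul_assoc, ← h5, h1, h3]
  exact mul_right_cancel₀ hQne hfin

/-! ### The tau function mod 2 -/

lemma coe_g (N : ℕ) :
    ((∏ k ∈ range N, (1 - Polynomial.X^(k+1))^3 : Polynomial (ZMod 2)) : PowerSeries (ZMod 2))
      = ∏ k ∈ range N, (1 - X^(k+1))^3 := by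
  rw [← Polynomial.coeToPowerSeries.ringHom_apply, map_prod]
  refine Finset.prod_congr rfl fun k _ => ?_
  rw [map_pow, map_sub, map_one, map_pow, Polynomial.coeToPowerSeries.ringHom_apply,
    Polynomial.coe_X]

lemma coe_expand_g (N : ℕ) :
    ((Polynomial.expand (ZMod 2) 8 (∏ k ∈ range N, (1 - Polynomial.X^(k+1))^3)
      : Polynomial (ZMod 2)) : PowerSeries (ZMod 2))
      = ∏ k ∈ range N, (1 - X^((k+1)*8))^3 := by
  rw [map_prod, ← Polynomial.coeToPowerSeries.ringHom_apply, map_prod]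
  refine Finset.prod_congr rfl fun k _ => ?_
  simp only [map_pow, map_sub, map_one, Polynomial.expand_X,
    Polynomial.coeToPowerSeries.ringHom_apply, Polynomial.coe_pow, Polynomial.coe_X, ← pow_mul]
  rw [mul_comm 8 (k+1)]

lemma tau_mod2 (n : ℕ) :
    ((tau (8*n+1) : ℤ) : ZMod 2)
      = coeff (R := ZMod 2) n (∏ k ∈ range (8*n+1), (1 - X^(k+1))^3) := by
  have h1 : ((tau (8*n+1) : ℤ) : ZMod 2)
      = coeff (R := ZMod 2) (8*n+1) (PowerSeries.map (Int.castRingHom (ZMod 2))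
          (X * ∏ k ∈ range (8*n+1), (1 - X ^ (k + 1)) ^ 24)) := by
    rw [PowerSeries.coeff_map]; rfl
  rw [h1, map_mul, map_prod]
  simp only [map_pow, map_sub, map_one, PowerSeries.map_X]
  have h2 : ∀ k, ((1:PowerSeries (ZMod 2)) - X^(k+1))^24 = (1 - X^((k+1)*8))^3 := by
    intro k; rw [pow24_one_sub, ← pow_mul]
  simp only [h2]
  rw [show 8*n+1 = (8*n)+1 by ring, PowerSeries.coeff_succ_X_mul]
  rw [← coe_expand_g, Polynomial.coeff_coe,
    Polynomial.coeff_expand (by norm_num : 0 < 8)]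
  rw [if_pos (by omega : 8 ∣ 8*n), Nat.mul_div_cancel_left n (by norm_num)]
  rw [← Polynomial.coeff_coe, coe_g]

end

end B4

/-- `b_4(n) ≡ τ(8n+1) (mod 2)` for all `n ≥ 0`. -/
theorem b4_congr_tau (n : ℕ) : (bReg 4 n : ℤ) ≡ tau (8 * n + 1) [ZMOD 2] := by
  suffices h : ((bReg 4 n : ℤ) : ZMod 2) = ((tau (8 * n + 1) : ℤ) : ZMod 2) by
    have := (ZMod.intCast_eq_intCast_iff _ _ 2).mp h
    exact_mod_cast this
  push_cast
  rw [B4.tau_mod2 n]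
  set M := n + 1 with hM
  have hb := B4.bReg4_prop n (4*M) (by omega)
  rw [hb]
  have hkey := B4.key M
  have hstep1 : PowerSeries.coeff (R := ZMod 2) n
      ((∏ i ∈ (Finset.range (4*M)).filter (fun i => ¬ 4 ∣ (i+1)),
        ((1:PowerSeries (ZMod 2)) - PowerSeries.X^(i+1))⁻¹)
      * ∏ i ∈ Finset.Ico M (4*M), ((1:PowerSeries (ZMod 2)) - PowerSeries.X^(i+1))^1)
      = PowerSeries.coeff (R := ZMod 2) n
        (∏ i ∈ (Finset.range (4*M)).filter (fun i => ¬ 4 ∣ (i+1)),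
          ((1:PowerSeries (ZMod 2)) - PowerSeries.X^(i+1))⁻¹) := by
    apply B4.coeff_mul_prod_pow_eq
    intro i hi
    rw [Finset.mem_Ico] at hi
    omega
  simp only [pow_one] at hstep1
  rw [← hstep1, hkey]
  have hstep2 : PowerSeries.coeff (R := ZMod 2) n
      ((∏ j ∈ Finset.range M, ((1:PowerSeries (ZMod 2)) - PowerSeries.X^(j+1))^3)
      * ∏ i ∈ Finset.Ico M (8*n+1), ((1:PowerSeries (ZMod 2)) - PowerSeries.X^(i+1))^3)
      = PowerSeries.coeff (R := ZMod 2) n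
        (∏ j ∈ Finset.range M, ((1:PowerSeries (ZMod 2)) - PowerSeries.X^(j+1))^3) := by
    apply B4.coeff_mul_prod_pow_eq
    intro i hi
    rw [Finset.mem_Ico] at hi
    omega
  rw [← hstep2, Finset.prod_range_mul_prod_Ico _ (by omega : M ≤ 8*n+1)]
end

section
/- The Ramanujan tau function τ(n) is odd if and only if n is an odd perfect square. -/
open Finset symmDiff

namespace TauAux

/-! ### generic helpers -/

lemma parity_invol {α : Type*} [DecidableEq α] (s : Finset α) (fx : α → Prop) [DecidablePred fx]
    (g : α → α)
    (h : ∀ a ∈ s, ¬ fx a → (g a ∈ s ∧ ¬ fx (g a) ∧ g (g a) = a ∧ g a ≠ a)) :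
    ((s.card : ZMod 2)) = ((s.filter fx).card : ZMod 2) := by
  classical
  have hsplit : (s.filter fx).card + (s.filter (fun a => ¬ fx a)).card = s.card :=
    Finset.card_filter_add_card_filter_not _
  have hz : (((s.filter (fun a => ¬ fx a)).card : ZMod 2)) = 0 := by
    have hsum : (∑ _x ∈ s.filter (fun a => ¬ fx a), (1 : ZMod 2)) = 0 := by
      refine Finset.sum_involution (fun a _ => g a) ?_ ?_ ?_ ?_
      · intro a ha; decide
      · intro a ha _
        rcases Finset.mem_filter.1 ha with ⟨has, hnfx⟩
        exact (h a has hnfx).2.2.2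
      · intro a ha
        rcases Finset.mem_filter.1 ha with ⟨has, hnfx⟩
        exact Finset.mem_filter.2 ⟨(h a has hnfx).1, (h a has hnfx).2.1⟩
      · intro a ha
        rcases Finset.mem_filter.1 ha with ⟨has, hnfx⟩
        exact (h a has hnfx).2.2.1
    simpa using hsum
  have := congrArg (fun k : ℕ => (k : ZMod 2)) hsplit
  push_cast at this
  rw [hz, add_zero] at this
  exact this.symm

lemma le_sum_of_mem {S : Finset ℕ} {x : ℕ} (hx : x ∈ S) : x ≤ ∑ y ∈ S, y :=
  Finset.single_le_sum (f := fun y => y) (fun _ _ => Nat.zero_le _) hx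

lemma card_le_sum {S : Finset ℕ} (h : 0 ∉ S) : S.card ≤ ∑ y ∈ S, y := by
  calc S.card = ∑ _y ∈ S, 1 := by simp
  _ ≤ ∑ y ∈ S, y := Finset.sum_le_sum (fun i hi => Nat.one_le_iff_ne_zero.2 (by rintro rfl; exact h hi))

lemma sum_image_inj {S : Finset ℕ} {f : ℕ → ℕ} (hf : ∀ x ∈ S, ∀ y ∈ S, f x = f y → x = y) :
    ∑ y ∈ S.image f, y = ∑ x ∈ S, f x :=
  Finset.sum_image hf

lemma sum_add_one (S : Finset ℕ) : ∑ x ∈ S.image (· + 1), x = (∑ x ∈ S, x) + S.card := by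
  rw [sum_image_inj (by intro x _ y _ h; omega)]
  rw [Finset.sum_add_distrib]; simp

lemma sum_sub_one {S : Finset ℕ} (h : 0 ∉ S) :
    (∑ x ∈ S.image (· - 1), x) + S.card = ∑ x ∈ S, x := by
  have hpos : ∀ x ∈ S, 1 ≤ x := fun x hx => Nat.one_le_iff_ne_zero.2 (by rintro rfl; exact h hx)
  rw [sum_image_inj (by intro x hx y hy hxy; have := hpos x hx; have := hpos y hy; omega)]
  have : ∑ x ∈ S, x = ∑ x ∈ S, ((x - 1) + 1) :=
    Finset.sum_congr rfl (fun x hx => by have := hpos x hx; omega)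
  rw [this, Finset.sum_add_distrib]; simp

lemma symmDiff_singleton_mem {A : Finset ℕ} {c : ℕ} (h : c ∈ A) : A ∆ {c} = A.erase c := by
  ext x; simp [Finset.mem_symmDiff, Finset.mem_erase]
  constructor
  · rintro (⟨h1, h2⟩ | ⟨rfl, h2⟩); exact ⟨h2, h1⟩; exact absurd h h2
  · rintro ⟨h1, h2⟩; exact Or.inl ⟨h2, h1⟩

lemma symmDiff_singleton_not_mem {A : Finset ℕ} {c : ℕ} (h : c ∉ A) : A ∆ {c} = insert c A := by
  ext x; simp [Finset.mem_symmDiff, Finset.mem_insert]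
  constructor
  · rintro (⟨h1, h2⟩ | ⟨rfl, h2⟩); exact Or.inr h1; exact Or.inl rfl
  · rintro (rfl | h1); exact Or.inr ⟨rfl, h⟩
    refine Or.inl ⟨h1, ?_⟩; rintro rfl; exact h h1

lemma symmDiff_cancel_pair (A B : Finset ℕ) (c : ℕ) : (A ∆ {c}) ∆ (B ∆ {c}) = A ∆ B := by
  ext x
  simp only [Finset.mem_symmDiff, Finset.mem_singleton]
  by_cases hx : x = c <;> tauto

lemma symmDiff_symmDiff_cancel (A : Finset ℕ) (c : ℕ) : (A ∆ {c}) ∆ {c} = A := by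
  ext x
  simp only [Finset.mem_symmDiff, Finset.mem_singleton]
  by_cases hx : x = c <;> tauto

lemma sum_symmDiff_mem {A : Finset ℕ} {c : ℕ} (h : c ∈ A) :
    (∑ x ∈ A ∆ {c}, x) + c = ∑ x ∈ A, x := by
  rw [symmDiff_singleton_mem h, Finset.sum_erase_add _ _ h]

lemma sum_symmDiff_not_mem {A : Finset ℕ} {c : ℕ} (h : c ∉ A) :
    (∑ x ∈ A ∆ {c}, x) = (∑ x ∈ A, x) + c := by
  rw [symmDiff_singleton_not_mem h, Finset.sum_insert h, add_comm]

lemma mem_symmDiff_singleton {A : Finset ℕ} {c x : ℕ} :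
    x ∈ A ∆ {c} ↔ (x ∈ A ∧ x ≠ c) ∨ (x = c ∧ x ∉ A) := by
  simp only [Finset.mem_symmDiff, Finset.mem_singleton]

/-! ### the counting sets -/

def zset (M : ℕ) : Finset (Finset ℕ × Finset ℕ) :=
  ((range (M+1)).powerset ×ˢ (range (M+1)).powerset).filter
    (fun p => (∀ x ∈ p.1, ¬ Even x) ∧ 0 ∉ p.2 ∧ (∑ x ∈ p.1, x) + (∑ x ∈ p.2, x) = M)

lemma mem_zset {M : ℕ} {p : Finset ℕ × Finset ℕ} :
    p ∈ zset M ↔ (∀ x ∈ p.1, ¬ Even x) ∧ 0 ∉ p.2 ∧ (∑ x ∈ p.1, x) + (∑ x ∈ p.2, x) = M := by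
  constructor
  · intro h; exact (Finset.mem_filter.1 h).2
  · intro h
    refine Finset.mem_filter.2 ⟨Finset.mem_product.2 ⟨?_, ?_⟩, h⟩
    · exact Finset.mem_powerset.2 (fun x hx => Finset.mem_range.2 (by
        have := le_sum_of_mem hx; omega))
    · exact Finset.mem_powerset.2 (fun x hx => Finset.mem_range.2 (by
        have := le_sum_of_mem hx; omega))

/-! ### zset parity -/

def mn (D : Finset ℕ) : ℕ := if h : D.Nonempty then D.min' h else 0

lemma mn_mem {D : Finset ℕ} (h : D.Nonempty) : mn D ∈ D := by
  rw [mn, dif_pos h]; exact D.min'_mem h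

def zfx (p : Finset ℕ × Finset ℕ) : Prop := p.1 = p.2.filter (fun x => ¬ Even x)

instance : DecidablePred zfx := fun p => by unfold zfx; infer_instance

def ztog (p : Finset ℕ × Finset ℕ) : Finset ℕ × Finset ℕ :=
  if (p.1 ∆ (p.2.filter (fun x => ¬ Even x))).Nonempty
  then (p.1 ∆ {mn (p.1 ∆ (p.2.filter (fun x => ¬ Even x)))},
        p.2 ∆ {mn (p.1 ∆ (p.2.filter (fun x => ¬ Even x)))})
  else p

lemma filter_odd_symmDiff (C : Finset ℕ) {c : ℕ} (hc : ¬ Even c) :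
    (C ∆ {c}).filter (fun x => ¬ Even x) = (C.filter (fun x => ¬ Even x)) ∆ {c} := by
  ext x
  simp only [Finset.mem_filter, mem_symmDiff_singleton]
  by_cases hx : x = c
  · subst hx; tauto
  · tauto

lemma ztog_ok {M : ℕ} (p : Finset ℕ × Finset ℕ) (hp : p ∈ zset M) (hnfx : ¬ zfx p) :
    ztog p ∈ zset M ∧ ¬ zfx (ztog p) ∧ ztog (ztog p) = p ∧ ztog p ≠ p := by
  obtain ⟨hodd, h0, hsum⟩ := mem_zset.1 hp
  set O := p.1 with hO
  set C := p.2 with hC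
  set F := C.filter (fun x => ¬ Even x) with hF
  have hDne : (O ∆ F).Nonempty := by
    rw [Finset.nonempty_iff_ne_empty]
    intro hemp
    exact hnfx (symmDiff_eq_bot.1 hemp)
  set c := mn (O ∆ F) with hc
  have hcD : c ∈ O ∆ F := mn_mem hDne
  have hcases : (c ∈ O ∧ c ∉ F) ∨ (c ∈ F ∧ c ∉ O) := by
    rcases Finset.mem_symmDiff.1 hcD with ⟨h1, h2⟩ | ⟨h1, h2⟩
    · exact Or.inl ⟨h1, h2⟩
    · exact Or.inr ⟨h1, h2⟩
  have hcodd : ¬ Even c := by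
    rcases hcases with ⟨h1, _⟩ | ⟨h1, _⟩
    · exact hodd c h1
    · exact (Finset.mem_filter.1 h1).2
  have hc0 : c ≠ 0 := by intro h; rw [h] at hcodd; exact hcodd Even.zero
  have hzt : ztog p = (O ∆ {c}, C ∆ {c}) := by
    rw [ztog, if_pos hDne]
  have hcCF : c ∈ C ↔ c ∈ F := by
    constructor
    · intro h; exact Finset.mem_filter.2 ⟨h, hcodd⟩
    · intro h; exact (Finset.mem_filter.1 h).1
  have hsum' : (∑ x ∈ O ∆ {c}, x) + (∑ x ∈ C ∆ {c}, x) = M := by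
    rcases hcases with ⟨h1, h2⟩ | ⟨h1, h2⟩
    · have e1 := sum_symmDiff_mem h1
      have e2 := sum_symmDiff_not_mem (fun hcc => h2 (hcCF.1 hcc))
      omega
    · have e1 := sum_symmDiff_not_mem h2
      have e2 := sum_symmDiff_mem (hcCF.2 h1)
      omega
  have hmem' : (O ∆ {c}, C ∆ {c}) ∈ zset M := by
    refine mem_zset.2 ⟨?_, ?_, hsum'⟩
    · intro x hx
      rcases mem_symmDiff_singleton.1 hx with ⟨h1, _⟩ | ⟨rfl, _⟩
      · exact hodd x h1
      · exact hcodd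
    · intro hx
      rcases mem_symmDiff_singleton.1 hx with ⟨h1, _⟩ | ⟨h1, _⟩
      · exact h0 h1
      · exact hc0 h1.symm
  have hinv : (O ∆ {c}) ∆ ((C ∆ {c}).filter (fun x => ¬ Even x)) = O ∆ F := by
    rw [filter_odd_symmDiff C hcodd, ← hF, symmDiff_cancel_pair]
  have hnfx' : ¬ zfx (O ∆ {c}, C ∆ {c}) := by
    intro hfix
    have hbot : (O ∆ {c}) ∆ ((C ∆ {c}).filter (fun x => ¬ Even x)) = ⊥ := by
      rw [show (O ∆ {c}) = ((C ∆ {c}).filter (fun x => ¬ Even x)) from hfix]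
      exact symmDiff_self _
    rw [hinv] at hbot
    exact Finset.nonempty_iff_ne_empty.1 hDne hbot
  refine ⟨hzt ▸ hmem', hzt ▸ hnfx', ?_, ?_⟩
  · rw [hzt, ztog]
    have hne2 : ((O ∆ {c}) ∆ ((C ∆ {c}).filter (fun x => ¬ Even x))).Nonempty := by
      rw [hinv]; exact hDne
    rw [if_pos hne2]
    have hmneq : mn ((O ∆ {c}) ∆ (((C ∆ {c})).filter (fun x => ¬ Even x))) = c := by
      rw [hinv]
    simp only [hmneq]
    simp only [symmDiff_symmDiff_cancel]
    rfl
  · rw [hzt]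
    intro heq
    have h1 : O ∆ {c} = O := congrArg Prod.fst heq
    rcases hcases with ⟨hm, _⟩ | ⟨_, hm⟩
    · rw [symmDiff_singleton_mem hm] at h1
      have := Finset.notMem_erase c O
      rw [h1] at this
      exact this hm
    · rw [symmDiff_singleton_not_mem hm] at h1
      exact hm (h1 ▸ Finset.mem_insert_self c O)


def zi (p : Finset ℕ × Finset ℕ) : Finset ℕ × Finset ℕ :=
  (p.1, (p.2.filter (fun x => Even x)).image (fun x => x / 2))

def zj (q : Finset ℕ × Finset ℕ) : Finset ℕ × Finset ℕ :=
  (q.1, q.1 ∪ q.2.image (fun x => 2 * x))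

lemma zfix_card (K : ℕ) : (((zset (2*K)).filter zfx).card) = (zset K).card := by
  refine Finset.card_nbij' zi zj ?_ ?_ ?_ ?_
  · intro p hp
    obtain ⟨hpz, hfx⟩ := Finset.mem_filter.1 hp
    obtain ⟨hodd, h0, hsum⟩ := mem_zset.1 hpz
    have hfx' : p.1 = p.2.filter (fun x => ¬ Even x) := hfx
    refine mem_zset.2 ⟨hodd, ?_, ?_⟩
    · intro hmem
      obtain ⟨x, hx, hx0⟩ := Finset.mem_image.1 hmem
      obtain ⟨hxC, hxE⟩ := Finset.mem_filter.1 hx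
      have : x = 0 := by
        rcases hxE with ⟨r, rfl⟩
        omega
      exact h0 (this ▸ hxC)
    · have himg : ∑ y ∈ (p.2.filter (fun x => Even x)).image (fun x => x / 2), y
          = ∑ x ∈ p.2.filter (fun x => Even x), x / 2 := by
        refine sum_image_inj ?_
        intro x hx y hy hxy
        have hex := (Finset.mem_filter.1 hx).2
        have hey := (Finset.mem_filter.1 hy).2
        rw [Nat.even_iff] at hex hey
        omega
      have hsplit := Finset.sum_filter_add_sum_filter_not p.2 (fun x => Even x) (fun x => x)
      have hdouble : ∑ x ∈ p.2.filter (fun x => Even x), x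
          = 2 * ∑ x ∈ p.2.filter (fun x => Even x), x / 2 := by
        rw [Finset.mul_sum]
        refine Finset.sum_congr rfl ?_
        intro x hx
        have hex := (Finset.mem_filter.1 hx).2
        rw [Nat.even_iff] at hex
        omega
      have hOsum : ∑ x ∈ p.2.filter (fun x => ¬ Even x), x = ∑ x ∈ p.1, x := by
        rw [← hfx']
      simp only [zi]
      rw [himg]
      omega
  · intro q hq
    obtain ⟨hodd, h0, hsum⟩ := mem_zset.1 hq
    have hdisj : Disjoint q.1 (q.2.image (fun x => 2 * x)) := by
      rw [Finset.disjoint_left]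
      intro x hx hx2
      obtain ⟨y, hy, rfl⟩ := Finset.mem_image.1 hx2
      exact hodd _ hx ⟨y, by ring⟩
    have himg : ∑ y ∈ q.2.image (fun x => 2 * x), y = 2 * ∑ x ∈ q.2, x := by
      rw [sum_image_inj (by intro x _ y _ h; omega), Finset.mul_sum]
    refine Finset.mem_filter.2 ⟨mem_zset.2 ⟨hodd, ?_, ?_⟩, ?_⟩
    · intro hmem
      rcases Finset.mem_union.1 hmem with h | h
      · exact hodd 0 h Even.zero
      · obtain ⟨y, hy, hy0⟩ := Finset.mem_image.1 h
        have : y = 0 := by omega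
        exact h0 (this ▸ hy)
    · simp only [zj]
      rw [Finset.sum_union hdisj, himg]
      omega
    · show (zj q).1 = (zj q).2.filter (fun x => ¬ Even x)
      simp only [zj]
      ext x
      simp only [Finset.mem_filter, Finset.mem_union, Finset.mem_image]
      constructor
      · intro hx
        exact ⟨Or.inl hx, hodd x hx⟩
      · rintro ⟨hx | ⟨y, hy, rfl⟩, hne⟩
        · exact hx
        · exact absurd ⟨y, by ring⟩ hne
  · intro p hp
    obtain ⟨hpz, hfx⟩ := Finset.mem_filter.1 hp
    obtain ⟨hodd, h0, hsum⟩ := mem_zset.1 hpz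
    have hfx' : p.1 = p.2.filter (fun x => ¬ Even x) := hfx
    simp only [zi, zj, Finset.image_image]
    refine Prod.ext rfl ?_
    show p.1 ∪ (p.2.filter (fun x => Even x)).image ((fun x => 2 * x) ∘ (fun x => x / 2)) = p.2
    have himg : (p.2.filter (fun x => Even x)).image ((fun x => 2 * x) ∘ (fun x => x / 2))
        = p.2.filter (fun x => Even x) := by
      have : ∀ x ∈ p.2.filter (fun x => Even x), ((fun x => 2 * x) ∘ (fun x => x / 2)) x = id x := by
        intro x hx
        have hex := (Finset.mem_filter.1 hx).2
        rw [Nat.even_iff] at hex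
        simp only [Function.comp, id]
        omega
      rw [Finset.image_congr this, Finset.image_id]
    rw [himg, hfx']
    rw [Finset.union_comm]
    exact Finset.filter_union_filter_not_eq _ _
  · intro q hq
    obtain ⟨hodd, h0, hsum⟩ := mem_zset.1 hq
    simp only [zi, zj]
    refine Prod.ext rfl ?_
    show ((q.1 ∪ q.2.image (fun x => 2 * x)).filter (fun x => Even x)).image (fun x => x / 2) = q.2
    have hfe : (q.1 ∪ q.2.image (fun x => 2 * x)).filter (fun x => Even x)
        = q.2.image (fun x => 2 * x) := by
      ext x
      simp only [Finset.mem_filter, Finset.mem_union, Finset.mem_image]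
      constructor
      · rintro ⟨hx | hx, he⟩
        · exact absurd he (hodd x hx)
        · exact hx
      · rintro ⟨y, hy, rfl⟩
        exact ⟨Or.inr ⟨y, hy, rfl⟩, ⟨y, by ring⟩⟩
    rw [hfe, Finset.image_image]
    have : ∀ x ∈ q.2, ((fun x => x / 2) ∘ (fun x => 2 * x)) x = id x := by
      intro x _; simp only [Function.comp, id]; omega
    rw [Finset.image_congr this, Finset.image_id]

lemma zset_parity : ∀ M : ℕ, ((zset M).card : ZMod 2) = if M = 0 then 1 else 0 := by
  intro M
  induction M using Nat.strong_induction_on with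
  | _ M ih =>
  by_cases hM0 : M = 0
  · subst hM0
    rw [if_pos rfl]
    norm_num [show (zset 0).card = 1 from by decide]
  · rw [if_neg hM0]
    have base := parity_invol (zset M) zfx ztog (fun p hp h => ztog_ok p hp h)
    rcases Nat.even_or_odd M with he | ho
    · obtain ⟨K, hK⟩ := he
      have hK' : M = 2 * K := by omega
      subst hK'
      rw [base, zfix_card K]
      have : K < 2 * K := by omega
      rw [ih K this, if_neg (by omega)]
    · rw [base]
      have : (zset M).filter zfx = ∅ := by
        rw [Finset.filter_eq_empty_iff]
        intro p hp hfx
        obtain ⟨hodd, h0, hsum⟩ := mem_zset.1 hp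
        have hfx' : p.1 = p.2.filter (fun x => ¬ Even x) := hfx
        have hsplit := Finset.sum_filter_add_sum_filter_not p.2 (fun x => Even x) (fun x => x)
        have hdvd : 2 ∣ ∑ x ∈ p.2.filter (fun x => Even x), x := by
          refine Finset.dvd_sum ?_
          intro x hx
          have := (Finset.mem_filter.1 hx).2
          exact this.two_dvd
        have hOsum : ∑ x ∈ p.2.filter (fun x => ¬ Even x), x = ∑ x ∈ p.1, x := by rw [← hfx']
        rw [Nat.odd_iff] at ho
        omega
      rw [this]
      simp


/-! ### qset : triples with charge -/

def qset (m : ℤ) (M : ℕ) : Finset (Finset ℕ × Finset ℕ × Finset ℕ) :=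
  ((range (M+1)).powerset ×ˢ ((range (M+1)).powerset ×ˢ (range (M+1)).powerset)).filter
    (fun p => 0 ∉ p.1 ∧ 0 ∉ p.2.2 ∧ (p.1.card : ℤ) = p.2.1.card + m ∧
      (∑ x ∈ p.1, x) + (∑ x ∈ p.2.1, x) + (∑ x ∈ p.2.2, x) = M)

lemma mem_qset {m : ℤ} {M : ℕ} {p : Finset ℕ × Finset ℕ × Finset ℕ} :
    p ∈ qset m M ↔ 0 ∉ p.1 ∧ 0 ∉ p.2.2 ∧ (p.1.card : ℤ) = p.2.1.card + m ∧
      (∑ x ∈ p.1, x) + (∑ x ∈ p.2.1, x) + (∑ x ∈ p.2.2, x) = M := by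
  constructor
  · intro h; exact (Finset.mem_filter.1 h).2
  · intro h
    refine Finset.mem_filter.2 ⟨Finset.mem_product.2 ⟨?_, Finset.mem_product.2 ⟨?_, ?_⟩⟩, h⟩ <;>
    · refine Finset.mem_powerset.2 (fun x hx => Finset.mem_range.2 ?_)
      have := le_sum_of_mem hx; omega

/-- conjugation (transpose) map on triples -/
def qtog (p : Finset ℕ × Finset ℕ × Finset ℕ) : Finset ℕ × Finset ℕ × Finset ℕ :=
  (p.2.1.image (· + 1), p.1.image (· - 1), p.2.2)

lemma image_sub_add {A : Finset ℕ} (h : 0 ∉ A) : (A.image (· - 1)).image (· + 1) = A := by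
  rw [Finset.image_image]
  have : ∀ x ∈ A, ((fun x => x + 1) ∘ (fun x => x - 1)) x = id x := by
    intro x hx
    have : x ≠ 0 := by rintro rfl; exact h hx
    simp only [Function.comp, id]; omega
  rw [Finset.image_congr this, Finset.image_id]

lemma image_add_sub (A : Finset ℕ) : (A.image (· + 1)).image (· - 1) = A := by
  rw [Finset.image_image]
  have : ∀ x ∈ A, ((fun x => x - 1) ∘ (fun x => x + 1)) x = id x := by
    intro x _; simp only [Function.comp, id]; omega
  rw [Finset.image_congr this, Finset.image_id]

lemma card_image_add (A : Finset ℕ) : (A.image (· + 1)).card = A.card :=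
  Finset.card_image_of_injective _ (fun x y h => by omega)

lemma card_image_sub {A : Finset ℕ} (h : 0 ∉ A) : (A.image (· - 1)).card = A.card := by
  rw [Finset.card_image_of_injOn]
  intro x hx y hy hxy
  have hx0 : x ≠ 0 := by rintro rfl; exact h hx
  have hy0 : y ≠ 0 := by rintro rfl; exact h hy
  have hxy' : x - 1 = y - 1 := hxy
  omega

lemma zero_not_mem_image_add (A : Finset ℕ) : 0 ∉ A.image (· + 1) := by
  intro h
  obtain ⟨x, _, hx⟩ := Finset.mem_image.1 h
  omega

lemma qtog_qtog {p : Finset ℕ × Finset ℕ × Finset ℕ} (h : 0 ∉ p.1) : qtog (qtog p) = p := by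
  simp only [qtog]
  refine Prod.ext ?_ (Prod.ext ?_ rfl)
  · exact image_sub_add h
  · exact image_add_sub _

/-- conjugation sends `qset m M` to `qset (-m) (M - m)`; we state the two directions we need. -/
lemma qtog_mem_neg {k M : ℕ} {p : Finset ℕ × Finset ℕ × Finset ℕ}
    (hp : p ∈ qset (-(k:ℤ)) M) : qtog p ∈ qset k (M + k) := by
  obtain ⟨h1, h2, hch, hsum⟩ := mem_qset.1 hp
  have hcard : p.1.card + k = p.2.1.card := by
    have := hch; omega
  have hBsum := sum_add_one p.2.1
  have hAsum := sum_sub_one h1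
  have hAle : p.1.card ≤ ∑ x ∈ p.1, x := card_le_sum h1
  refine mem_qset.2 ⟨zero_not_mem_image_add _, h2, ?_, ?_⟩
  · simp only [qtog, card_image_add, card_image_sub h1]
    omega
  · simp only [qtog]
    rw [hBsum]
    omega

lemma qtog_mem_pos {k M : ℕ} {p : Finset ℕ × Finset ℕ × Finset ℕ}
    (hp : p ∈ qset (k:ℤ) (M + k)) : qtog p ∈ qset (-(k:ℤ)) M := by
  obtain ⟨h1, h2, hch, hsum⟩ := mem_qset.1 hp
  have hcard : p.2.1.card + k = p.1.card := by omega
  have hBsum := sum_add_one p.2.1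
  have hAsum := sum_sub_one h1
  have hAle : p.1.card ≤ ∑ x ∈ p.1, x := card_le_sum h1
  refine mem_qset.2 ⟨zero_not_mem_image_add _, h2, ?_, ?_⟩
  · simp only [qtog, card_image_add, card_image_sub h1]
    omega
  · simp only [qtog]
    rw [hBsum]
    omega

lemma qset_neg_card (k M : ℕ) : (qset (-(k:ℤ)) M).card = (qset k (M + k)).card := by
  refine Finset.card_nbij' qtog qtog (fun p hp => qtog_mem_neg hp) (fun q hq => qtog_mem_pos hq)
    ?_ ?_
  · intro p hp; exact qtog_qtog (mem_qset.1 hp).1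
  · intro q hq; exact qtog_qtog (mem_qset.1 hq).1


/-! ### step bijection for positive charge -/

def qstep (p : Finset ℕ × Finset ℕ × Finset ℕ) : Finset ℕ × Finset ℕ × Finset ℕ :=
  if 1 ∈ p.1 then ((p.1.erase 1).image (· - 1), p.2.1.image (· + 1), p.2.2)
  else (p.1.image (· - 1), insert 0 (p.2.1.image (· + 1)), p.2.2)

def qunstep (q : Finset ℕ × Finset ℕ × Finset ℕ) : Finset ℕ × Finset ℕ × Finset ℕ :=
  if 0 ∈ q.2.1 then (q.1.image (· + 1), (q.2.1.erase 0).image (· - 1), q.2.2)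
  else (insert 1 (q.1.image (· + 1)), q.2.1.image (· - 1), q.2.2)

lemma one_not_mem_image_add {A : Finset ℕ} (h : 0 ∉ A) : 1 ∉ A.image (· + 1) := by
  intro hmem
  obtain ⟨x, hx, hx1⟩ := Finset.mem_image.1 hmem
  have : x = 0 := by omega
  exact h (this ▸ hx)

lemma qset_step_card (n M : ℕ) (h : n + 1 ≤ M) :
    (qset ((n:ℤ)+1) M).card = (qset (n:ℤ) (M - (n+1))).card := by
  refine Finset.card_nbij' qstep qunstep ?_ ?_ ?_ ?_
  · intro p hp
    obtain ⟨h1, h2, hch, hsum⟩ := mem_qset.1 hp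
    have hAB : p.1.card = p.2.1.card + (n+1) := by omega
    have hBsum := sum_add_one p.2.1
    have hAle : p.1.card ≤ ∑ x ∈ p.1, x := card_le_sum h1
    by_cases hone : 1 ∈ p.1
    · have hera : (∑ x ∈ p.1.erase 1, x) + 1 = ∑ x ∈ p.1, x := Finset.sum_erase_add _ _ hone
      have h0e : 0 ∉ p.1.erase 1 := fun hx => h1 (Finset.mem_of_mem_erase hx)
      have hAsum := sum_sub_one h0e
      have hcard : (p.1.erase 1).card = p.1.card - 1 := Finset.card_erase_of_mem hone
      have hcard1 : 1 ≤ p.1.card := Finset.card_pos.2 ⟨1, hone⟩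
      simp only [qstep, if_pos hone]
      refine mem_qset.2 ⟨?_, h2, ?_, ?_⟩
      · intro hmem
        obtain ⟨x, hx, hx0⟩ := Finset.mem_image.1 hmem
        have hne1 : x ≠ 1 := Finset.ne_of_mem_erase hx
        have hne0 : x ≠ 0 := fun hh => h0e (hh ▸ hx)
        have : x - 1 = 0 := hx0
        omega
      · show ((((p.1.erase 1).image (· - 1)).card : ℤ)) = ((p.2.1.image (· + 1)).card : ℤ) + n
        rw [card_image_add, card_image_sub h0e, hcard]
        push_cast
        omega
      · show (∑ x ∈ (p.1.erase 1).image (· - 1), x) + (∑ x ∈ p.2.1.image (· + 1), x)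
            + (∑ x ∈ p.2.2, x) = M - (n+1)
        rw [hBsum]
        omega
    · have hAsum := sum_sub_one h1
      simp only [qstep, if_neg hone]
      refine mem_qset.2 ⟨?_, h2, ?_, ?_⟩
      · intro hmem
        obtain ⟨x, hx, hx0⟩ := Finset.mem_image.1 hmem
        have hne1 : x ≠ 1 := fun hh => hone (hh ▸ hx)
        have hne0 : x ≠ 0 := fun hh => h1 (hh ▸ hx)
        have : x - 1 = 0 := hx0
        omega
      · show (((p.1.image (· - 1)).card : ℤ))
            = (((insert 0 (p.2.1.image (· + 1))).card : ℤ)) + n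
        rw [card_image_sub h1, Finset.card_insert_of_notMem (zero_not_mem_image_add _),
          card_image_add]
        push_cast
        omega
      · show (∑ x ∈ p.1.image (· - 1), x) + (∑ x ∈ insert 0 (p.2.1.image (· + 1)), x)
            + (∑ x ∈ p.2.2, x) = M - (n+1)
        rw [Finset.sum_insert (zero_not_mem_image_add _), hBsum]
        omega
  · intro q hq
    obtain ⟨h1, h2, hch, hsum⟩ := mem_qset.1 hq
    have hBsum' := sum_add_one q.1
    by_cases hzero : 0 ∈ q.2.1
    · have hera : (∑ x ∈ q.2.1.erase 0, x) + 0 = ∑ x ∈ q.2.1, x := Finset.sum_erase_add _ _ hzero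
      have h0e : 0 ∉ q.2.1.erase 0 := Finset.notMem_erase _ _
      have hBsub := sum_sub_one h0e
      have hcard : (q.2.1.erase 0).card = q.2.1.card - 1 := Finset.card_erase_of_mem hzero
      have hcard1 : 1 ≤ q.2.1.card := Finset.card_pos.2 ⟨0, hzero⟩
      have hble : (q.2.1.erase 0).card ≤ ∑ x ∈ q.2.1.erase 0, x := card_le_sum h0e
      simp only [qunstep, if_pos hzero]
      refine mem_qset.2 ⟨zero_not_mem_image_add _, h2, ?_, ?_⟩
      · show (((q.1.image (· + 1)).card : ℤ))
            = ((((q.2.1.erase 0).image (· - 1)).card : ℤ)) + ((n:ℤ)+1)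
        rw [card_image_add, card_image_sub h0e, hcard]
        push_cast [hcard1]
        omega
      · show (∑ x ∈ q.1.image (· + 1), x) + (∑ x ∈ (q.2.1.erase 0).image (· - 1), x)
            + (∑ x ∈ q.2.2, x) = M
        rw [hBsum']
        omega
    · have hBsub := sum_sub_one hzero
      have hble : q.2.1.card ≤ ∑ x ∈ q.2.1, x := card_le_sum hzero
      simp only [qunstep, if_neg hzero]
      refine mem_qset.2 ⟨?_, h2, ?_, ?_⟩
      · intro hmem
        rcases Finset.mem_insert.1 hmem with hh | hh
        · omega
        · exact zero_not_mem_image_add _ hh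
      · show (((insert 1 (q.1.image (· + 1))).card : ℤ))
            = (((q.2.1.image (· - 1)).card : ℤ)) + ((n:ℤ)+1)
        rw [Finset.card_insert_of_notMem (one_not_mem_image_add h1),
          card_image_add, card_image_sub hzero]
        push_cast
        omega
      · show (∑ x ∈ insert 1 (q.1.image (· + 1)), x) + (∑ x ∈ q.2.1.image (· - 1), x)
            + (∑ x ∈ q.2.2, x) = M
        rw [Finset.sum_insert (one_not_mem_image_add h1), hBsum']
        omega
  · intro p hp
    obtain ⟨h1, h2, hch, hsum⟩ := mem_qset.1 hp
    by_cases hone : 1 ∈ p.1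
    · simp only [qstep, if_pos hone, qunstep, if_neg (zero_not_mem_image_add p.2.1)]
      refine Prod.ext ?_ (Prod.ext ?_ rfl)
      · show insert 1 (((p.1.erase 1).image (· - 1)).image (· + 1)) = p.1
        rw [image_sub_add (fun hx => h1 (Finset.mem_of_mem_erase hx))]
        exact Finset.insert_erase hone
      · exact image_add_sub _
    · simp only [qstep, if_neg hone, qunstep,
        if_pos (Finset.mem_insert_self 0 (p.2.1.image (· + 1)))]
      refine Prod.ext ?_ (Prod.ext ?_ rfl)
      · exact image_sub_add h1
      · show ((insert 0 (p.2.1.image (· + 1))).erase 0).image (· - 1) = p.2.1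
        rw [Finset.erase_insert (zero_not_mem_image_add _)]
        exact image_add_sub _
  · intro q hq
    obtain ⟨h1, h2, hch, hsum⟩ := mem_qset.1 hq
    by_cases hzero : 0 ∈ q.2.1
    · have h1i : 1 ∈ q.1.image (· + 1) ∨ 1 ∉ q.1.image (· + 1) := em _
      simp only [qunstep, if_pos hzero, qstep, if_neg (one_not_mem_image_add h1)]
      refine Prod.ext ?_ (Prod.ext ?_ rfl)
      · exact image_add_sub _
      · show insert 0 (((q.2.1.erase 0).image (· - 1)).image (· + 1)) = q.2.1
        rw [image_sub_add (Finset.notMem_erase _ _)]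
        exact Finset.insert_erase hzero
    · simp only [qunstep, if_neg hzero, qstep,
        if_pos (Finset.mem_insert_self 1 (q.1.image (· + 1)))]
      refine Prod.ext ?_ (Prod.ext ?_ rfl)
      · show ((insert 1 (q.1.image (· + 1))).erase 1).image (· - 1) = q.1
        rw [Finset.erase_insert (one_not_mem_image_add h1)]
        exact image_add_sub _
      · exact image_sub_add hzero


/-! ### charge-0 parity -/

def q0fx (p : Finset ℕ × Finset ℕ × Finset ℕ) : Prop := p.1 = p.2.1.image (· + 1)

instance : DecidablePred q0fx := fun p => by unfold q0fx; infer_instance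

lemma qtog_invol_zero {M : ℕ} (p : Finset ℕ × Finset ℕ × Finset ℕ)
    (hp : p ∈ qset 0 M) (hnfx : ¬ q0fx p) :
    qtog p ∈ qset 0 M ∧ ¬ q0fx (qtog p) ∧ qtog (qtog p) = p ∧ qtog p ≠ p := by
  obtain ⟨h1, h2, hch, hsum⟩ := mem_qset.1 hp
  have hmem : qtog p ∈ qset 0 M := by
    have h0 : p ∈ qset (-(0:ℤ)) M := by simpa using hp
    have := qtog_mem_neg (k := 0) (M := M) h0
    simpa using this
  have hq0 : ¬ q0fx (qtog p) := by
    intro hfix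
    apply hnfx
    have : p.2.1.image (· + 1) = (p.1.image (· - 1)).image (· + 1) := hfix
    rw [image_sub_add h1] at this
    exact this.symm
  refine ⟨hmem, hq0, qtog_qtog h1, ?_⟩
  intro heq
  apply hnfx
  have : p.2.1.image (· + 1) = p.1 := congrArg Prod.fst heq
  exact this.symm

lemma sum_double_sub {A : Finset ℕ} (h : 0 ∉ A) :
    (∑ x ∈ A.image (fun a => 2*a - 1), x) + A.card = 2 * ∑ x ∈ A, x := by
  have hpos : ∀ x ∈ A, 1 ≤ x := fun x hx => Nat.one_le_iff_ne_zero.2 (by rintro rfl; exact h hx)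
  rw [sum_image_inj (by intro x hx y hy hxy; have := hpos x hx; have := hpos y hy; omega)]
  have : ∑ x ∈ A, (2*x - 1) + A.card = ∑ x ∈ A, ((2*x - 1) + 1) := by
    rw [Finset.sum_add_distrib]; simp
  rw [this]
  rw [Finset.mul_sum]
  refine Finset.sum_congr rfl ?_
  intro x hx
  have := hpos x hx
  omega

lemma card_image_double_sub {A : Finset ℕ} (h : 0 ∉ A) :
    (A.image (fun a => 2*a - 1)).card = A.card := by
  rw [Finset.card_image_of_injOn]
  intro x hx y hy hxy
  have hx1 : 1 ≤ x := Nat.one_le_iff_ne_zero.2 (by rintro rfl; exact h hx)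
  have hy1 : 1 ≤ y := Nat.one_le_iff_ne_zero.2 (by rintro rfl; exact h hy)
  have : 2*x - 1 = 2*y - 1 := hxy
  omega

def q0i (p : Finset ℕ × Finset ℕ × Finset ℕ) : Finset ℕ × Finset ℕ :=
  (p.1.image (fun a => 2*a - 1), p.2.2)

def q0j (q : Finset ℕ × Finset ℕ) : Finset ℕ × Finset ℕ × Finset ℕ :=
  (q.1.image (fun x => (x+1)/2), ((q.1.image (fun x => (x+1)/2)).image (· - 1)), q.2)

lemma q0fix_card (M : ℕ) : ((qset 0 M).filter q0fx).card = (zset M).card := by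
  refine Finset.card_nbij' q0i q0j ?_ ?_ ?_ ?_
  · intro p hp
    obtain ⟨hpz, hfx⟩ := Finset.mem_filter.1 hp
    obtain ⟨h1, h2, hch, hsum⟩ := mem_qset.1 hpz
    have hfx' : p.1 = p.2.1.image (· + 1) := hfx
    have hA : (∑ x ∈ p.1, x) = (∑ x ∈ p.2.1, x) + p.2.1.card := by
      rw [hfx']; exact sum_add_one _
    have hAc : p.1.card = p.2.1.card := by rw [hfx', card_image_add]
    have hds := sum_double_sub h1
    refine mem_zset.2 ⟨?_, h2, ?_⟩
    · intro x hx
      obtain ⟨y, hy, rfl⟩ := Finset.mem_image.1 hx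
      have hy1 : 1 ≤ y := Nat.one_le_iff_ne_zero.2 (by rintro rfl; exact h1 hy)
      rw [Nat.even_iff]
      omega
    · show (∑ x ∈ p.1.image (fun a => 2*a - 1), x) + (∑ x ∈ p.2.2, x) = M
      omega
  · intro q hq
    obtain ⟨hodd, h0, hsum⟩ := mem_zset.1 hq
    have hoddm : ∀ x ∈ q.1, x % 2 = 1 := by
      intro x hx
      have := hodd x hx
      rw [Nat.even_iff] at this
      omega
    have hinj : ∀ x ∈ q.1, ∀ y ∈ q.1, (x+1)/2 = (y+1)/2 → x = y := by
      intro x hx y hy hxy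
      have := hoddm x hx; have := hoddm y hy
      omega
    have hAsum : ∑ x ∈ q.1.image (fun x => (x+1)/2), x = ∑ x ∈ q.1, (x+1)/2 :=
      sum_image_inj hinj
    have h0A : 0 ∉ q.1.image (fun x => (x+1)/2) := by
      intro hmem
      obtain ⟨x, hx, hx0⟩ := Finset.mem_image.1 hmem
      have := hoddm x hx
      omega
    have hAc : (q.1.image (fun x => (x+1)/2)).card = q.1.card :=
      Finset.card_image_of_injOn hinj
    have hdub : 2 * (∑ x ∈ q.1, (x+1)/2) = (∑ x ∈ q.1, x) + q.1.card := by
      rw [Finset.mul_sum]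
      have : ∑ x ∈ q.1, x + q.1.card = ∑ x ∈ q.1, (x + 1) := by
        rw [Finset.sum_add_distrib]; simp
      rw [this]
      refine Finset.sum_congr rfl ?_
      intro x hx
      have := hoddm x hx
      omega
    have hBsub := sum_sub_one h0A
    have hBc : ((q.1.image (fun x => (x+1)/2)).image (· - 1)).card
        = (q.1.image (fun x => (x+1)/2)).card := card_image_sub h0A
    refine Finset.mem_filter.2 ⟨mem_qset.2 ⟨h0A, h0, ?_, ?_⟩, ?_⟩
    · show ((q0j q).1.card : ℤ) = ((q0j q).2.1.card : ℤ) + 0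
      simp only [q0j]
      rw [hBc]
      omega
    · show (∑ x ∈ (q0j q).1, x) + (∑ x ∈ (q0j q).2.1, x) + (∑ x ∈ (q0j q).2.2, x) = M
      simp only [q0j]
      rw [hAsum] at *
      omega
    · show (q0j q).1 = (q0j q).2.1.image (· + 1)
      simp only [q0j]
      rw [image_sub_add h0A]
  · intro p hp
    obtain ⟨hpz, hfx⟩ := Finset.mem_filter.1 hp
    obtain ⟨h1, h2, hch, hsum⟩ := mem_qset.1 hpz
    have hfx' : p.1 = p.2.1.image (· + 1) := hfx
    have hAfst : (p.1.image (fun a => 2*a - 1)).image (fun x => (x+1)/2) = p.1 := by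
      rw [Finset.image_image]
      have : ∀ x ∈ p.1, ((fun x => (x+1)/2) ∘ (fun a => 2*a - 1)) x = id x := by
        intro x hx
        have hx1 : 1 ≤ x := Nat.one_le_iff_ne_zero.2 (by rintro rfl; exact h1 hx)
        simp only [Function.comp, id]
        omega
      rw [Finset.image_congr this, Finset.image_id]
    simp only [q0i, q0j]
    refine Prod.ext ?_ (Prod.ext ?_ rfl)
    · exact hAfst
    · show ((p.1.image (fun a => 2*a - 1)).image (fun x => (x+1)/2)).image (· - 1) = p.2.1
      rw [hAfst, hfx', image_add_sub]
  · intro q hq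
    obtain ⟨hodd, h0, hsum⟩ := mem_zset.1 hq
    have hoddm : ∀ x ∈ q.1, x % 2 = 1 := by
      intro x hx
      have := hodd x hx
      rw [Nat.even_iff] at this
      omega
    simp only [q0i, q0j]
    refine Prod.ext ?_ rfl
    show (q.1.image (fun x => (x+1)/2)).image (fun a => 2*a - 1) = q.1
    rw [Finset.image_image]
    have : ∀ x ∈ q.1, ((fun a => 2*a - 1) ∘ (fun x => (x+1)/2)) x = id x := by
      intro x hx
      have := hoddm x hx
      simp only [Function.comp, id]
      omega
    rw [Finset.image_congr this, Finset.image_id]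

lemma qset_zero_parity (M : ℕ) : (((qset 0 M).card : ZMod 2)) = if M = 0 then 1 else 0 := by
  rw [parity_invol (qset 0 M) q0fx qtog (fun p hp h => qtog_invol_zero p hp h)]
  rw [q0fix_card, zset_parity]


lemma qset_pos_empty (n M : ℕ) (h : M < n + 1) : qset ((n:ℤ)+1) M = ∅ := by
  rw [Finset.eq_empty_iff_forall_notMem]
  intro p hp
  obtain ⟨h1, h2, hch, hsum⟩ := mem_qset.1 hp
  have hA : p.1.card = p.2.1.card + (n+1) := by omega
  have hle : p.1.card ≤ ∑ x ∈ p.1, x := card_le_sum h1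
  omega

lemma qset_nat_parity : ∀ n : ℕ, ∀ M : ℕ,
    ((qset (n:ℤ) M).card : ZMod 2) = if 2*M = n*(n+1) then 1 else 0 := by
  intro n
  induction n with
  | zero =>
    intro M
    rw [show ((0:ℕ):ℤ) = 0 from rfl, qset_zero_parity]
    congr 1
    simp only [eq_iff_iff]
    omega
  | succ n ih =>
    intro M
    by_cases h : n + 1 ≤ M
    · have hstep := qset_step_card n M h
      rw [show ((n+1:ℕ):ℤ) = (n:ℤ)+1 from by push_cast; ring, hstep, ih]
      have hx : (n+1)*(n+1+1) = n*(n+1) + 2*(n+1) := by ring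
      congr 1
      simp only [eq_iff_iff]
      omega
    · rw [show ((n+1:ℕ):ℤ) = (n:ℤ)+1 from by push_cast; ring,
        qset_pos_empty n M (by omega)]
      have hx : (n+1)*(n+1+1) = n*(n+1) + 2*(n+1) := by ring
      rw [if_neg (by omega)]
      simp

lemma qset_parity (m : ℤ) (M : ℕ) :
    ((qset m M).card : ZMod 2) = if 2*(M:ℤ) = m*(m+1) then 1 else 0 := by
  obtain ⟨n, rfl | rfl⟩ := m.eq_nat_or_neg
  · rw [qset_nat_parity n M]
    have hiff : (2*(M:ℤ) = (n:ℤ)*((n:ℤ)+1)) ↔ (2*M = n*(n+1)) := by exact_mod_cast Iff.rfl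
    simp only [hiff]
  · rw [qset_neg_card n M, qset_nat_parity n (M+n)]
    have e1 : (-(n:ℤ))*(-(n:ℤ)+1) = (n:ℤ)*((n:ℤ)+1) - 2*(n:ℤ) := by ring
    have hiff : (2*(M+n) = n*(n+1)) ↔ (2*(M:ℤ) = (-(n:ℤ))*(-(n:ℤ)+1)) := by
      constructor
      · intro hh
        have hz : 2*((M:ℤ)+(n:ℤ)) = (n:ℤ)*((n:ℤ)+1) := by exact_mod_cast hh
        rw [e1]; linarith
      · intro hh
        rw [e1] at hh
        have hz : 2*((M:ℤ)+(n:ℤ)) = (n:ℤ)*((n:ℤ)+1) := by linarith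
        exact_mod_cast hz
    simp only [hiff]


/-! ### tset : the total triple count, fibered by total weight -/

def tset (a : ℕ) : Finset (Finset ℕ × Finset ℕ × Finset ℕ) :=
  ((range (a+1)).powerset ×ˢ ((range (a+1)).powerset ×ˢ (range (a+1)).powerset)).filter
    (fun p => 0 ∉ p.1 ∧ 0 ∉ p.2.2 ∧
      4 * ((∑ x ∈ p.1, x) + (∑ x ∈ p.2.1, x) + (∑ x ∈ p.2.2, x)) + p.2.1.card
        = a + p.1.card)

lemma mem_tset {a : ℕ} {p : Finset ℕ × Finset ℕ × Finset ℕ} :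
    p ∈ tset a ↔ 0 ∉ p.1 ∧ 0 ∉ p.2.2 ∧
      4 * ((∑ x ∈ p.1, x) + (∑ x ∈ p.2.1, x) + (∑ x ∈ p.2.2, x)) + p.2.1.card
        = a + p.1.card := by
  constructor
  · intro h; exact (Finset.mem_filter.1 h).2
  · intro h
    obtain ⟨h1, h2, heq⟩ := h
    have hAle : p.1.card ≤ ∑ x ∈ p.1, x := card_le_sum h1
    have hW : (∑ x ∈ p.1, x) + (∑ x ∈ p.2.1, x) + (∑ x ∈ p.2.2, x) ≤ a := by omega
    refine Finset.mem_filter.2 ⟨Finset.mem_product.2 ⟨?_, Finset.mem_product.2 ⟨?_, ?_⟩⟩,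
      h1, h2, heq⟩ <;>
    · refine Finset.mem_powerset.2 (fun x hx => Finset.mem_range.2 ?_)
      have := le_sum_of_mem hx; omega

def tkey (p : Finset ℕ × Finset ℕ × Finset ℕ) : ℕ :=
  (∑ x ∈ p.1, x) + (∑ x ∈ p.2.1, x) + (∑ x ∈ p.2.2, x)

lemma tset_fiber_card (a W : ℕ) (hW : W ≤ a) :
    ((tset a).filter (fun p => tkey p = W)).card = (qset (4*(W:ℤ) - a) W).card := by
  refine Finset.card_nbij' (fun p => p) (fun p => p) ?_ ?_ (fun _ _ => rfl) (fun _ _ => rfl)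
  · intro p hp
    obtain ⟨hpt, hkey⟩ := Finset.mem_filter.1 hp
    obtain ⟨h1, h2, heq⟩ := mem_tset.1 hpt
    have hkey' : (∑ x ∈ p.1, x) + (∑ x ∈ p.2.1, x) + (∑ x ∈ p.2.2, x) = W := hkey
    show p ∈ qset (4*(W:ℤ) - a) W
    refine mem_qset.2 ⟨h1, h2, ?_, hkey'⟩
    rw [hkey'] at heq
    push_cast
    omega
  · intro p hp
    obtain ⟨h1, h2, hch, hsum⟩ := mem_qset.1 hp
    show p ∈ (tset a).filter (fun p => tkey p = W)
    refine Finset.mem_filter.2 ⟨mem_tset.2 ⟨h1, h2, ?_⟩, hsum⟩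
    rw [hsum]
    omega

lemma tset_card_sum (a : ℕ) :
    (tset a).card = ∑ W ∈ range (a+1), (qset (4*(W:ℤ) - a) W).card := by
  have hmaps : ∀ p ∈ tset a, tkey p ∈ range (a+1) := by
    intro p hp
    obtain ⟨h1, h2, heq⟩ := mem_tset.1 hp
    have hAle : p.1.card ≤ ∑ x ∈ p.1, x := card_le_sum h1
    refine Finset.mem_range.2 ?_
    unfold tkey
    omega
  rw [Finset.card_eq_sum_card_fiberwise hmaps]
  refine Finset.sum_congr rfl ?_
  intro W hW
  exact tset_fiber_card a W (by have := Finset.mem_range.1 hW; omega)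

lemma tset_parity_sum (a : ℕ) :
    ((tset a).card : ZMod 2)
      = (((range (a+1)).filter
          (fun (W : ℕ) => 2*(W:ℤ) = (4*(W:ℤ) - a)*((4*(W:ℤ) - a) + 1))).card : ZMod 2) := by
  rw [tset_card_sum]
  push_cast
  rw [← Finset.sum_boole]
  refine Finset.sum_congr rfl ?_
  intro W hW
  rw [qset_parity]

lemma tset_parity_of_ex {a : ℕ} {j : ℤ} (hj : (a:ℤ) = 2*j^2 + j) :
    ((tset a).card : ZMod 2) = 1 := by
  rw [tset_parity_sum]
  obtain ⟨k, hk⟩ : Even (j*(j+1)) := Int.even_mul_succ_self j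
  have hknn : 0 ≤ k := by nlinarith [sq_nonneg (2*j+1)]
  have h3 : (0:ℤ) ≤ 3*j^2 + j := by nlinarith [sq_nonneg (6*j+1)]
  have hka : k ≤ (a:ℤ) := by nlinarith
  set W₀ : ℕ := k.toNat with hW₀
  have hWk : (W₀:ℤ) = k := Int.toNat_of_nonneg hknn
  have hfilter : (range (a+1)).filter
      (fun (W : ℕ) => 2*(W:ℤ) = (4*(W:ℤ) - a)*((4*(W:ℤ) - a) + 1)) = {W₀} := by
    refine Finset.eq_singleton_iff_unique_mem.2 ⟨?_, ?_⟩
    · refine Finset.mem_filter.2 ⟨Finset.mem_range.2 ?_, ?_⟩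
      · have : (W₀:ℤ) ≤ a := hWk ▸ hka
        exact_mod_cast by omega
      · rw [hWk]
        have hm : 4*k - (a:ℤ) = j := by linarith [hk, hj]
        rw [hm]
        linarith [hk]
    · intro W hW
      obtain ⟨hWr, hP⟩ := Finset.mem_filter.1 hW
      set m : ℤ := 4*(W:ℤ) - a with hmdef
      have ham : (a:ℤ) = 2*m^2 + m := by linear_combination 2*hP
      have hmj : (m - j)*(2*m + 2*j + 1) = 0 := by linear_combination hj - ham
      rcases mul_eq_zero.1 hmj with h | h
      · have : m = j := by omega
        have h4 : 4*(W:ℤ) = 4*k := by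
          have : 4*(W:ℤ) = (a:ℤ) + j := by omega
          linarith [hk, hj]
        have : (W:ℤ) = (W₀:ℤ) := by rw [hWk]; linarith
        exact_mod_cast this
      · omega
  rw [hfilter]
  simp

lemma tset_parity_of_not {a : ℕ} (h : ¬ ∃ j : ℤ, (a:ℤ) = 2*j^2 + j) :
    ((tset a).card : ZMod 2) = 0 := by
  rw [tset_parity_sum]
  have hfilter : (range (a+1)).filter
      (fun (W : ℕ) => 2*(W:ℤ) = (4*(W:ℤ) - a)*((4*(W:ℤ) - a) + 1)) = ∅ := by
    rw [Finset.filter_eq_empty_iff]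
    intro W hW hP
    exact h ⟨4*(W:ℤ) - a, by linear_combination 2*hP⟩
  rw [hfilter]
  simp


/-! ### pset : pairs with weight ΣA + 2ΣB -/

def pset (a : ℕ) : Finset (Finset ℕ × Finset ℕ) :=
  ((range (a+1)).powerset ×ˢ (range (a+1)).powerset).filter
    (fun p => 0 ∉ p.1 ∧ 0 ∉ p.2 ∧ (∑ x ∈ p.1, x) + 2 * (∑ x ∈ p.2, x) = a)

lemma mem_pset {a : ℕ} {p : Finset ℕ × Finset ℕ} :
    p ∈ pset a ↔ 0 ∉ p.1 ∧ 0 ∉ p.2 ∧ (∑ x ∈ p.1, x) + 2 * (∑ x ∈ p.2, x) = a := by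
  constructor
  · intro h; exact (Finset.mem_filter.1 h).2
  · intro h
    refine Finset.mem_filter.2 ⟨Finset.mem_product.2 ⟨?_, ?_⟩, h⟩ <;>
    · refine Finset.mem_powerset.2 (fun x hx => Finset.mem_range.2 ?_)
      have := le_sum_of_mem hx; omega

def halves (A : Finset ℕ) : Finset ℕ := (A.filter (fun x => Even x)).image (fun x => x / 2)

lemma mem_halves {A : Finset ℕ} {y : ℕ} : y ∈ halves A ↔ 2*y ∈ A := by
  constructor
  · intro h
    obtain ⟨x, hx, rfl⟩ := Finset.mem_image.1 h
    obtain ⟨hxA, hxE⟩ := Finset.mem_filter.1 hx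
    rw [Nat.even_iff] at hxE
    have : 2*(x/2) = x := by omega
    rw [this]
    exact hxA
  · intro h
    refine Finset.mem_image.2 ⟨2*y, Finset.mem_filter.2 ⟨h, ⟨y, by ring⟩⟩, by omega⟩

lemma halves_symmDiff (A : Finset ℕ) (c : ℕ) :
    halves (A ∆ {2*c}) = (halves A) ∆ {c} := by
  ext y
  rw [mem_halves, mem_symmDiff_singleton, mem_symmDiff_singleton, mem_halves]
  constructor
  · rintro (⟨h1, h2⟩ | ⟨h1, h2⟩)
    · exact Or.inl ⟨h1, by omega⟩
    · exact Or.inr ⟨by omega, by rw [show y = c from by omega] at *; exact fun hh => h2 hh⟩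
  · rintro (⟨h1, h2⟩ | ⟨h1, h2⟩)
    · exact Or.inl ⟨h1, by omega⟩
    · subst h1
      exact Or.inr ⟨rfl, h2⟩

def pfx (p : Finset ℕ × Finset ℕ) : Prop := halves p.1 = p.2

instance : DecidablePred pfx := fun p => by unfold pfx; infer_instance

def ptog (p : Finset ℕ × Finset ℕ) : Finset ℕ × Finset ℕ :=
  if ((halves p.1) ∆ p.2).Nonempty
  then (p.1 ∆ {2 * mn ((halves p.1) ∆ p.2)}, p.2 ∆ {mn ((halves p.1) ∆ p.2)})
  else p

lemma ptog_ok {a : ℕ} (p : Finset ℕ × Finset ℕ) (hp : p ∈ pset a) (hnfx : ¬ pfx p) :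
    ptog p ∈ pset a ∧ ¬ pfx (ptog p) ∧ ptog (ptog p) = p ∧ ptog p ≠ p := by
  obtain ⟨h1, h2, hsum⟩ := mem_pset.1 hp
  have hDne : ((halves p.1) ∆ p.2).Nonempty := by
    rw [Finset.nonempty_iff_ne_empty]
    intro hemp
    exact hnfx (symmDiff_eq_bot.1 hemp)
  set c := mn ((halves p.1) ∆ p.2) with hc
  have hcD : c ∈ (halves p.1) ∆ p.2 := mn_mem hDne
  have hcases : (2*c ∈ p.1 ∧ c ∉ p.2) ∨ (c ∈ p.2 ∧ 2*c ∉ p.1) := by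
    rcases Finset.mem_symmDiff.1 hcD with ⟨hx1, hx2⟩ | ⟨hx1, hx2⟩
    · exact Or.inl ⟨mem_halves.1 hx1, hx2⟩
    · exact Or.inr ⟨hx1, fun hh => hx2 (mem_halves.2 hh)⟩
  have hc0 : c ≠ 0 := by
    intro h
    rcases hcases with ⟨hx1, _⟩ | ⟨hx1, _⟩
    · rw [h] at hx1; exact h1 (by simpa using hx1)
    · rw [h] at hx1; exact h2 hx1
  have hzt : ptog p = (p.1 ∆ {2*c}, p.2 ∆ {c}) := by
    rw [ptog, if_pos hDne]
  have hsum' : (∑ x ∈ p.1 ∆ {2*c}, x) + 2 * (∑ x ∈ p.2 ∆ {c}, x) = a := by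
    rcases hcases with ⟨hx1, hx2⟩ | ⟨hx1, hx2⟩
    · have e1 := sum_symmDiff_mem hx1
      have e2 := sum_symmDiff_not_mem hx2
      omega
    · have e1 := sum_symmDiff_not_mem hx2
      have e2 := sum_symmDiff_mem hx1
      omega
  have hmem' : (p.1 ∆ {2*c}, p.2 ∆ {c}) ∈ pset a := by
    refine mem_pset.2 ⟨?_, ?_, hsum'⟩
    · intro hx
      rcases mem_symmDiff_singleton.1 hx with ⟨hh, _⟩ | ⟨hh, _⟩
      · exact h1 hh
      · omega
    · intro hx
      rcases mem_symmDiff_singleton.1 hx with ⟨hh, _⟩ | ⟨hh, _⟩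
      · exact h2 hh
      · exact hc0 hh.symm
  have hinv : (halves (p.1 ∆ {2*c})) ∆ (p.2 ∆ {c}) = (halves p.1) ∆ p.2 := by
    rw [halves_symmDiff, symmDiff_cancel_pair]
  have hnfx' : ¬ pfx (p.1 ∆ {2*c}, p.2 ∆ {c}) := by
    intro hfix
    have hbot : (halves (p.1 ∆ {2*c})) ∆ (p.2 ∆ {c}) = ⊥ := by
      rw [show halves (p.1 ∆ {2*c}) = p.2 ∆ {c} from hfix]
      exact symmDiff_self _
    rw [hinv] at hbot
    exact Finset.nonempty_iff_ne_empty.1 hDne hbot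
  refine ⟨hzt ▸ hmem', hzt ▸ hnfx', ?_, ?_⟩
  · rw [hzt, ptog]
    have hne2 : ((halves (p.1 ∆ {2*c})) ∆ (p.2 ∆ {c})).Nonempty := by
      rw [hinv]; exact hDne
    rw [if_pos hne2]
    have hmneq : mn ((halves (p.1 ∆ {2*c})) ∆ (p.2 ∆ {c})) = c := by rw [hinv]
    simp only [hmneq]
    simp only [symmDiff_symmDiff_cancel]
  · rw [hzt]
    intro heq
    have hfst : p.2 ∆ {c} = p.2 := congrArg Prod.snd heq
    rcases hcases with ⟨_, hm⟩ | ⟨hm, _⟩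
    · rw [symmDiff_singleton_not_mem hm] at hfst
      exact hm (hfst ▸ Finset.mem_insert_self c p.2)
    · rw [symmDiff_singleton_mem hm] at hfst
      have := Finset.notMem_erase c p.2
      rw [hfst] at this
      exact this hm


/-! ### fixed points of ptog ↔ tset -/

def pi' (p : Finset ℕ × Finset ℕ) : Finset ℕ × Finset ℕ × Finset ℕ :=
  ((p.1.filter (fun x => x % 4 = 3)).image (fun x => (x+1)/4),
   (p.1.filter (fun x => x % 4 = 1)).image (fun x => x/4),
   halves p.1)

def pj' (t : Finset ℕ × Finset ℕ × Finset ℕ) : Finset ℕ × Finset ℕ :=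
  ((t.1.image (fun i => 4*i - 1) ∪ t.2.1.image (fun i => 4*i + 1)) ∪ t.2.2.image (fun i => 2*i),
   t.2.2)

lemma filter_mod_split (A : Finset ℕ) :
    (∑ x ∈ A, x) = (∑ x ∈ A.filter (fun x => x % 4 = 1), x)
      + (∑ x ∈ A.filter (fun x => x % 4 = 3), x)
      + (∑ x ∈ A.filter (fun x => Even x), x) ∧
    (A.filter (fun x => ¬ Even x)).card
      = (A.filter (fun x => x % 4 = 1)).card + (A.filter (fun x => x % 4 = 3)).card := by
  have h1 := Finset.sum_filter_add_sum_filter_not A (fun x => Even x) (fun x => x)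
  have h2 := Finset.sum_filter_add_sum_filter_not (A.filter (fun x => ¬ Even x))
    (fun x => x % 4 = 1) (fun x => x)
  have e1 : (A.filter (fun x => ¬ Even x)).filter (fun x => x % 4 = 1)
      = A.filter (fun x => x % 4 = 1) := by
    rw [Finset.filter_filter]
    refine Finset.filter_congr ?_
    intro x _
    rw [Nat.even_iff]
    constructor
    · rintro ⟨_, h⟩; exact h
    · intro h; exact ⟨by omega, h⟩
  have e3 : (A.filter (fun x => ¬ Even x)).filter (fun x => ¬ x % 4 = 1)
      = A.filter (fun x => x % 4 = 3) := by
    rw [Finset.filter_filter]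
    refine Finset.filter_congr ?_
    intro x _
    rw [Nat.even_iff]
    constructor
    · rintro ⟨h', h⟩; omega
    · intro h; constructor <;> omega
  have hc := Finset.card_filter_add_card_filter_not
    (s := A.filter (fun x => ¬ Even x)) (p := fun x => x % 4 = 1)
  rw [e1, e3] at h2 hc
  constructor
  · omega
  · omega

lemma pfix_card (a : ℕ) : ((pset a).filter pfx).card = (tset a).card := by
  refine Finset.card_nbij' pi' pj' ?_ ?_ ?_ ?_
  · intro p hp
    obtain ⟨hpz, hfx⟩ := Finset.mem_filter.1 hp
    obtain ⟨h1, h2, hsum⟩ := mem_pset.1 hpz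
    have hfx' : halves p.1 = p.2 := hfx
    set S1 := p.1.filter (fun x => x % 4 = 1) with hS1
    set S3 := p.1.filter (fun x => x % 4 = 3) with hS3
    set SE := p.1.filter (fun x => Even x) with hSE
    obtain ⟨hsplit, _⟩ := filter_mod_split p.1
    rw [← hS1, ← hS3, ← hSE] at hsplit
    have hm3 : ∀ x ∈ S3, x % 4 = 3 := fun x hx => (Finset.mem_filter.1 hx).2
    have hm1 : ∀ x ∈ S1, x % 4 = 1 := fun x hx => (Finset.mem_filter.1 hx).2
    have hq3 : 4 * (∑ y ∈ S3.image (fun x => (x+1)/4), y) = (∑ x ∈ S3, x) + S3.card := by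
      rw [sum_image_inj (by intro x hx y hy hxy; have := hm3 x hx; have := hm3 y hy; omega)]
      rw [Finset.mul_sum]
      have : (∑ x ∈ S3, x) + S3.card = ∑ x ∈ S3, (x+1) := by
        rw [Finset.sum_add_distrib]; simp
      rw [this]
      refine Finset.sum_congr rfl (fun x hx => by have := hm3 x hx; omega)
    have hq1 : 4 * (∑ y ∈ S1.image (fun x => x/4), y) + S1.card = (∑ x ∈ S1, x) := by
      rw [sum_image_inj (by intro x hx y hy hxy; have := hm1 x hx; have := hm1 y hy; omega)]
      rw [Finset.mul_sum]
      have : ∑ x ∈ S1, 4 * (x/4) + S1.card = ∑ x ∈ S1, (4*(x/4) + 1) := by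
        rw [Finset.sum_add_distrib]; simp
      rw [this]
      refine Finset.sum_congr rfl (fun x hx => by have := hm1 x hx; omega)
    have hqE : 2 * (∑ y ∈ halves p.1, y) = ∑ x ∈ SE, x := by
      unfold halves
      rw [sum_image_inj (by
        intro x hx y hy hxy
        have hex := (Finset.mem_filter.1 hx).2
        have hey := (Finset.mem_filter.1 hy).2
        rw [Nat.even_iff] at hex hey
        omega)]
      rw [Finset.mul_sum]
      refine Finset.sum_congr rfl (fun x hx => by
        have hex := (Finset.mem_filter.1 hx).2
        rw [Nat.even_iff] at hex
        omega)
    have hc3 : (S3.image (fun x => (x+1)/4)).card = S3.card :=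
      Finset.card_image_of_injOn (by
        intro x hx y hy hxy; have := hm3 x hx; have := hm3 y hy
        have hxy' : (x+1)/4 = (y+1)/4 := hxy
        omega)
    have hc1 : (S1.image (fun x => x/4)).card = S1.card :=
      Finset.card_image_of_injOn (by
        intro x hx y hy hxy; have := hm1 x hx; have := hm1 y hy
        have hxy' : x/4 = y/4 := hxy
        omega)
    have h2S : 2 * (∑ x ∈ p.2, x) = ∑ x ∈ SE, x := by rw [← hfx']; exact hqE
    refine mem_tset.2 ⟨?_, ?_, ?_⟩
    · intro hmem
      obtain ⟨x, hx, hx0⟩ := Finset.mem_image.1 hmem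
      have := hm3 x hx
      omega
    · show 0 ∉ halves p.1
      rw [mem_halves]
      simpa using h1
    · show 4 * ((∑ y ∈ S3.image (fun x => (x+1)/4), y) + (∑ y ∈ S1.image (fun x => x/4), y)
          + (∑ y ∈ halves p.1, y)) + (S1.image (fun x => x/4)).card
        = a + (S3.image (fun x => (x+1)/4)).card
      rw [hc1, hc3]
      omega
  · intro t ht
    obtain ⟨h1, h2, heq⟩ := mem_tset.1 ht
    have hd1 : Disjoint (t.1.image (fun i => 4*i - 1)) (t.2.1.image (fun i => 4*i + 1)) := by
      rw [Finset.disjoint_left]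
      rintro x hx hy
      obtain ⟨i, hi, rfl⟩ := Finset.mem_image.1 hx
      obtain ⟨j, hj, hji⟩ := Finset.mem_image.1 hy
      have hi1 : 1 ≤ i := Nat.one_le_iff_ne_zero.2 (by rintro rfl; exact h1 hi)
      omega
    have hd2 : Disjoint ((t.1.image (fun i => 4*i - 1)) ∪ (t.2.1.image (fun i => 4*i + 1)))
        (t.2.2.image (fun i => 2*i)) := by
      rw [Finset.disjoint_left]
      rintro x hx hy
      obtain ⟨k, hk, rfl⟩ := Finset.mem_image.1 hy
      rcases Finset.mem_union.1 hx with hx' | hx'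
      · obtain ⟨i, hi, hix⟩ := Finset.mem_image.1 hx'
        have hi1 : 1 ≤ i := Nat.one_le_iff_ne_zero.2 (by rintro rfl; exact h1 hi)
        omega
      · obtain ⟨j, hj, hjx⟩ := Finset.mem_image.1 hx'
        omega
    have hpos : ∀ i ∈ t.1, 1 ≤ i := fun i hi =>
      Nat.one_le_iff_ne_zero.2 (by rintro rfl; exact h1 hi)
    have hinj3 : ∀ x ∈ t.1, ∀ y ∈ t.1, 4*x - 1 = 4*y - 1 → x = y := by
      intro x hx y hy hxy
      have := hpos x hx; have := hpos y hy
      omega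
    have hs3 : (∑ y ∈ t.1.image (fun i => 4*i - 1), y) + t.1.card = 4 * ∑ i ∈ t.1, i := by
      rw [sum_image_inj hinj3]
      rw [Finset.mul_sum]
      have : (∑ i ∈ t.1, (4*i - 1)) + t.1.card = ∑ i ∈ t.1, ((4*i - 1) + 1) := by
        rw [Finset.sum_add_distrib]; simp
      rw [this]
      refine Finset.sum_congr rfl (fun i hi => by have := hpos i hi; omega)
    have hs1 : (∑ y ∈ t.2.1.image (fun i => 4*i + 1), y) = 4 * (∑ i ∈ t.2.1, i) + t.2.1.card := by
      rw [sum_image_inj (by intro x _ y _ hxy; have hxy' : 4*x+1 = 4*y+1 := hxy; omega)]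
      have h' : ∑ x ∈ t.2.1, (4*x+1) = (∑ x ∈ t.2.1, 4*x) + ∑ _x ∈ t.2.1, 1 :=
        Finset.sum_add_distrib
      rw [h', Finset.mul_sum]
      simp
    have hsE : (∑ y ∈ t.2.2.image (fun i => 2*i), y) = 2 * ∑ i ∈ t.2.2, i := by
      rw [sum_image_inj (by intro x _ y _ hxy; have hxy' : 2*x = 2*y := hxy; omega), Finset.mul_sum]
    have hct : (t.1.image (fun i => 4*i - 1)).card = t.1.card :=
      Finset.card_image_of_injOn hinj3
    refine Finset.mem_filter.2 ⟨mem_pset.2 ⟨?_, ?_, ?_⟩, ?_⟩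
    · intro hmem
      rcases Finset.mem_union.1 hmem with hx | hx
      · rcases Finset.mem_union.1 hx with hx' | hx'
        · obtain ⟨i, hi, hix⟩ := Finset.mem_image.1 hx'
          have hi1 : 1 ≤ i := Nat.one_le_iff_ne_zero.2 (by rintro rfl; exact h1 hi)
          omega
        · obtain ⟨j, hj, hjx⟩ := Finset.mem_image.1 hx'
          omega
      · obtain ⟨k, hk, hkx⟩ := Finset.mem_image.1 hx
        have hk1 : 1 ≤ k := Nat.one_le_iff_ne_zero.2 (by rintro rfl; exact h2 hk)
        omega
    · exact h2
    · show (∑ x ∈ (t.1.image (fun i => 4*i - 1) ∪ t.2.1.image (fun i => 4*i + 1))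
            ∪ t.2.2.image (fun i => 2*i), x) + 2 * (∑ x ∈ t.2.2, x) = a
      rw [Finset.sum_union hd2, Finset.sum_union hd1]
      omega
    · show halves ((t.1.image (fun i => 4*i - 1) ∪ t.2.1.image (fun i => 4*i + 1))
            ∪ t.2.2.image (fun i => 2*i)) = t.2.2
      ext y
      rw [mem_halves]
      simp only [Finset.mem_union, Finset.mem_image]
      constructor
      · rintro ((⟨i, hi, hix⟩ | ⟨j, hj, hjx⟩) | ⟨k, hk, hkx⟩)
        · have hi1 : 1 ≤ i := Nat.one_le_iff_ne_zero.2 (by rintro rfl; exact h1 hi)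
          omega
        · omega
        · have : k = y := by omega
          exact this ▸ hk
      · intro hy
        exact Or.inr ⟨y, hy, rfl⟩
  · intro p hp
    obtain ⟨hpz, hfx⟩ := Finset.mem_filter.1 hp
    obtain ⟨h1, h2, hsum⟩ := mem_pset.1 hpz
    have hfx' : halves p.1 = p.2 := hfx
    simp only [pi', pj']
    refine Prod.ext ?_ hfx'
    show ((p.1.filter (fun x => x % 4 = 3)).image (fun x => (x+1)/4)).image (fun i => 4*i - 1)
        ∪ ((p.1.filter (fun x => x % 4 = 1)).image (fun x => x/4)).image (fun i => 4*i + 1)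
        ∪ (halves p.1).image (fun i => 2*i) = p.1
    have e3 : ((p.1.filter (fun x => x % 4 = 3)).image (fun x => (x+1)/4)).image (fun i => 4*i - 1)
        = p.1.filter (fun x => x % 4 = 3) := by
      rw [Finset.image_image]
      have : ∀ x ∈ p.1.filter (fun x => x % 4 = 3),
          ((fun i => 4*i - 1) ∘ (fun x => (x+1)/4)) x = id x := by
        intro x hx
        have := (Finset.mem_filter.1 hx).2
        simp only [Function.comp, id]
        omega
      rw [Finset.image_congr this, Finset.image_id]
    have e1 : ((p.1.filter (fun x => x % 4 = 1)).image (fun x => x/4)).image (fun i => 4*i + 1)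
        = p.1.filter (fun x => x % 4 = 1) := by
      rw [Finset.image_image]
      have : ∀ x ∈ p.1.filter (fun x => x % 4 = 1),
          ((fun i => 4*i + 1) ∘ (fun x => x/4)) x = id x := by
        intro x hx
        have := (Finset.mem_filter.1 hx).2
        simp only [Function.comp, id]
        omega
      rw [Finset.image_congr this, Finset.image_id]
    have eE : (halves p.1).image (fun i => 2*i) = p.1.filter (fun x => Even x) := by
      ext x
      simp only [Finset.mem_image, Finset.mem_filter]
      constructor
      · rintro ⟨y, hy, rfl⟩
        exact ⟨mem_halves.1 hy, ⟨y, by ring⟩⟩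
      · rintro ⟨hx, hev⟩
        refine ⟨x/2, mem_halves.2 ?_, ?_⟩
        · rw [Nat.even_iff] at hev
          have : 2*(x/2) = x := by omega
          rw [this]; exact hx
        · rw [Nat.even_iff] at hev
          omega
    rw [e3, e1, eE]
    ext x
    simp only [Finset.mem_union, Finset.mem_filter, Nat.even_iff]
    constructor
    · rintro ((⟨hx, _⟩ | ⟨hx, _⟩) | ⟨hx, _⟩) <;> exact hx
    · intro hx
      have : x % 4 = 0 ∨ x % 4 = 1 ∨ x % 4 = 2 ∨ x % 4 = 3 := by omega
      rcases this with h | h | h | h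
      · exact Or.inr ⟨hx, by omega⟩
      · exact Or.inl (Or.inr ⟨hx, h⟩)
      · exact Or.inr ⟨hx, by omega⟩
      · exact Or.inl (Or.inl ⟨hx, h⟩)
  · intro t ht
    obtain ⟨h1, h2, heq⟩ := mem_tset.1 ht
    simp only [pi', pj']
    have hA : (t.1.image (fun i => 4*i - 1) ∪ t.2.1.image (fun i => 4*i + 1))
        ∪ t.2.2.image (fun i => 2*i) = (pj' t).1 := rfl
    have hpos1 : ∀ i ∈ t.1, 1 ≤ i := fun i hi =>
      Nat.one_le_iff_ne_zero.2 (by rintro rfl; exact h1 hi)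
    have hpos2 : ∀ i ∈ t.2.2, 1 ≤ i := fun i hi =>
      Nat.one_le_iff_ne_zero.2 (by rintro rfl; exact h2 hi)
    have hf3 : ((pj' t).1).filter (fun x => x % 4 = 3) = t.1.image (fun i => 4*i - 1) := by
      rw [← hA]
      ext x
      simp only [Finset.mem_filter, Finset.mem_union, Finset.mem_image]
      constructor
      · rintro ⟨(⟨i, hi, rfl⟩ | ⟨j, hj, rfl⟩) | ⟨k, hk, rfl⟩, hm⟩
        · exact ⟨i, hi, rfl⟩
        · omega
        · omega
      · rintro ⟨i, hi, rfl⟩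
        have := hpos1 i hi
        exact ⟨Or.inl (Or.inl ⟨i, hi, rfl⟩), by omega⟩
    have hf1 : ((pj' t).1).filter (fun x => x % 4 = 1) = t.2.1.image (fun i => 4*i + 1) := by
      rw [← hA]
      ext x
      simp only [Finset.mem_filter, Finset.mem_union, Finset.mem_image]
      constructor
      · rintro ⟨(⟨i, hi, rfl⟩ | ⟨j, hj, rfl⟩) | ⟨k, hk, rfl⟩, hm⟩
        · have := hpos1 i hi
          omega
        · exact ⟨j, hj, rfl⟩
        · omega
      · rintro ⟨j, hj, rfl⟩
        exact ⟨Or.inl (Or.inr ⟨j, hj, rfl⟩), by omega⟩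
    have hfE : halves ((pj' t).1) = t.2.2 := by
      rw [← hA]
      ext y
      rw [mem_halves]
      simp only [Finset.mem_union, Finset.mem_image]
      constructor
      · rintro ((⟨i, hi, hix⟩ | ⟨j, hj, hjx⟩) | ⟨k, hk, hkx⟩)
        · have := hpos1 i hi
          omega
        · omega
        · have : k = y := by omega
          exact this ▸ hk
      · intro hy
        exact Or.inr ⟨y, hy, rfl⟩
    refine Prod.ext ?_ (Prod.ext ?_ ?_)
    · show (((pj' t).1).filter (fun x => x % 4 = 3)).image (fun x => (x+1)/4) = t.1
      rw [hf3, Finset.image_image]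
      have : ∀ i ∈ t.1, ((fun x => (x+1)/4) ∘ (fun i => 4*i - 1)) i = id i := by
        intro i hi
        have := hpos1 i hi
        simp only [Function.comp, id]
        omega
      rw [Finset.image_congr this, Finset.image_id]
    · show (((pj' t).1).filter (fun x => x % 4 = 1)).image (fun x => x/4) = t.2.1
      rw [hf1, Finset.image_image]
      have : ∀ j ∈ t.2.1, ((fun x => x/4) ∘ (fun i => 4*i + 1)) j = id j := by
        intro j _
        simp only [Function.comp, id]
        omega
      rw [Finset.image_congr this, Finset.image_id]
    · exact hfE

lemma pset_parity_ex {a : ℕ} {j : ℤ} (hj : (a:ℤ) = 2*j^2 + j) :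
    ((pset a).card : ZMod 2) = 1 := by
  rw [parity_invol (pset a) pfx ptog (fun p hp h => ptog_ok p hp h), pfix_card]
  exact tset_parity_of_ex hj

lemma pset_parity_not {a : ℕ} (h : ¬ ∃ j : ℤ, (a:ℤ) = 2*j^2 + j) :
    ((pset a).card : ZMod 2) = 0 := by
  rw [parity_invol (pset a) pfx ptog (fun p hp h => ptog_ok p hp h), pfix_card]
  exact tset_parity_of_not h


/-! ### power series stage over ZMod 2 -/

local notation "R2" => PowerSeries (ZMod 2)

lemma two_eq_zero_R2 : (2 : R2) = 0 := by
  have h1 : (2 : R2) = 1 + 1 := by norm_num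
  have h2 : (1 : R2) + 1 = PowerSeries.C (R := ZMod 2) (1 + 1) := by rw [map_add, map_one]
  rw [h1, h2, show (1 + 1 : ZMod 2) = 0 from by decide, map_zero]

lemma sub_eq_add_R2 (u : R2) : 1 - u = 1 + u := by
  have h := two_eq_zero_R2
  linear_combination (-u) * h

lemma sq_add_R2 (x y : R2) : (x + y)^2 = x^2 + y^2 := by
  have h := two_eq_zero_R2
  linear_combination (x*y) * h

lemma pow24_R2 (u : R2) : (1 - u)^24 = (1 + u^8) * (1 + u^16) := by
  have h := two_eq_zero_R2
  have e2 : (1 + u)^2 = 1 + u^2 := by linear_combination u * h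
  have e4 : (1 + u)^4 = 1 + u^4 := by
    have : (1 + u)^4 = ((1 + u)^2)^2 := by ring
    rw [this, e2]
    linear_combination (u^2) * h
  have e8 : (1 + u)^8 = 1 + u^8 := by
    have : (1 + u)^8 = ((1 + u)^4)^2 := by ring
    rw [this, e4]
    linear_combination (u^4) * h
  have e24 : (1 - u)^24 = ((1 + u)^8)^3 := by
    rw [sub_eq_add_R2]
    ring
  rw [e24, e8]
  linear_combination (u^8 + u^16) * h

def s0 (n : ℕ) : Finset (Finset ℕ × Finset ℕ) :=
  ((range n).powerset ×ˢ (range n).powerset).filter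
    (fun p => n = 1 + 8 * (∑ k ∈ p.1, (k+1)) + 16 * (∑ k ∈ p.2, (k+1)))

lemma tau_coeff_zmod (n : ℕ) :
    ((tau n : ℤ) : ZMod 2) = ((s0 n).card : ZMod 2) := by
  have hmap0 : ((tau n : ℤ) : ZMod 2)
      = PowerSeries.coeff (R := ZMod 2) n
        (PowerSeries.map (Int.castRingHom (ZMod 2))
          (PowerSeries.X * ∏ k ∈ range n, (1 - PowerSeries.X ^ (k+1))^24)) := by
    rw [tau, PowerSeries.coeff_map]
    rfl
  have hmap1 : PowerSeries.map (Int.castRingHom (ZMod 2))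
        (PowerSeries.X * ∏ k ∈ range n, (1 - PowerSeries.X ^ (k+1))^24)
      = PowerSeries.X * ∏ k ∈ range n, (1 - PowerSeries.X ^ (k+1) : R2)^24 := by
    rw [map_mul, PowerSeries.map_X]
    congr 1
    rw [map_prod]
    refine Finset.prod_congr rfl ?_
    intro k _
    rw [map_pow, map_sub, map_one, map_pow, PowerSeries.map_X]
  have hmap : ((tau n : ℤ) : ZMod 2)
      = PowerSeries.coeff (R := ZMod 2) n
        (PowerSeries.X * ∏ k ∈ range n, (1 - PowerSeries.X ^ (k+1) : R2)^24) := by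
    rw [hmap0, hmap1]
  rw [hmap]
  have hfac : ∀ k : ℕ, (1 - PowerSeries.X ^ (k+1) : R2)^24
      = (1 + PowerSeries.X ^ (8*(k+1))) * (1 + PowerSeries.X ^ (16*(k+1))) := by
    intro k
    rw [pow24_R2 (PowerSeries.X ^ (k+1)), ← pow_mul, ← pow_mul]
    ring_nf
  have hprod : ∏ k ∈ range n, (1 - PowerSeries.X ^ (k+1) : R2)^24
      = (∑ A ∈ (range n).powerset, PowerSeries.X ^ (8 * ∑ k ∈ A, (k+1)))
        * (∑ B ∈ (range n).powerset, PowerSeries.X ^ (16 * ∑ k ∈ B, (k+1))) := by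
    rw [Finset.prod_congr rfl (fun k _ => hfac k), Finset.prod_mul_distrib]
    congr 1
    · rw [Finset.prod_congr rfl
        (fun k _ => add_comm (1 : R2) (PowerSeries.X ^ (8*(k+1)))), Finset.prod_add]
      refine Finset.sum_congr rfl ?_
      intro A hA
      rw [Finset.prod_const_one, mul_one, Finset.prod_pow_eq_pow_sum, Finset.mul_sum]
    · rw [Finset.prod_congr rfl
        (fun k _ => add_comm (1 : R2) (PowerSeries.X ^ (16*(k+1)))), Finset.prod_add]
      refine Finset.sum_congr rfl ?_
      intro B hB
      rw [Finset.prod_const_one, mul_one, Finset.prod_pow_eq_pow_sum, Finset.mul_sum]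
  have hps : (PowerSeries.X : R2) * ((∑ A ∈ (range n).powerset, PowerSeries.X ^ (8 * ∑ k ∈ A, (k+1)))
        * (∑ B ∈ (range n).powerset, PowerSeries.X ^ (16 * ∑ k ∈ B, (k+1))))
      = ∑ p ∈ (range n).powerset ×ˢ (range n).powerset,
          PowerSeries.X * (PowerSeries.X ^ (8 * ∑ k ∈ p.1, (k+1))
            * PowerSeries.X ^ (16 * ∑ k ∈ p.2, (k+1))) := by
    rw [Finset.sum_mul_sum]
    rw [← Finset.sum_product']
    rw [Finset.mul_sum]
  rw [hprod, hps, map_sum]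
  have hterm : ∀ (A B : Finset ℕ),
      PowerSeries.coeff (R := ZMod 2) n
        (PowerSeries.X * (PowerSeries.X ^ (8 * ∑ k ∈ A, (k+1))
          * PowerSeries.X ^ (16 * ∑ k ∈ B, (k+1))))
      = if n = 1 + 8 * (∑ k ∈ A, (k+1)) + 16 * (∑ k ∈ B, (k+1)) then 1 else 0 := by
    intro A B
    have : (PowerSeries.X : R2) * (PowerSeries.X ^ (8 * ∑ k ∈ A, (k+1))
        * PowerSeries.X ^ (16 * ∑ k ∈ B, (k+1)))
        = PowerSeries.X ^ (1 + 8 * (∑ k ∈ A, (k+1)) + 16 * (∑ k ∈ B, (k+1))) := by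
      rw [pow_add, pow_add, pow_one]
      ring
    rw [this, PowerSeries.coeff_X_pow]
  have hsum : ∑ p ∈ (range n).powerset ×ˢ (range n).powerset,
      PowerSeries.coeff (R := ZMod 2) n
        (PowerSeries.X * (PowerSeries.X ^ (8 * ∑ k ∈ p.1, (k+1))
          * PowerSeries.X ^ (16 * ∑ k ∈ p.2, (k+1))))
      = ((s0 n).card : ZMod 2) := by
    rw [Finset.sum_congr rfl (fun p _ => hterm p.1 p.2)]
    rw [Finset.sum_boole]
    rfl
  rw [hsum]


lemma s0_empty {n : ℕ} (h : n % 8 ≠ 1) : s0 n = ∅ := by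
  rw [Finset.eq_empty_iff_forall_notMem]
  intro p hp
  have hc := (Finset.mem_filter.1 hp).2
  omega

lemma sum_succ_eq (A : Finset ℕ) : ∑ k ∈ A, (k+1) = (∑ k ∈ A, k) + A.card := by
  rw [Finset.sum_add_distrib]; simp

lemma s0_card (a : ℕ) : (s0 (8*a+1)).card = (pset a).card := by
  refine Finset.card_nbij' (fun p => (p.1.image (· + 1), p.2.image (· + 1)))
    (fun p => (p.1.image (· - 1), p.2.image (· - 1))) ?_ ?_ ?_ ?_
  · intro p hp
    obtain ⟨hmem, hc⟩ := Finset.mem_filter.1 hp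
    rw [sum_succ_eq, sum_succ_eq] at hc
    have e1 := sum_add_one p.1
    have e2 := sum_add_one p.2
    show (p.1.image (· + 1), p.2.image (· + 1)) ∈ pset a
    refine mem_pset.2 ⟨zero_not_mem_image_add _, zero_not_mem_image_add _, ?_⟩
    show (∑ x ∈ p.1.image (· + 1), x) + 2 * (∑ x ∈ p.2.image (· + 1), x) = a
    omega
  · intro p hp
    obtain ⟨h1, h2, hsum⟩ := mem_pset.1 hp
    have e1 := sum_sub_one h1
    have e2 := sum_sub_one h2
    have hc1 : (p.1.image (· - 1)).card = p.1.card := card_image_sub h1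
    have hc2 : (p.2.image (· - 1)).card = p.2.card := card_image_sub h2
    refine Finset.mem_filter.2 ⟨Finset.mem_product.2 ⟨?_, ?_⟩, ?_⟩
    · refine Finset.mem_powerset.2 (fun x hx => Finset.mem_range.2 ?_)
      obtain ⟨y, hy, rfl⟩ := Finset.mem_image.1 hx
      have := le_sum_of_mem hy
      omega
    · refine Finset.mem_powerset.2 (fun x hx => Finset.mem_range.2 ?_)
      obtain ⟨y, hy, rfl⟩ := Finset.mem_image.1 hx
      have := le_sum_of_mem hy
      omega
    · show 8*a+1 = 1 + 8 * (∑ k ∈ p.1.image (· - 1), (k+1)) + 16 * (∑ k ∈ p.2.image (· - 1), (k+1))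
      rw [sum_succ_eq, sum_succ_eq, hc1, hc2]
      omega
  · intro p hp
    exact Prod.ext (image_add_sub _) (image_add_sub _)
  · intro p hp
    obtain ⟨h1, h2, hsum⟩ := mem_pset.1 hp
    exact Prod.ext (image_sub_add h1) (image_sub_add h2)

lemma odd_int_cast_iff (z : ℤ) : Odd z ↔ ((z : ZMod 2) = 1) := by
  rw [Int.odd_iff]
  constructor
  · intro h
    have : ((z % 2 : ℤ) : ZMod 2) = ((z : ℤ) : ZMod 2) := ZMod.intCast_mod z 2
    rw [← this, h]
    decide
  · intro h
    rcases Int.emod_two_eq_zero_or_one z with h0 | h1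
    · exfalso
      have : ((z % 2 : ℤ) : ZMod 2) = ((z : ℤ) : ZMod 2) := ZMod.intCast_mod z 2
      rw [h0, h] at this
      simp at this
    · exact h1

lemma odd_sq_mod8 {m : ℕ} (h : Odd m) : m^2 % 8 = 1 := by
  obtain ⟨k, rfl⟩ := h
  obtain ⟨t, ht⟩ : Even (k*(k+1)) := Nat.even_mul_succ_self k
  have hr : (2*k+1)^2 = 4*(k*(k+1)) + 1 := by ring
  omega

lemma ex_j_iff (a : ℕ) : (∃ j : ℤ, (a:ℤ) = 2*j^2 + j) ↔ (∃ m : ℕ, Odd m ∧ m^2 = 8*a+1) := by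
  constructor
  · rintro ⟨j, hj⟩
    refine ⟨(4*j+1).natAbs, ?_, ?_⟩
    · rw [Int.natAbs_odd]
      exact ⟨2*j, by ring⟩
    · have hz : (((4*j+1).natAbs : ℤ))^2 = (4*j+1)^2 := by
        rw [pow_two, pow_two, Int.natAbs_mul_self']
      have : (((4*j+1).natAbs : ℤ))^2 = ((8*a+1 : ℕ) : ℤ) := by
        rw [hz]
        push_cast
        linear_combination (-8)*hj
      exact_mod_cast this
  · rintro ⟨m, hm, hsq⟩
    obtain ⟨k, rfl⟩ := hm
    rcases Nat.even_or_odd k with ⟨l, rfl⟩ | ⟨l, rfl⟩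
    · refine ⟨(l:ℤ), ?_⟩
      have hr : (2*(l+l)+1)^2 = 8*(2*(l*l)+l) + 1 := by ring
      have ha : a = 2*(l*l) + l := by omega
      have : (a:ℤ) = 2*((l*l : ℕ):ℤ) + l := by exact_mod_cast ha
      rw [this]
      push_cast
      ring
    · refine ⟨-((l:ℤ)+1), ?_⟩
      have hr : (2*(2*l+1)+1)^2 = 8*(2*(l*l)+3*l+1) + 1 := by ring
      have ha : a = 2*(l*l) + 3*l + 1 := by omega
      have : (a:ℤ) = 2*((l*l : ℕ):ℤ) + 3*l + 1 := by exact_mod_cast ha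
      rw [this]
      push_cast
      ring

end TauAux

/-- `τ(n)` is odd if and only if `n` is an odd perfect square. -/
theorem tau_odd_iff (n : ℕ) : Odd (tau n) ↔ ∃ m : ℕ, Odd m ∧ m ^ 2 = n := by
  open TauAux in
  rw [odd_int_cast_iff, tau_coeff_zmod]
  by_cases h8 : n % 8 = 1
  · have hn : n = 8*(n/8) + 1 := by omega
    set a := n/8 with ha
    rw [hn, s0_card a]
    constructor
    · intro hcard
      by_cases hex : ∃ j : ℤ, (a:ℤ) = 2*j^2 + j
      · exact (ex_j_iff a).1 hex
      · rw [pset_parity_not hex] at hcard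
        exact absurd hcard (by decide)
    · intro hm
      obtain ⟨j, hj⟩ := (ex_j_iff a).2 hm
      exact pset_parity_ex hj
  · rw [s0_empty h8]
    simp only [Finset.card_empty, Nat.cast_zero]
    constructor
    · intro h
      exact absurd h (by decide)
    · rintro ⟨m, hm, rfl⟩
      exact absurd (odd_sq_mod8 hm) h8
end

section
/- Let l be a prime with Legendre symbol (-6/l) = -1. If n is a positive integer coprime to l, then the equation 24ln + l^2 = 24k^2 + m^2 has no solutions in integers k and positive integers m. -/
/-- If `(-6/l) = -1` and `n` is a positive integer coprime to `l`, then
`24ln + l² = 24k² + m²` has no solutions with `k ∈ ℤ` and `m` a positive integer. -/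
theorem no_solutions_one (l : ℕ) [Fact l.Prime] (hleg : legendreSym l (-6) = -1)
    (n : ℕ) (hn : 0 < n) (hcop : Nat.Coprime n l) (k m : ℤ) (hm : 0 < m) :
    24 * (l : ℤ) * n + (l : ℤ) ^ 2 ≠ 24 * k ^ 2 + m ^ 2 := by
  intro heq
  have hlp : l.Prime := Fact.out
  have h6 : ((-6 : ℤ) : ZMod l) ≠ 0 := by
    intro h
    rw [← legendreSym.eq_zero_iff] at h
    omega
  have hnd6 : ¬ l ∣ 6 := by
    intro h
    apply h6
    have : ((-6 : ℤ) : ZMod l) = -((6:ℕ) : ZMod l) := by push_cast; ring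
    rw [this, (ZMod.natCast_eq_zero_iff 6 l).mpr h]
    ring
  have hsq : ¬ IsSquare ((-6 : ℤ) : ZMod l) := (legendreSym.eq_neg_one_iff l).mp hleg
  haveI : NeZero l := ⟨hlp.ne_zero⟩
  set a : ZMod l := (k : ZMod l)
  set b : ZMod l := (m : ZMod l)
  have hmod : 24 * a ^ 2 + b ^ 2 = 0 := by
    have := congrArg (fun z : ℤ => (z : ZMod l)) heq
    simp only [Int.cast_add, Int.cast_mul, Int.cast_pow, Int.cast_ofNat, Int.cast_natCast,
      ZMod.natCast_self] at this
    simpa using this.symm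
  by_cases ha : a = 0
  · have hb : b = 0 := by
      have : b ^ 2 = 0 := by rw [ha] at hmod; simpa using hmod
      exact pow_eq_zero_iff (by norm_num) |>.mp this
    have hk : (l : ℤ) ∣ k := (ZMod.intCast_zmod_eq_zero_iff_dvd k l).mp ha
    have hmm : (l : ℤ) ∣ m := (ZMod.intCast_zmod_eq_zero_iff_dvd m l).mp hb
    obtain ⟨k', rfl⟩ := hk
    obtain ⟨m', rfl⟩ := hmm
    have hl0 : (l : ℤ) ≠ 0 := by exact_mod_cast hlp.ne_zero
    have hdiv : (l : ℤ) ∣ 24 * n := by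
      refine ⟨24 * k' ^ 2 + m' ^ 2 - 1, ?_⟩
      have hc : (l:ℤ) * (24 * n) = (l:ℤ) * ((l:ℤ) * (24 * k' ^ 2 + m' ^ 2 - 1)) := by
        linear_combination heq
      exact mul_left_cancel₀ hl0 hc
    rcases (Int.Prime.dvd_mul' (by exact_mod_cast hlp) hdiv) with h | h
    · have h24 : l ∣ 24 := by exact_mod_cast h
      apply hnd6
      rcases (Nat.Prime.dvd_mul hlp).mp ((by norm_num : (24:ℕ) = 4 * 6) ▸ h24) with h4 | h' 
      · have h2 : l ∣ 2 := by
          rcases (Nat.Prime.dvd_mul hlp).mp ((by norm_num : (4:ℕ) = 2 * 2) ▸ h4) with hh | hh <;> exact hh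
        exact h2.trans (by norm_num)
      · exact h'
    · have hln : l ∣ n := by exact_mod_cast h
      have := Nat.dvd_gcd hln (dvd_refl l)
      rw [hcop] at this
      exact hlp.one_lt.ne' (Nat.dvd_one.mp this)
  · have h2a : (2 : ZMod l) * a ≠ 0 := by
      have h2 : (2 : ZMod l) ≠ 0 := by
        intro h
        apply h6
        have : ((-6 : ℤ) : ZMod l) = -(3 * (2 : ZMod l)) := by push_cast; ring
        rw [this, h]; ring
      exact mul_ne_zero h2 ha
    apply hsq
    refine ⟨b * (2 * a)⁻¹, ?_⟩
    rw [show b * (2 * a)⁻¹ * (b * (2 * a)⁻¹) = b ^ 2 * ((2 * a) ^ 2)⁻¹ by rw [← inv_pow]; ring]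
    rw [eq_mul_inv_iff_mul_eq₀ (pow_ne_zero 2 h2a)]
    push_cast
    linear_combination -hmod
end

section
/- Let l be a prime with Legendre symbol (-6/l) = -1. If n is a positive integer coprime to l, then the equation 8ln + 3l^2 = 3(2k+1)^2 + 8m^2 has no solutions in integers k, m. -/
/-- If `(-6/l) = -1` and `n` is a positive integer coprime to `l`, then
`8ln + 3l² = 3(2k+1)² + 8m²` has no integer solutions `k, m`. -/
theorem no_solutions_two (l : ℕ) [Fact l.Prime] (hleg : legendreSym l (-6) = -1)
    (n : ℕ) (hn : 0 < n) (hcop : Nat.Coprime n l) (k m : ℤ) :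
    8 * (l : ℤ) * n + 3 * (l : ℤ) ^ 2 ≠ 3 * (2 * k + 1) ^ 2 + 8 * m ^ 2 := by
  intro h
  have hlp : l.Prime := Fact.out
  -- -6 is nonzero mod l
  have h6 : ((-6 : ℤ) : ZMod l) ≠ 0 := by
    intro h0
    rw [(legendreSym.eq_zero_iff l (-6)).mpr h0] at hleg
    exact absurd hleg (by norm_num)
  have h2 : ((2 : ℤ) : ZMod l) ≠ 0 := by
    intro h0
    apply h6
    have : ((-6 : ℤ) : ZMod l) = ((-3 : ℤ) : ZMod l) * ((2 : ℤ) : ZMod l) := by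
      push_cast; ring
    rw [this, h0, mul_zero]
  have h3 : ((3 : ℤ) : ZMod l) ≠ 0 := by
    intro h0
    apply h6
    have : ((-6 : ℤ) : ZMod l) = ((-2 : ℤ) : ZMod l) * ((3 : ℤ) : ZMod l) := by
      push_cast; ring
    rw [this, h0, mul_zero]
  -- reduce equation mod l
  have hz : (3 : ZMod l) * ((2 * k + 1 : ℤ) : ZMod l) ^ 2
      + 8 * ((m : ℤ) : ZMod l) ^ 2 = 0 := by
    have := congrArg (fun x : ℤ => (x : ZMod l)) h
    push_cast at this
    rw [ZMod.natCast_self] at this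
    push_cast
    linear_combination -this
  set a : ZMod l := ((2 * k + 1 : ℤ) : ZMod l) with ha
  set b : ZMod l := ((m : ℤ) : ZMod l) with hb
  by_cases hm : b = 0
  · -- then a = 0 too, so l² divides, contradiction with coprimality
    have ha0 : a = 0 := by
      rw [hm] at hz
      have h3' : (3 : ZMod l) ≠ 0 := by
        have : ((3 : ℤ) : ZMod l) = (3 : ZMod l) := by push_cast; ring
        rwa [this] at h3
      have : (3 : ZMod l) * a ^ 2 = 0 := by linear_combination hz
      have := mul_eq_zero.mp this
      rcases this with h' | h'
      · exact absurd h' h3'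
      · exact pow_eq_zero_iff (by norm_num) |>.mp h'
    have hd1 : (l : ℤ) ∣ 2 * k + 1 := (ZMod.intCast_zmod_eq_zero_iff_dvd _ _).mp ha0
    have hd2 : (l : ℤ) ∣ m := (ZMod.intCast_zmod_eq_zero_iff_dvd _ _).mp hm
    have hsq : (l : ℤ) ^ 2 ∣ 3 * (2 * k + 1) ^ 2 + 8 * m ^ 2 := by
      obtain ⟨c, hc⟩ := hd1
      obtain ⟨d, hd⟩ := hd2
      exact ⟨3 * c ^ 2 + 8 * d ^ 2, by rw [hc, hd]; ring⟩
    rw [← h] at hsq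
    have h8 : (l : ℤ) ∣ 8 * n := by
      have hsq' : (l : ℤ) ^ 2 ∣ 8 * (l : ℤ) * n := by
        have := dvd_sub hsq (⟨3, by ring⟩ : (l : ℤ) ^ 2 ∣ 3 * (l : ℤ) ^ 2)
        have e : 8 * (l : ℤ) * n + 3 * (l : ℤ) ^ 2 - 3 * (l : ℤ) ^ 2
            = 8 * (l : ℤ) * n := by ring
        rwa [e] at this
      obtain ⟨c, hc⟩ := hsq'
      refine ⟨c, ?_⟩
      have hl0 : (l : ℤ) ≠ 0 := Int.natCast_ne_zero.mpr hlp.pos.ne'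
      apply mul_left_cancel₀ hl0
      linear_combination hc
    have h8' : l ∣ 8 * n := by
      have := Int.ofNat_dvd.mp (by exact_mod_cast h8)
      exact this
    have hln : l ∣ n := by
      rcases (Nat.Prime.dvd_mul hlp).mp h8' with h' | h'
      · exfalso
        have hl2 : l ∣ 2 := by
          have : l ∣ 2 ^ 3 := by
            have e : (8 : ℕ) = 2 ^ 3 := by norm_num
            rwa [e] at h'
          exact hlp.dvd_of_dvd_pow this
        apply h2
        have : ((2 : ℕ) : ZMod l) = 0 := (ZMod.natCast_eq_zero_iff _ _).mpr hl2
        exact_mod_cast this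
      · exact h'
    have hone : l ∣ 1 := hcop ▸ Nat.dvd_gcd hln dvd_rfl
    exact absurd (Nat.eq_one_of_dvd_one hone) hlp.one_lt.ne' 
  · -- -6 is a square mod l, contradiction
    have hfield : IsSquare ((-6 : ℤ) : ZMod l) := by
      have h2b : (2 : ZMod l) * b ≠ 0 := by
        refine mul_ne_zero ?_ hm
        intro h0
        apply h2
        rw [show ((2 : ℤ) : ZMod l) = (2 : ZMod l) by push_cast; ring, h0]
      have key : ((-6 : ℤ) : ZMod l) * ((2 : ZMod l) * b) ^ 2 = ((3 : ZMod l) * a) ^ 2 := by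
        push_cast
        linear_combination (-3 : ZMod l) * hz
      refine ⟨(3 : ZMod l) * a * ((2 : ZMod l) * b)⁻¹, ?_⟩
      have h2b' := h2b
      have hinv : (2 * b) * (2 * b)⁻¹ = 1 := mul_inv_cancel₀ h2b
      push_cast at key ⊢
      linear_combination ((2 * b)⁻¹) ^ 2 * key + 6 * ((2 * b) * (2 * b)⁻¹ + 1) * hinv
    rw [legendreSym.eq_neg_one_iff] at hleg
    exact hleg hfield
end

section
/- The Jacobi-type identity (q;q)_∞^2 / (q^2;q^2)_∞ = ∑_{k=-∞}^{∞} (-1)^k q^{k^2} holds as formal power series. -/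
open PowerSeries in
/-- The theta series `∑_{k∈ℤ} (-1)^k q^{k²}`. -/
noncomputable def thetaSeries : PowerSeries ℤ :=
  PowerSeries.mk fun n => ∑ k ∈ Finset.Icc (-(n : ℤ)) (n : ℤ),
    if k ^ 2 = (n : ℤ) then ((-1 : ℤˣ) ^ k : ℤˣ) else 0

namespace JacobiAux
open PowerSeries Finset

noncomputable def D (k : ℕ) : PowerSeries ℤ := ∏ i ∈ range k, (1 - X ^ (2 * i + 2))

lemma D_zero : D 0 = 1 := by simp [D]

lemma D_succ (k : ℕ) : D (k + 1) = D k * (1 - X ^ (2 * k + 2)) := prod_range_succ _ _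

lemma constantCoeff_D (k : ℕ) : constantCoeff (D k) = 1 := by
  simp [D, map_prod]

lemma D_ne_zero (k : ℕ) : D k ≠ 0 := fun h => by
  have := constantCoeff_D k
  rw [h, map_zero] at this
  exact zero_ne_one this

lemma isUnit_D (k : ℕ) : IsUnit (D k) := by
  rw [PowerSeries.isUnit_iff_constantCoeff, constantCoeff_D]
  exact isUnit_one

noncomputable def C2 : ℕ → ℕ → PowerSeries ℤ
  | 0, 0 => 1
  | 0, _ + 1 => 0
  | m + 1, 0 => C2 m 0
  | m + 1, r + 1 => C2 m (r + 1) + X ^ (2 * (m - r)) * C2 m r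

lemma C2_zero (m : ℕ) : C2 m 0 = 1 := by
  induction m with
  | zero => rfl
  | succ m ih => rw [C2, ih]

lemma C2_eq_zero : ∀ {m k : ℕ}, m < k → C2 m k = 0
  | 0, k + 1, _ => rfl
  | m + 1, k + 1, h => by
    rw [C2, C2_eq_zero (by omega), C2_eq_zero (by omega), mul_zero, add_zero]

lemma C2_diag (m : ℕ) : C2 m m = 1 := by
  induction m with
  | zero => rfl
  | succ m ih => rw [C2, C2_eq_zero (by omega), ih, Nat.sub_self, mul_zero, pow_zero, one_mul, zero_add]

lemma prodD : ∀ n a b : ℕ, a + b = n → C2 (a + b) a * (D a * D b) = D (a + b)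
  | n, 0, b, _ => by rw [zero_add, C2_zero, one_mul, D_zero, one_mul]
  | n, a + 1, 0, _ => by rw [add_zero, C2_diag, one_mul, D_zero, mul_one]
  | n + 1, a + 1, b + 1, h => by
    have key : (a + 1) + (b + 1) = (a + 1 + b) + 1 := by omega
    have e2 : a + 1 + b = a + b + 1 := by omega
    have h1 : C2 (a + b + 1) (a + 1) * (D (a + 1) * D b) = D (a + b + 1) := by
      have := prodD n (a + 1) b (by omega); rwa [e2] at this
    have h2 : C2 (a + b + 1) a * (D a * D (b + 1)) = D (a + b + 1) :=
      prodD n a (b + 1) (by omega)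
    have e1 : a + 1 + b - a = b + 1 := by omega
    rw [key, C2, e1, e2]
    rw [D_succ a] at h1
    rw [D_succ b] at h2
    have hx : X ^ (2 * (b + 1)) * X ^ (2 * a + 2) = (X : PowerSeries ℤ) ^ (2 * (a + b + 1) + 2) := by
      rw [← pow_add]; congr 1; omega
    calc (C2 (a + b + 1) (a + 1) + X ^ (2 * (b + 1)) * C2 (a + b + 1) a) *
          (D (a + 1) * D (b + 1))
        = (C2 (a + b + 1) (a + 1) * (D a * (1 - X ^ (2 * a + 2)) * D b)) * (1 - X ^ (2 * b + 2))
          + X ^ (2 * (b + 1)) * (C2 (a + b + 1) a * (D a * (D b * (1 - X ^ (2 * b + 2)))))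
            * (1 - X ^ (2 * a + 2)) := by rw [D_succ a, D_succ b]; ring
      _ = D (a + b + 1) * (1 - X ^ (2 * b + 2))
          + X ^ (2 * (b + 1)) * D (a + b + 1) * (1 - X ^ (2 * a + 2)) := by
            rw [h1, h2]
      _ = D (a + b + 1) * (1 - X ^ (2 * (a + b + 1) + 2)) := by
            linear_combination D (a + b + 1) * hx
      _ = D (a + b + 1 + 1) := (D_succ _).symm

lemma prodD' (a b : ℕ) : C2 (a + b) a * (D a * D b) = D (a + b) := prodD (a + b) a b rfl

lemma C2_recB (r e : ℕ) :
    C2 (r + e + 1) (r + 1) = X ^ (2 * (r + 1)) * C2 (r + e) (r + 1) + C2 (r + e) r := by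
  cases e with
  | zero =>
    rw [add_zero, C2_diag, C2_eq_zero (by omega), C2_diag, mul_zero, zero_add]
  | succ e =>
    apply mul_right_cancel₀ (b := D (r + 1) * D (e + 1))
      (mul_ne_zero (D_ne_zero _) (D_ne_zero _))
    have h1 : C2 (r + e + 1 + 1) (r + 1) * (D (r + 1) * D (e + 1)) = D (r + e + 1 + 1) := by
      have := prodD' (r + 1) (e + 1); rwa [show r + 1 + (e + 1) = r + e + 1 + 1 by omega] at this
    have h2 : C2 (r + e + 1) (r + 1) * (D (r + 1) * D e) = D (r + e + 1) := by
      have := prodD' (r + 1) e; rwa [show r + 1 + e = r + e + 1 by omega] at this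
    have h3 : C2 (r + e + 1) r * (D r * D (e + 1)) = D (r + e + 1) := by
      have := prodD' r (e + 1); rwa [show r + (e + 1) = r + e + 1 by omega] at this
    simp only [show r + (e + 1) = r + e + 1 from by omega]
    rw [h1]
    symm
    have hx : X ^ (2 * (r + 1)) * X ^ (2 * e + 2) = (X : PowerSeries ℤ) ^ (2 * (r + e + 1) + 2) := by
      rw [← pow_add]; congr 1; omega
    calc (X ^ (2 * (r + 1)) * C2 (r + e + 1) (r + 1) + C2 (r + e + 1) r) * (D (r + 1) * D (e + 1))
        = X ^ (2 * (r + 1)) * (C2 (r + e + 1) (r + 1) * (D (r + 1) * D e)) * (1 - X ^ (2 * e + 2))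
          + (C2 (r + e + 1) r * (D r * D (e + 1))) * (1 - X ^ (2 * r + 2)) := by
            rw [D_succ e, D_succ r]; ring
      _ = X ^ (2 * (r + 1)) * D (r + e + 1) * (1 - X ^ (2 * e + 2))
          + D (r + e + 1) * (1 - X ^ (2 * r + 2)) := by rw [h2, h3]
      _ = D (r + e + 1) * (1 - X ^ (2 * (r + e + 1) + 2)) := by
            have h2r : (X : PowerSeries ℤ) ^ (2 * (r + 1)) = X ^ (2 * r + 2) := by
              rw [show 2 * (r + 1) = 2 * r + 2 from by omega]
            rw [h2r] at hx ⊢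
            linear_combination D (r + e + 1) * hx
      _ = D (r + e + 1 + 1) := (D_succ _).symm

noncomputable def c (m : ℕ) (r : ℤ) : PowerSeries ℤ := if 0 ≤ r then C2 m r.toNat else 0

lemma c_coe (m k : ℕ) : c m (k : ℤ) = C2 m k := by simp [c]

lemma c_neg {m : ℕ} {r : ℤ} (h : r < 0) : c m r = 0 := by simp [c, not_le.mpr h]

lemma c_of_gt {m : ℕ} {r : ℤ} (h : (m : ℤ) < r) : c m r = 0 := by
  rw [c, if_pos (by omega)]
  exact C2_eq_zero (by omega)

lemma cA (m : ℕ) (r : ℤ) :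
    c (m + 1) r = c m r + X ^ (2 * (m + 1 - r).toNat) * c m (r - 1) := by
  rcases lt_trichotomy r 0 with h | h | h
  · rw [c_neg h, c_neg h, c_neg (by omega), mul_zero, add_zero]
  · subst h
    rw [c_neg (show (0:ℤ) - 1 < 0 by omega), mul_zero, add_zero]
    simp [c, C2_zero]
  · lift r to ℕ using h.le with k hk
    obtain ⟨k, rfl⟩ : ∃ k' : ℕ, k = k' + 1 := ⟨k - 1, by omega⟩
    rw [show ((k + 1 : ℕ) : ℤ) - 1 = ((k : ℕ) : ℤ) by push_cast; ring]
    rw [c_coe, c_coe, c_coe]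
    rcases le_or_gt (k + 1) (m + 1) with hk2 | hk2
    · rw [show ((m : ℤ) + 1 - ((k + 1 : ℕ) : ℤ)).toNat = m - k by omega, C2]
    · rw [C2_eq_zero (show m + 1 < k + 1 by omega), C2_eq_zero (show m < k + 1 by omega),
        C2_eq_zero (show m < k by omega), mul_zero, add_zero]

lemma cB (m : ℕ) (r : ℤ) :
    c (m + 1) r = X ^ (2 * r.toNat) * c m r + c m (r - 1) := by
  rcases lt_trichotomy r 0 with h | h | h
  · rw [c_neg h, c_neg h, c_neg (by omega), mul_zero, zero_add]
  · subst h
    rw [c_neg (show (0:ℤ) - 1 < 0 by omega), add_zero]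
    show c (m+1) ((0:ℕ):ℤ) = X ^ (2 * (0:ℤ).toNat) * c m ((0:ℕ):ℤ)
    rw [c_coe, c_coe, C2_zero, C2_zero]
    norm_num
  · lift r to ℕ using h.le with k hk
    obtain ⟨k, rfl⟩ : ∃ k' : ℕ, k = k' + 1 := ⟨k - 1, by omega⟩
    rw [show ((k + 1 : ℕ) : ℤ) - 1 = ((k : ℕ) : ℤ) by push_cast; ring]
    rw [c_coe, c_coe, c_coe]
    rw [show ((k + 1 : ℕ) : ℤ).toNat = k + 1 by omega]
    rcases le_or_gt (k + 1) (m + 1) with hk2 | hk2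
    · obtain ⟨e, rfl⟩ : ∃ e, m = k + e := ⟨m - k, by omega⟩
      exact C2_recB k e
    · rw [C2_eq_zero (show m + 1 < k + 1 by omega), C2_eq_zero (show m < k + 1 by omega),
        C2_eq_zero (show m < k by omega), mul_zero, add_zero]

def sgn (j : ℤ) : ℤ := ((-1 : ℤˣ) ^ j : ℤˣ)

lemma sgn_zero : sgn 0 = 1 := rfl

lemma sgn_add_one (j : ℤ) : sgn (j + 1) = - sgn j := by
  unfold sgn
  rw [zpow_add_one]
  push_cast
  ring

lemma sgn_sub_one (j : ℤ) : sgn (j - 1) = - sgn j := by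
  have := sgn_add_one (j - 1)
  rw [sub_add_cancel] at this
  omega

lemma natAbs_sq_cast (x : ℤ) : ((x.natAbs ^ 2 : ℕ) : ℤ) = x ^ 2 := by
  rw [Nat.cast_pow, Int.natAbs_sq]

noncomputable def T (n : ℕ) : PowerSeries ℤ :=
  ∑ j ∈ Icc (-(n : ℤ)) (n : ℤ), C (sgn j) * X ^ (j.natAbs ^ 2) * c (2 * n) ((n : ℤ) + j)

lemma T_zero : T 0 = 1 := by
  rw [T]
  simp only [Nat.cast_zero, neg_zero, Icc_self, sum_singleton]
  rw [sgn_zero, add_zero, show ((0:ℤ)) = ((0:ℕ):ℤ) from rfl, c_coe, C2_zero]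
  simp

lemma c_vanish (n : ℕ) {i : ℤ} (h : ¬(-(n : ℤ) ≤ i ∧ i ≤ (n : ℤ))) :
    c (2 * n) ((n : ℤ) + i) = 0 := by
  rcases not_and_or.mp h with h | h
  · exact c_neg (by omega)
  · exact c_of_gt (by push_cast; omega)

lemma expand (n : ℕ) (j : ℤ) :
    c (2 * n + 2) ((n : ℤ) + 1 + j)
      = X ^ (2 * ((n : ℤ) + 1 + j).toNat) * c (2 * n) ((n : ℤ) + 1 + j)
        + (1 + X ^ (2 * (2 * n + 1))) * c (2 * n) ((n : ℤ) + j)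
        + X ^ (2 * ((n : ℤ) + 1 - j).toNat) * c (2 * n) ((n : ℤ) - 1 + j) := by
  rw [show 2 * n + 2 = (2 * n + 1) + 1 from rfl, cA, cB, cB]
  rw [show (n : ℤ) + 1 + j - 1 = (n : ℤ) + j from by ring,
      show (n : ℤ) + j - 1 = (n : ℤ) - 1 + j from by ring,
      show ((2 * n + 1 : ℕ) : ℤ) + 1 - ((n : ℤ) + 1 + j) = (n : ℤ) + 1 - j from by push_cast; ring]
  by_cases h : -(n : ℤ) ≤ j ∧ j ≤ (n : ℤ)
  · have hpow : (X : PowerSeries ℤ) ^ (2 * ((n : ℤ) + 1 - j).toNat) * X ^ (2 * ((n : ℤ) + j).toNat)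
        = X ^ (2 * (2 * n + 1)) := by
      rw [← pow_add]
      congr 1
      omega
    linear_combination (c (2 * n) ((n : ℤ) + j)) * hpow
  · rw [c_vanish n h]
    ring

lemma T_succ (n : ℕ) : T (n + 1) = (1 - X ^ (2 * n + 1)) ^ 2 * T n := by
  -- Step 1: extend to the bigger interval A2 and normalize casts
  have step1 : T (n + 1) = ∑ j ∈ Icc (-(n : ℤ) - 2) ((n : ℤ) + 2),
      C (sgn j) * X ^ (j.natAbs ^ 2) * c (2 * n + 2) ((n : ℤ) + 1 + j) := by
    rw [T]
    have hcg : ∀ j ∈ Icc (-((n:ℕ)+1 : ℤ)) (((n:ℕ)+1 : ℤ)),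
        C (sgn j) * X ^ (j.natAbs ^ 2) * c (2 * (n+1)) (((n+1:ℕ) : ℤ) + j)
          = C (sgn j) * X ^ (j.natAbs ^ 2) * c (2 * n + 2) ((n : ℤ) + 1 + j) := by
      intro j _
      rw [show 2 * (n+1) = 2*n+2 from by omega, show ((n+1:ℕ):ℤ) + j = (n:ℤ) + 1 + j from by push_cast; ring]
    rw [show (((n+1:ℕ)) : ℤ) = (n : ℤ) + 1 from by push_cast; ring] at hcg ⊢
    rw [Finset.sum_congr rfl hcg]
    apply Finset.sum_subset
    · apply Icc_subset_Icc <;> omega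
    · intro j hj hj2
      simp only [mem_Icc] at hj hj2
      have : c (2 * n + 2) ((n : ℤ) + 1 + j) = 0 := by
        rcases (by omega : j = (n : ℤ) + 2 ∨ j = -(n : ℤ) - 2) with rfl | rfl
        · exact c_of_gt (by push_cast; omega)
        · exact c_neg (by omega)
      rw [this, mul_zero]
  -- Step 2: pointwise expansion and splitting
  have step2 : T (n + 1)
      = (∑ j ∈ Icc (-(n : ℤ) - 2) ((n : ℤ) + 2),
          C (sgn j) * X ^ (j.natAbs ^ 2) * (X ^ (2 * ((n : ℤ) + 1 + j).toNat) * c (2 * n) ((n : ℤ) + 1 + j)))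
        + (∑ j ∈ Icc (-(n : ℤ) - 2) ((n : ℤ) + 2),
          C (sgn j) * X ^ (j.natAbs ^ 2) * ((1 + X ^ (2 * (2 * n + 1))) * c (2 * n) ((n : ℤ) + j)))
        + (∑ j ∈ Icc (-(n : ℤ) - 2) ((n : ℤ) + 2),
          C (sgn j) * X ^ (j.natAbs ^ 2) * (X ^ (2 * ((n : ℤ) + 1 - j).toNat) * c (2 * n) ((n : ℤ) - 1 + j))) := by
    rw [step1, ← sum_add_distrib, ← sum_add_distrib]
    apply Finset.sum_congr rfl
    intro j _
    rw [expand n j]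
    ring
  -- shifted summand shapes
  have g1 : (∑ j ∈ Icc (-(n : ℤ) - 2) ((n : ℤ) + 2),
        C (sgn j) * X ^ (j.natAbs ^ 2) * (X ^ (2 * ((n : ℤ) + 1 + j).toNat) * c (2 * n) ((n : ℤ) + 1 + j)))
      = ∑ i ∈ Icc (-(n : ℤ) - 3) ((n : ℤ) + 3),
        C (sgn (i - 1)) * X ^ ((i - 1).natAbs ^ 2) * (X ^ (2 * ((n : ℤ) + i).toNat) * c (2 * n) ((n : ℤ) + i)) := by
    calc (∑ j ∈ Icc (-(n : ℤ) - 2) ((n : ℤ) + 2),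
        C (sgn j) * X ^ (j.natAbs ^ 2) * (X ^ (2 * ((n : ℤ) + 1 + j).toNat) * c (2 * n) ((n : ℤ) + 1 + j)))
        = ∑ j ∈ Icc (-(n : ℤ) - 2) ((n : ℤ) + 2),
            C (sgn ((j + 1) - 1)) * X ^ (((j + 1) - 1).natAbs ^ 2) *
              (X ^ (2 * ((n : ℤ) + (j + 1)).toNat) * c (2 * n) ((n : ℤ) + (j + 1))) := by
          apply Finset.sum_congr rfl
          intro j _
          rw [show (j + 1) - 1 = j from by ring, show (n : ℤ) + (j + 1) = (n : ℤ) + 1 + j from by ring]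
      _ = ∑ i ∈ Icc (-(n : ℤ) - 1) ((n : ℤ) + 3),
            C (sgn (i - 1)) * X ^ ((i - 1).natAbs ^ 2) *
              (X ^ (2 * ((n : ℤ) + i).toNat) * c (2 * n) ((n : ℤ) + i)) := by
          rw [show -(n : ℤ) - 1 = (-(n : ℤ) - 2) + 1 from by ring,
              show (n : ℤ) + 3 = ((n : ℤ) + 2) + 1 from by ring, ← map_add_right_Icc, sum_map]
          rfl
      _ = _ := by
          apply Finset.sum_subset (Icc_subset_Icc (by omega) (by omega))
          intro i hi hi2
          simp only [mem_Icc] at hi hi2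
          rw [c_vanish n (by omega), mul_zero, mul_zero]
  have g3 : (∑ j ∈ Icc (-(n : ℤ) - 2) ((n : ℤ) + 2),
        C (sgn j) * X ^ (j.natAbs ^ 2) * (X ^ (2 * ((n : ℤ) + 1 - j).toNat) * c (2 * n) ((n : ℤ) - 1 + j)))
      = ∑ i ∈ Icc (-(n : ℤ) - 3) ((n : ℤ) + 3),
        C (sgn (i + 1)) * X ^ ((i + 1).natAbs ^ 2) * (X ^ (2 * ((n : ℤ) - i).toNat) * c (2 * n) ((n : ℤ) + i)) := by
    calc (∑ j ∈ Icc (-(n : ℤ) - 2) ((n : ℤ) + 2),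
        C (sgn j) * X ^ (j.natAbs ^ 2) * (X ^ (2 * ((n : ℤ) + 1 - j).toNat) * c (2 * n) ((n : ℤ) - 1 + j)))
        = ∑ j ∈ Icc (-(n : ℤ) - 2) ((n : ℤ) + 2),
            C (sgn ((j + -1) + 1)) * X ^ (((j + -1) + 1).natAbs ^ 2) *
              (X ^ (2 * ((n : ℤ) - (j + -1)).toNat) * c (2 * n) ((n : ℤ) + (j + -1))) := by
          apply Finset.sum_congr rfl
          intro j _
          rw [show (j + -1) + 1 = j from by ring, show (n : ℤ) - (j + -1) = (n : ℤ) + 1 - j from by ring,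
            show (n : ℤ) + (j + -1) = (n : ℤ) - 1 + j from by ring]
      _ = ∑ i ∈ Icc (-(n : ℤ) - 3) ((n : ℤ) + 1),
            C (sgn (i + 1)) * X ^ ((i + 1).natAbs ^ 2) *
              (X ^ (2 * ((n : ℤ) - i).toNat) * c (2 * n) ((n : ℤ) + i)) := by
          rw [show -(n : ℤ) - 3 = (-(n : ℤ) - 2) + -1 from by ring,
              show (n : ℤ) + 1 = ((n : ℤ) + 2) + -1 from by ring, ← map_add_right_Icc, sum_map]
          rfl
      _ = _ := by
          apply Finset.sum_subset (Icc_subset_Icc (by omega) (by omega))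
          intro i hi hi2
          simp only [mem_Icc] at hi hi2
          rw [c_vanish n (by omega), mul_zero, mul_zero]
  have g2 : (∑ j ∈ Icc (-(n : ℤ) - 2) ((n : ℤ) + 2),
        C (sgn j) * X ^ (j.natAbs ^ 2) * ((1 + X ^ (2 * (2 * n + 1))) * c (2 * n) ((n : ℤ) + j)))
      = ∑ i ∈ Icc (-(n : ℤ) - 3) ((n : ℤ) + 3),
        C (sgn i) * X ^ (i.natAbs ^ 2) * ((1 + X ^ (2 * (2 * n + 1))) * c (2 * n) ((n : ℤ) + i)) := by
    apply Finset.sum_subset (Icc_subset_Icc (by omega) (by omega))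
    intro i hi hi2
    simp only [mem_Icc] at hi hi2
    rw [c_vanish n (by omega), mul_zero, mul_zero]
  have gK : (1 - X ^ (2 * n + 1)) ^ 2 * T n
      = ∑ i ∈ Icc (-(n : ℤ) - 3) ((n : ℤ) + 3),
        C (sgn i) * X ^ (i.natAbs ^ 2) * ((1 - X ^ (2 * n + 1)) ^ 2 * c (2 * n) ((n : ℤ) + i)) := by
    rw [T, mul_sum]
    calc (∑ i ∈ Icc (-(n : ℤ)) ((n : ℤ)),
          (1 - X ^ (2 * n + 1)) ^ 2 * (C (sgn i) * X ^ (i.natAbs ^ 2) * c (2 * n) ((n : ℤ) + i)))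
        = ∑ i ∈ Icc (-(n : ℤ)) ((n : ℤ)),
            C (sgn i) * X ^ (i.natAbs ^ 2) * ((1 - X ^ (2 * n + 1)) ^ 2 * c (2 * n) ((n : ℤ) + i)) := by
          apply Finset.sum_congr rfl; intro i _; ring
      _ = _ := by
          apply Finset.sum_subset (Icc_subset_Icc (by omega) (by omega))
          intro i hi hi2
          simp only [mem_Icc] at hi hi2
          rw [c_vanish n (by omega), mul_zero, mul_zero]
  rw [step2, g1, g2, g3, gK, ← sum_add_distrib, ← sum_add_distrib]
  apply Finset.sum_congr rfl
  intro i _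
  by_cases h : -(n : ℤ) ≤ i ∧ i ≤ (n : ℤ)
  · have hp1 : (X : PowerSeries ℤ) ^ ((i - 1).natAbs ^ 2) * X ^ (2 * ((n : ℤ) + i).toNat)
        = X ^ (i.natAbs ^ 2) * X ^ (2 * n + 1) := by
      rw [← pow_add, ← pow_add]
      congr 1
      have e1 : (((i - 1).natAbs ^ 2 : ℕ) : ℤ) = ((i.natAbs ^ 2 : ℕ) : ℤ) - 2 * i + 1 := by
        rw [natAbs_sq_cast, natAbs_sq_cast]; ring
      have e3 : (((n : ℤ) + i).toNat : ℤ) = (n : ℤ) + i := Int.toNat_of_nonneg (by omega)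
      omega
    have hp3 : (X : PowerSeries ℤ) ^ ((i + 1).natAbs ^ 2) * X ^ (2 * ((n : ℤ) - i).toNat)
        = X ^ (i.natAbs ^ 2) * X ^ (2 * n + 1) := by
      rw [← pow_add, ← pow_add]
      congr 1
      have e1 : (((i + 1).natAbs ^ 2 : ℕ) : ℤ) = ((i.natAbs ^ 2 : ℕ) : ℤ) + 2 * i + 1 := by
        rw [natAbs_sq_cast, natAbs_sq_cast]; ring
      have e3 : (((n : ℤ) - i).toNat : ℤ) = (n : ℤ) - i := Int.toNat_of_nonneg (by omega)
      omega
    rw [sgn_sub_one, sgn_add_one, map_neg]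
    linear_combination (-(C (sgn i)) * c (2 * n) ((n : ℤ) + i)) * hp1
      + (-(C (sgn i)) * c (2 * n) ((n : ℤ) + i)) * hp3
  · rw [c_vanish n h]
    ring

lemma T_eq (n : ℕ) : T n = (∏ m ∈ range n, (1 - X ^ (2 * m + 1))) ^ 2 := by
  induction n with
  | zero => simpa using T_zero
  | succ n ih => rw [T_succ, ih, prod_range_succ]; ring

lemma dvd_prod_sub_one {ι : Type*} {d : PowerSeries ℤ} {s : Finset ι} {f : ι → PowerSeries ℤ}
    (h : ∀ i ∈ s, d ∣ f i - 1) : d ∣ (∏ i ∈ s, f i) - 1 := by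
  classical
  induction s using Finset.induction_on with
  | empty => simp
  | @insert a s ha ih =>
    rw [prod_insert ha]
    have h1 := h a (mem_insert_self a s)
    have h2 := ih fun i hi => h i (mem_insert_of_mem hi)
    have : f a * ∏ i ∈ s, f i - 1 = f a * ((∏ i ∈ s, f i) - 1) + (f a - 1) := by ring
    rw [this]
    exact dvd_add (Dvd.dvd.mul_left h2 _) h1

lemma D_factor {t p : ℕ} (h : t ≤ p) :
    ∃ e, D p = D t * e ∧ (X : PowerSeries ℤ) ^ (2 * t + 2) ∣ e - 1 := by
  refine ⟨∏ i ∈ Ico t p, (1 - X ^ (2 * i + 2)), ?_, ?_⟩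
  · rw [D, D, ← prod_range_mul_prod_Ico _ h]
  · apply dvd_prod_sub_one
    intro i hi
    simp only [mem_Ico] at hi
    have : (1 : PowerSeries ℤ) - X ^ (2 * i + 2) - 1 = -(X ^ (2 * i + 2)) := by ring
    rw [this]
    exact dvd_neg.mpr (pow_dvd_pow _ (by omega))

lemma dvd_mul_sub_one {d x y : PowerSeries ℤ} (hx : d ∣ x - 1) (hy : d ∣ y - 1) :
    d ∣ x * y - 1 := by
  have : x * y - 1 = x * (y - 1) + (x - 1) := by ring
  rw [this]
  exact dvd_add (hy.mul_left x) hx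

noncomputable def Th (n : ℕ) : PowerSeries ℤ :=
  ∑ j ∈ Icc (-(n : ℤ)) (n : ℤ), C (sgn j) * X ^ (j.natAbs ^ 2)

lemma gauss_mod (n : ℕ) :
    (X : PowerSeries ℤ) ^ n ∣ Th n * D (2 * n) - T n * (D n * D (2 * n)) := by
  rw [Th, T, sum_mul, sum_mul, ← sum_sub_distrib]
  apply Finset.dvd_sum
  intro j hj
  simp only [mem_Icc] at hj
  set a := ((n : ℤ) + j).toNat with ha
  set b := ((n : ℤ) - j).toNat with hb
  have hab : a + b = 2 * n := by omega
  have hc : c (2 * n) ((n : ℤ) + j) = C2 (2 * n) a := by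
    rw [c, if_pos (by omega)]
  have hprod : C2 (2 * n) a * (D a * D b) = D (2 * n) := by
    have := prodD' a b
    rwa [hab] at this
  set t := n - j.natAbs with htdef
  obtain ⟨ea, hea, hda⟩ := D_factor (show t ≤ a by omega)
  obtain ⟨eb, heb, hdb⟩ := D_factor (show t ≤ b by omega)
  obtain ⟨en, hen, hdn⟩ := D_factor (show t ≤ n by omega)
  obtain ⟨e2, he2, hd2⟩ := D_factor (show t ≤ 2 * n by omega)
  have hdd : (X : PowerSeries ℤ) ^ (2 * t + 2) ∣ D a * D b - D n * D (2 * n) := by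
    have heq : D a * D b - D n * D (2 * n) = D t * D t * (ea * eb - en * e2) := by
      rw [hea, heb, hen, he2]; ring
    rw [heq, show ea * eb - en * e2 = (ea * eb - 1) - (en * e2 - 1) from by ring]
    exact (dvd_sub (dvd_mul_sub_one hda hdb) (dvd_mul_sub_one hdn hd2)).mul_left _
  have hdd2 : (X : PowerSeries ℤ) ^ n ∣ X ^ (j.natAbs ^ 2) * (D a * D b - D n * D (2 * n)) := by
    have h1 : (X : PowerSeries ℤ) ^ (j.natAbs ^ 2 + (2 * t + 2))
        ∣ X ^ (j.natAbs ^ 2) * (D a * D b - D n * D (2 * n)) := by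
      rw [pow_add]
      exact mul_dvd_mul_left _ hdd
    refine dvd_trans (pow_dvd_pow X ?_) h1
    have hu : j.natAbs ≤ j.natAbs ^ 2 := by
      rcases Nat.eq_zero_or_pos j.natAbs with h | h
      · simp [h]
      · nlinarith
    omega
  have heq2 : C (sgn j) * X ^ (j.natAbs ^ 2) * D (2 * n)
        - C (sgn j) * X ^ (j.natAbs ^ 2) * c (2 * n) ((n : ℤ) + j) * (D n * D (2 * n))
      = (C (sgn j) * C2 (2 * n) a) * (X ^ (j.natAbs ^ 2) * (D a * D b - D n * D (2 * n))) := by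
    rw [hc]
    linear_combination (-(C (sgn j) * X ^ (j.natAbs ^ 2))) * hprod
  rw [heq2]
  exact hdd2.mul_left _

lemma theta_coeff (n m : ℕ) (hm : m < n) :
    (coeff m) thetaSeries = (coeff m) (Th n) := by
  rw [thetaSeries, coeff_mk, Th, map_sum]
  have hTh : ∀ j ∈ Icc (-(n : ℤ)) (n : ℤ),
      (coeff m) (C (sgn j) * X ^ (j.natAbs ^ 2))
        = if j ^ 2 = (m : ℤ) then sgn j else 0 := by
    intro j _
    rw [coeff_C_mul, coeff_X_pow, mul_ite, mul_one, mul_zero]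
    have hiff : m = j.natAbs ^ 2 ↔ j ^ 2 = (m : ℤ) := by
      rw [← natAbs_sq_cast j]
      exact ⟨fun h => by exact_mod_cast (congrArg (Nat.cast : ℕ → ℤ) h).symm,
        fun h => by exact_mod_cast h.symm⟩
    exact if_congr hiff rfl rfl
  rw [Finset.sum_congr rfl hTh]
  apply Finset.sum_subset (Icc_subset_Icc (by omega) (by omega))
  intro k _ hk
  simp only [mem_Icc] at hk
  rw [if_neg]
  intro hsq
  have h1 : k ≤ k ^ 2 := by nlinarith [sq_nonneg k, sq_nonneg (k - 1)]
  have h2 : -k ≤ k ^ 2 := by nlinarith [sq_nonneg (k + 1)]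
  omega

lemma theta_trunc (n : ℕ) : (X : PowerSeries ℤ) ^ n ∣ thetaSeries - Th n := by
  rw [X_pow_dvd_iff]
  intro m hm
  rw [map_sub, theta_coeff n m hm, sub_self]

lemma prod_split (n : ℕ) :
    ∏ j ∈ range (2 * n), (1 - (X : PowerSeries ℤ) ^ (j + 1))
      = (∏ m ∈ range n, (1 - X ^ (2 * m + 1))) * D n := by
  induction n with
  | zero => simp [D_zero]
  | succ n ih =>
    rw [show 2 * (n + 1) = (2 * n + 1) + 1 from by omega, prod_range_succ, prod_range_succ,
      prod_range_succ, D_succ, ih]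
    rw [show 2 * n + 1 + 1 = 2 * n + 2 from by omega, show 2 * n + 1 = 2 * n + 1 from rfl]
    ring

lemma prod_trunc (n : ℕ) :
    (X : PowerSeries ℤ) ^ n ∣ (∏ j ∈ range (2 * n), (1 - (X : PowerSeries ℤ) ^ (j + 1)))
      - ∏ j ∈ range n, (1 - (X : PowerSeries ℤ) ^ (j + 1)) := by
  rw [← prod_range_mul_prod_Ico (fun j => (1 - (X : PowerSeries ℤ) ^ (j + 1))) (show n ≤ 2 * n by omega)]
  have : (∏ j ∈ range n, (1 - (X : PowerSeries ℤ) ^ (j + 1)))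
        * (∏ j ∈ Ico n (2 * n), (1 - (X : PowerSeries ℤ) ^ (j + 1)))
      - ∏ j ∈ range n, (1 - (X : PowerSeries ℤ) ^ (j + 1))
      = (∏ j ∈ range n, (1 - (X : PowerSeries ℤ) ^ (j + 1)))
        * ((∏ j ∈ Ico n (2 * n), (1 - (X : PowerSeries ℤ) ^ (j + 1))) - 1) := by ring
  rw [this]
  apply Dvd.dvd.mul_left
  apply dvd_prod_sub_one
  intro i hi
  simp only [mem_Ico] at hi
  rw [show (1 : PowerSeries ℤ) - X ^ (i + 1) - 1 = -(X ^ (i + 1)) from by ring]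
  exact dvd_neg.mpr (pow_dvd_pow _ (by omega))

lemma final (N : ℕ) :
    PowerSeries.coeff (R := ℤ) N
        ((∏ j ∈ Finset.range (N + 1), (1 - PowerSeries.X ^ (j + 1))) ^ 2) =
      PowerSeries.coeff (R := ℤ) N
        (thetaSeries * ∏ j ∈ Finset.range (N + 1),
          (1 - PowerSeries.X ^ (2 * (j + 1)))) := by
  set n := N + 1 with hn
  have hB : (∏ j ∈ Finset.range n, (1 - (X : PowerSeries ℤ) ^ (2 * (j + 1)))) = D n := by
    apply Finset.prod_congr rfl
    intro j _
    rw [show 2 * (j + 1) = 2 * j + 2 from by omega]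
  set P : PowerSeries ℤ := ∏ j ∈ Finset.range n, (1 - X ^ (j + 1)) with hP
  set Rn : PowerSeries ℤ := ∏ m ∈ range n, (1 - X ^ (2 * m + 1)) with hRn
  have hPR : (X : PowerSeries ℤ) ^ n ∣ P - Rn * D n := by
    have h1 := prod_trunc n
    rw [prod_split n] at h1
    have : P - Rn * D n = -((Rn * D n) - P) := by ring
    rw [this]
    exact dvd_neg.mpr h1
  have key : (X : PowerSeries ℤ) ^ n ∣ P ^ 2 - thetaSeries * D n := by
    obtain ⟨w, hw⟩ := (isUnit_D n).mul (isUnit_D (2 * n)) |>.exists_right_inv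
    have main : (X : PowerSeries ℤ) ^ n ∣ (P ^ 2 - thetaSeries * D n) * (D n * D (2 * n)) := by
      have decomp : (P ^ 2 - thetaSeries * D n) * (D n * D (2 * n))
          = (P - Rn * D n) * ((P + Rn * D n) * (D n * D (2 * n)))
            + (Th n * D (2 * n) - T n * (D n * D (2 * n))) * (-(D n * D n))
            + (thetaSeries - Th n) * (-(D n * D n * D (2 * n))) := by
        rw [T_eq]
        ring
      rw [decomp]
      exact dvd_add (dvd_add (Dvd.dvd.mul_right hPR _) (Dvd.dvd.mul_right (gauss_mod n) _))
        (Dvd.dvd.mul_right (theta_trunc n) _)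
    have : P ^ 2 - thetaSeries * D n
        = ((P ^ 2 - thetaSeries * D n) * (D n * D (2 * n))) * w := by
      rw [mul_assoc, hw, mul_one]
    rw [this]
    exact main.mul_right _
  rw [hB]
  have h0 : (coeff N) (P ^ 2 - thetaSeries * D n) = 0 := by
    rw [X_pow_dvd_iff] at key
    exact key N (by omega)
  rw [map_sub, sub_eq_zero] at h0
  exact h0

end JacobiAux

/-- The Jacobi-type identity `(q;q)_∞² / (q²;q²)_∞ = ∑_{k∈ℤ} (-1)^k q^{k²}`,
stated with the denominator cleared; since factors `(1 - q^j)` with `j > N` do not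
affect the coefficient of `q^N`, the products may be truncated. -/
theorem jacobi_type_identity (N : ℕ) :
    PowerSeries.coeff (R := ℤ) N
        ((∏ j ∈ Finset.range (N + 1), (1 - PowerSeries.X ^ (j + 1))) ^ 2) =
      PowerSeries.coeff (R := ℤ) N
        (thetaSeries * ∏ j ∈ Finset.range (N + 1),
          (1 - PowerSeries.X ^ (2 * (j + 1)))) :=
  JacobiAux.final N
end
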